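/- arXiv:0907.2618 — 5 statements merged into one kernel-verified Lean document; each statement's English description precedes it below -/
import Mathlib

section
/- Let A and B be C*-algebras, let φ : A → B be a surjective *-homomorphism, and let (u_λ)_{λ∈Λ} be an approximate unit for the closed two-sided ideal ker φ. Then for every h ∈ A with h ≥ 0 and every real δ with 0 ≤ δ ≤ 1, one has limsup_λ ‖(1 − u_λ)^{1/2} h (1 − u_λ)^{1/2} + (1 − δ)·u_λ^{1/2} h u_λ^{1/2}‖ ≤ max(‖φ(h)‖, (1 − δ)·‖h‖). -/
set_option maxHeartbeats 1000000


open scoped CStarAlgebra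
open Filter

/-- If `u` is an approximate unit for `ker φ`, then for positive `h` and
`0 ≤ δ ≤ 1`,
`limsup ‖(1-u)^{1/2} h (1-u)^{1/2} + (1-δ) u^{1/2} h u^{1/2}‖ ≤ max ‖φ h‖ ((1-δ)‖h‖)`. -/
theorem approxUnit_fix_norm
    {A B : Type} [NonUnitalCStarAlgebra A] [PartialOrder A] [StarOrderedRing A]
    [NonUnitalCStarAlgebra B]
    (φ : A →⋆ₙₐ[ℂ] B) (hφ : Function.Surjective φ)
    {Λ : Type} [Preorder Λ] [IsDirected Λ (· ≤ ·)] [Nonempty Λ]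
    (u : Λ → A)
    (hker : ∀ l, φ (u l) = 0)
    (hpos : ∀ l, 0 ≤ u l)
    (hle1 : ∀ l, (u l : A⁺¹) ≤ 1)
    (happrox : ∀ x : A, φ x = 0 → Tendsto (fun l => ‖u l * x - x‖) atTop (nhds 0))
    (h : A) (hh : 0 ≤ h) (δ : ℝ) (hδ₀ : 0 ≤ δ) (hδ₁ : δ ≤ 1) :
    limsup (fun l =>
        ‖CFC.sqrt ((1 : A⁺¹) - (u l : A⁺¹)) * (h : A⁺¹) * CFC.sqrt ((1 : A⁺¹) - (u l : A⁺¹)) +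
          (1 - δ) • (CFC.sqrt ((u l : A⁺¹)) * (h : A⁺¹) * CFC.sqrt ((u l : A⁺¹)))‖) atTop
      ≤ max ‖φ h‖ ((1 - δ) * ‖h‖) := by
  set c : ℝ := ‖φ h‖ with hc
  have hc0 : 0 ≤ c := norm_nonneg _
  set t : ℝ := 1 - δ with ht
  have ht0 : 0 ≤ t := by simp only [ht]; linarith
  set M : ℝ := max c (t * ‖h‖) with hM
  have hM0 : 0 ≤ M := le_trans hc0 (le_max_left _ _)
  have hhsa : IsSelfAdjoint h := IsSelfAdjoint.of_nonneg hh
  -- the positive element j = (h - c)₊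
  set f : ℝ → ℝ := fun x => max (x - c) 0 with hf
  have hfc : Continuous f := (continuous_id.sub continuous_const).max continuous_const
  have hf0 : f 0 = 0 := by simp [hf, hc0]
  set j : A := cfcₙ f h with hj
  have hjpos : 0 ≤ j := cfcₙ_nonneg fun x _ => le_max_right _ _
  have hjsa : IsSelfAdjoint j := IsSelfAdjoint.of_nonneg hjpos
  -- φ j = 0
  have hφj : φ j = 0 := by
    have hmap : φ (cfcₙ f h) = cfcₙ f (φ h) :=
      NonUnitalStarAlgHomClass.map_cfcₙ (R := ℝ) (S := ℂ) φ f h hfc.continuousOn hf0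
        (map_continuous φ) hhsa (hhsa.map φ)
    rw [hj, hmap]
    have hzero : ∀ x ∈ quasispectrum ℝ (φ h), f x = (0 : ℝ → ℝ) x := by
      intro x hx
      rw [Unitization.quasispectrum_eq_spectrum_inr' ℝ ℂ (φ h)] at hx
      have hxle : ‖x‖ ≤ ‖((φ h : Unitization ℂ B))‖ := spectrum.norm_le_norm_of_mem hx
      rw [Unitization.norm_inr] at hxle
      have : x ≤ c := le_trans (le_abs_self x) (by rwa [← Real.norm_eq_abs])
      simp [hf, sub_nonpos.mpr this]
    rw [cfcₙ_congr hzero, cfcₙ_zero]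
  -- key comparison in the unitization
  set H : A⁺¹ := (h : A⁺¹) with hH
  set J : A⁺¹ := (j : A⁺¹) with hJ
  have hHsa : IsSelfAdjoint H := hhsa.inr ℂ
  have hHpos : 0 ≤ H := Unitization.inr_nonneg_iff.mpr hh
  have hJpos : 0 ≤ J := Unitization.inr_nonneg_iff.mpr hjpos
  have hJsa : IsSelfAdjoint J := IsSelfAdjoint.of_nonneg hJpos
  have hJcfc : J = cfc f H := by
    rw [hJ, hj, Unitization.real_cfcₙ_eq_cfc_inr h f hf0]
  -- H ≤ J + c • 1
  have hkey : H ≤ J + c • (1 : A⁺¹) := by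
    have h1 : H = cfc (fun x : ℝ => x) H := (cfc_id' ℝ H hHsa).symm
    have h2 : c • (1 : A⁺¹) = cfc (fun _ : ℝ => c) H := by
      rw [cfc_const c H hHsa, Algebra.algebraMap_eq_smul_one]
    rw [h1, hJcfc, h2, ← cfc_add H f _ (hfc.continuousOn) (continuousOn_const)]
    exact cfc_mono fun x _ => by simp [hf]; rcases le_total x c with hxc | hxc <;> simp [hxc] <;> linarith
  -- now the estimate for each l
  have hnorm_bound : ∀ l : Λ,
      ‖CFC.sqrt ((1 : A⁺¹) - (u l : A⁺¹)) * H * CFC.sqrt ((1 : A⁺¹) - (u l : A⁺¹)) +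
          t • (CFC.sqrt ((u l : A⁺¹)) * H * CFC.sqrt ((u l : A⁺¹)))‖ ≤
        M + ‖CFC.sqrt ((1 : A⁺¹) - (u l : A⁺¹)) * J * CFC.sqrt ((1 : A⁺¹) - (u l : A⁺¹))‖ := by
    intro l
    set v : A⁺¹ := (u l : A⁺¹) with hv
    have hv0 : 0 ≤ v := Unitization.inr_nonneg_iff.mpr (hpos l)
    have hv1 : 0 ≤ 1 - v := sub_nonneg.mpr (hle1 l)
    set s : A⁺¹ := CFC.sqrt (1 - v) with hs
    set w : A⁺¹ := CFC.sqrt v with hw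
    have hs0 : 0 ≤ s := CFC.sqrt_nonneg _
    have hw0 : 0 ≤ w := CFC.sqrt_nonneg _
    have hssa : IsSelfAdjoint s := IsSelfAdjoint.of_nonneg hs0
    have hwsa : IsSelfAdjoint w := IsSelfAdjoint.of_nonneg hw0
    have hss : s * s = 1 - v := CFC.sqrt_mul_sqrt_self _ hv1
    have hww : w * w = v := CFC.sqrt_mul_sqrt_self _ hv0
    -- first summand
    have h1 : s * H * s ≤ s * J * s + c • (1 - v) := by
      have := hssa.conjugate_le_conjugate hkey
      calc s * H * s ≤ s * (J + c • 1) * s := this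
        _ = s * J * s + c • (1 - v) := by
            rw [mul_add, add_mul, mul_smul_comm, smul_mul_assoc, mul_one, hss]
    -- second summand
    have h2 : t • (w * H * w) ≤ (t * ‖h‖) • v := by
      have hb : w * H * w ≤ ‖H‖ • (w * w) := by
        simpa only [hwsa.star_eq] using CStarAlgebra.star_left_conjugate_le_norm_smul (a := w) (b := H) hHsa
      rw [hww, Unitization.norm_inr] at hb
      calc t • (w * H * w) ≤ t • (‖h‖ • v) := smul_le_smul_of_nonneg_left hb ht0
        _ = (t * ‖h‖) • v := (mul_smul t ‖h‖ v).symm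
    -- combine scalar parts
    have h3 : c • (1 - v) + (t * ‖h‖) • v ≤ M • (1 : A⁺¹) := by
      have e1 : c • (1 - v) ≤ M • (1 - v) := by
        rw [← sub_nonneg, ← sub_smul]
        exact smul_nonneg (by simp [hM]) hv1
      have e2 : (t * ‖h‖) • v ≤ M • v := by
        rw [← sub_nonneg, ← sub_smul]
        exact smul_nonneg (by simp [hM]) hv0
      calc c • (1 - v) + (t * ‖h‖) • v ≤ M • (1 - v) + M • v := add_le_add e1 e2
        _ = M • (1 : A⁺¹) := by rw [← smul_add, sub_add_cancel]
    have h4 : s * H * s + t • (w * H * w) ≤ M • (1 : A⁺¹) + s * J * s := by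
      calc s * H * s + t • (w * H * w)
          ≤ (s * J * s + c • (1 - v)) + (t * ‖h‖) • v := add_le_add h1 h2
        _ = s * J * s + (c • (1 - v) + (t * ‖h‖) • v) := by abel
        _ ≤ s * J * s + M • (1 : A⁺¹) := by exact add_le_add_right h3 _
        _ = M • (1 : A⁺¹) + s * J * s := by abel
    have hpos1 : 0 ≤ s * H * s + t • (w * H * w) := by
      refine add_nonneg ?_ (smul_nonneg ht0 ?_)
      · simpa only [hssa.star_eq] using star_left_conjugate_nonneg hHpos s
      · simpa only [hwsa.star_eq] using star_left_conjugate_nonneg hHpos w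
    calc ‖s * H * s + t • (w * H * w)‖ ≤ ‖M • (1 : A⁺¹) + s * J * s‖ :=
          CStarAlgebra.norm_le_norm_of_nonneg_of_le hpos1 h4
      _ ≤ ‖M • (1 : A⁺¹)‖ + ‖s * J * s‖ := norm_add_le _ _
      _ ≤ M + ‖s * J * s‖ := by
          gcongr
          rw [norm_smul, Real.norm_eq_abs, abs_of_nonneg hM0]
          calc M * ‖(1 : A⁺¹)‖ ≤ M * 1 := by gcongr; exact norm_one.le
            _ = M := mul_one M
  -- the error term tends to zero
  have herr : Tendsto (fun l =>
      ‖CFC.sqrt ((1 : A⁺¹) - (u l : A⁺¹)) * J * CFC.sqrt ((1 : A⁺¹) - (u l : A⁺¹))‖) atTop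
      (nhds 0) := by
    have hbound : ∀ l : Λ,
        ‖CFC.sqrt ((1 : A⁺¹) - (u l : A⁺¹)) * J * CFC.sqrt ((1 : A⁺¹) - (u l : A⁺¹))‖ ≤
          Real.sqrt (‖j‖ * ‖u l * j - j‖) := by
      intro l
      set v : A⁺¹ := (u l : A⁺¹) with hv
      have hv0 : 0 ≤ v := Unitization.inr_nonneg_iff.mpr (hpos l)
      have hv1 : 0 ≤ 1 - v := sub_nonneg.mpr (hle1 l)
      set s : A⁺¹ := CFC.sqrt (1 - v) with hs
      have hs0 : 0 ≤ s := CFC.sqrt_nonneg _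
      have hssa : IsSelfAdjoint s := IsSelfAdjoint.of_nonneg hs0
      have hss : s * s = 1 - v := CFC.sqrt_mul_sqrt_self _ hv1
      have hsle : ‖s‖ ≤ 1 := by
        have hsq2 : ‖s‖ * ‖s‖ = ‖(1 : A⁺¹) - v‖ := by
          rw [← CStarRing.norm_star_mul_self (x := s), hssa.star_eq, hss]
        have h1v : ‖(1 : A⁺¹) - v‖ ≤ 1 := by
          rw [CStarAlgebra.norm_le_one_iff_of_nonneg _ hv1]
          simpa using hv0
        nlinarith [norm_nonneg s]
      have hsJ : ‖s * J‖ ≤ Real.sqrt (‖j‖ * ‖u l * j - j‖) := by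
        have hsq : ‖s * J‖ * ‖s * J‖ ≤ ‖j‖ * ‖u l * j - j‖ := by
          have e1 : ‖s * J‖ * ‖s * J‖ = ‖star (s * J) * (s * J)‖ :=
            (CStarRing.norm_star_mul_self (x := s * J)).symm
          have e2 : star (s * J) * (s * J) = J * ((1 - v) * J) := by
            rw [star_mul, hssa.star_eq, hJsa.star_eq]
            calc J * s * (s * J) = J * ((s * s) * J) := by simp only [mul_assoc]
              _ = J * ((1 - v) * J) := by rw [hss]
          have e3 : (1 - v) * J = ((j - u l * j : A) : A⁺¹) := by
            rw [hJ, hv, sub_mul, one_mul, Unitization.inr_sub, Unitization.inr_mul]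
          calc ‖s * J‖ * ‖s * J‖ = ‖J * ((1 - v) * J)‖ := by rw [e1, e2]
            _ ≤ ‖J‖ * ‖(1 - v) * J‖ := norm_mul_le _ _
            _ = ‖j‖ * ‖u l * j - j‖ := by
                rw [e3, hJ, Unitization.norm_inr, Unitization.norm_inr, norm_sub_rev]
        calc ‖s * J‖ = Real.sqrt (‖s * J‖ * ‖s * J‖) :=
              (Real.sqrt_mul_self (norm_nonneg _)).symm
          _ ≤ Real.sqrt (‖j‖ * ‖u l * j - j‖) := Real.sqrt_le_sqrt hsq
      calc ‖s * J * s‖ ≤ ‖s * J‖ * ‖s‖ := norm_mul_le _ _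
        _ ≤ ‖s * J‖ * 1 := by gcongr
        _ = ‖s * J‖ := mul_one _
        _ ≤ Real.sqrt (‖j‖ * ‖u l * j - j‖) := hsJ
    have htend : Tendsto (fun l => Real.sqrt (‖j‖ * ‖u l * j - j‖)) atTop (nhds 0) := by
      have h1 : Tendsto (fun l => ‖j‖ * ‖u l * j - j‖) atTop (nhds 0) := by
        simpa using (happrox j hφj).const_mul ‖j‖
      have h2 := (Real.continuous_sqrt.tendsto 0).comp h1
      simpa only [Function.comp_def, Real.sqrt_zero] using h2
    exact squeeze_zero (fun l => norm_nonneg _) hbound htend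
  -- conclude with the limsup
  have hle : (fun l =>
        ‖CFC.sqrt ((1 : A⁺¹) - (u l : A⁺¹)) * (h : A⁺¹) * CFC.sqrt ((1 : A⁺¹) - (u l : A⁺¹)) +
          (1 - δ) • (CFC.sqrt ((u l : A⁺¹)) * (h : A⁺¹) * CFC.sqrt ((u l : A⁺¹)))‖) ≤
      fun l => M + ‖CFC.sqrt ((1 : A⁺¹) - (u l : A⁺¹)) * J * CFC.sqrt ((1 : A⁺¹) - (u l : A⁺¹))‖ :=
    fun l => hnorm_bound l
  have htendM : Tendsto (fun l =>
      M + ‖CFC.sqrt ((1 : A⁺¹) - (u l : A⁺¹)) * J * CFC.sqrt ((1 : A⁺¹) - (u l : A⁺¹))‖) atTop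
      (nhds M) := by
    simpa using (tendsto_const_nhds (x := M)).add herr
  calc limsup (fun l =>
        ‖CFC.sqrt ((1 : A⁺¹) - (u l : A⁺¹)) * (h : A⁺¹) * CFC.sqrt ((1 : A⁺¹) - (u l : A⁺¹)) +
          (1 - δ) • (CFC.sqrt ((u l : A⁺¹)) * (h : A⁺¹) * CFC.sqrt ((u l : A⁺¹)))‖) atTop
      ≤ limsup (fun l =>
        M + ‖CFC.sqrt ((1 : A⁺¹) - (u l : A⁺¹)) * J * CFC.sqrt ((1 : A⁺¹) - (u l : A⁺¹))‖) atTop := by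
        exact limsup_le_limsup (Eventually.of_forall hle)
          ((isBoundedUnder_of (f := atTop) ⟨0, fun l => norm_nonneg _⟩ : IsBoundedUnder (· ≥ ·) atTop _).isCoboundedUnder_le)
          htendM.isBoundedUnder_le
    _ = M := htendM.limsup_eq
end

section
/- Let A and B be C*-algebras, let φ : A → B be a surjective *-homomorphism, and let (u_λ)_{λ∈Λ} be an approximate unit for ker φ that is quasicentral for A. Then for every a ∈ A and every real δ with 0 ≤ δ ≤ 1, one has limsup_λ ‖a·(1 − δ·u_λ)^{1/2}‖ ≤ max(‖φ(a)‖, (1 − δ)^{1/2}·‖a‖). -/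
open scoped CStarAlgebra
open Filter

set_option maxHeartbeats 1000000

private lemma aux_pow_bound (m : ℕ) (t : ℝ) (ht0 : 0 ≤ t) (ht1 : t ≤ 1) :
    (m + 1 : ℝ) * (t ^ m * (1 - t)) ≤ 1 := by
  have h1 : (m + 1 : ℝ) * t ^ m ≤ ∑ i ∈ Finset.range (m+1), t ^ i := by
    calc (m + 1 : ℝ) * t ^ m = ∑ _i ∈ Finset.range (m+1), t ^ m := by
          simp [Finset.sum_const, mul_comm]
    _ ≤ ∑ i ∈ Finset.range (m+1), t ^ i :=
        Finset.sum_le_sum fun i hi =>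
          pow_le_pow_of_le_one ht0 ht1 (Nat.lt_succ_iff.mp (Finset.mem_range.mp hi))
  have h2 : (∑ i ∈ Finset.range (m+1), t ^ i) * (1 - t) = 1 - t ^ (m+1) := by
    have := geom_sum_mul t (m+1)
    nlinarith [this]
  nlinarith [pow_nonneg ht0 (m+1), pow_nonneg ht0 m, sub_nonneg.mpr ht1]

private lemma aux_scalar (m : ℕ) (δ t : ℝ) (hδ1 : δ ≤ 1) (ht0 : 0 ≤ t) (ht1 : t ≤ 1) :
    t ^ m - δ * t ^ (m+1) ≤ (1 - δ) * t + 1 / (m+1) := by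
  have key := aux_pow_bound m t ht0 ht1
  have hm : (0:ℝ) < m + 1 := by positivity
  have h3 : t ^ (m+1) ≤ t := by
    calc t ^ (m+1) ≤ t ^ 1 := pow_le_pow_of_le_one ht0 ht1 (by omega)
    _ = t := pow_one t
  have h4 : t ^ m * (1-t) ≤ 1 / (m+1) := by
    rw [le_div_iff₀ hm]; linarith [key]
  nlinarith [mul_nonneg (sub_nonneg.mpr hδ1) (sub_nonneg.mpr h3), pow_succ t m]

private lemma aux_op {C : Type*} [CStarAlgebra C] [Nontrivial C] [PartialOrder C]
    [StarOrderedRing C]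
    (U : C) (hU : 0 ≤ U) (hUn : ‖U‖ ≤ 1) (δ : ℝ) (hδ1 : δ ≤ 1) (m : ℕ) :
    U ^ m - δ • U ^ (m+1) ≤ (1 - δ) • U + ((1:ℝ)/(m+1)) • 1 := by
  have hUsa : IsSelfAdjoint U := .of_nonneg hU
  have h1 : U ^ m - δ • U ^ (m+1) = cfc (fun t : ℝ => t ^ m - δ * t ^ (m+1)) U := by
    rw [cfc_sub (fun t : ℝ => t ^ m) (fun t : ℝ => δ * t ^ (m+1)) U,
      cfc_const_mul _ _ U, cfc_pow_id (R := ℝ) U, cfc_pow_id (R := ℝ) U]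
  have h2 : (1 - δ) • U + ((1:ℝ)/(m+1)) • (1 : C)
      = cfc (fun t : ℝ => (1 - δ) * t + 1/(m+1)) U := by
    rw [cfc_add U (fun t : ℝ => (1-δ) * t) (fun _ => (1:ℝ)/(m+1)), cfc_const_mul _ _ U,
      cfc_id' (R := ℝ) U, cfc_const _ U, Algebra.algebraMap_eq_smul_one]
  rw [h1, h2]
  refine cfc_mono fun t ht => ?_
  have ht0 : 0 ≤ t := spectrum_nonneg_of_nonneg hU ht
  have ht1 : t ≤ 1 :=
    le_trans (Real.le_norm_self t) (le_trans (spectrum.norm_le_norm_of_mem ht) hUn)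
  exact aux_scalar m δ t hδ1 ht0 ht1

/-- If `u` is a quasicentral approximate unit for `ker φ`, then for any `a`
and `0 ≤ δ ≤ 1`, `limsup ‖a (1 - δ u)^{1/2}‖ ≤ max ‖φ a‖ ((1-δ)^{1/2} ‖a‖)`. -/
theorem quasicentral_approxUnit_fix_norm
    {A B : Type} [NonUnitalCStarAlgebra A] [PartialOrder A] [StarOrderedRing A]
    [NonUnitalCStarAlgebra B]
    (φ : A →⋆ₙₐ[ℂ] B) (hφ : Function.Surjective φ)
    {Λ : Type} [Preorder Λ] [IsDirected Λ (· ≤ ·)] [Nonempty Λ]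
    (u : Λ → A)
    (hker : ∀ l, φ (u l) = 0)
    (hpos : ∀ l, 0 ≤ u l)
    (hle1 : ∀ l, (u l : A⁺¹) ≤ 1)
    (happrox : ∀ x : A, φ x = 0 → Tendsto (fun l => ‖u l * x - x‖) atTop (nhds 0))
    (hquasi : ∀ a : A, Tendsto (fun l => ‖u l * a - a * u l‖) atTop (nhds 0))
    (a : A) (δ : ℝ) (hδ₀ : 0 ≤ δ) (hδ₁ : δ ≤ 1) :
    limsup (fun l => ‖(a : A⁺¹) * CFC.sqrt ((1 : A⁺¹) - δ • (u l : A⁺¹))‖) atTop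
      ≤ max ‖φ a‖ (Real.sqrt (1 - δ) * ‖a‖) := by
  classical
  have hφa : ‖φ a‖ ≤ ‖a‖ := NonUnitalStarAlgHom.norm_apply_le φ a
  -- dispatch the case δ = 0
  rcases eq_or_lt_of_le hδ₀ with hδ0 | hδpos
  · have hsqrt1 : CFC.sqrt ((1 : A⁺¹)) = 1 := CFC.sqrt_unique (mul_one 1) zero_le_one
    have hVconst : ∀ l : Λ, CFC.sqrt ((1 : A⁺¹) - δ • (u l : A⁺¹)) = 1 := by
      intro l; rw [← hδ0, zero_smul, sub_zero, hsqrt1]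
    have : (fun l : Λ => ‖(a : A⁺¹) * CFC.sqrt ((1 : A⁺¹) - δ • (u l : A⁺¹))‖)
        = fun _ => ‖a‖ := by
      funext l; rw [hVconst l, mul_one, Unitization.norm_inr]
    rw [this, limsup_const]
    rw [← hδ0]
    simpa using le_max_right ‖φ a‖ ‖a‖
  set T : ℝ := max ‖φ a‖ (Real.sqrt (1 - δ) * ‖a‖) with hTdef
  have hT0 : 0 ≤ T := le_trans (norm_nonneg _) (le_max_left _ _)
  set V : Λ → A⁺¹ := fun l => CFC.sqrt ((1 : A⁺¹) - δ • (u l : A⁺¹)) with hVdef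
  -- basic facts about U and V
  have hU0 : ∀ l, 0 ≤ (u l : A⁺¹) := fun l => Unitization.inr_nonneg_iff.mpr (hpos l)
  have hUsa : ∀ l, star (u l : A⁺¹) = (u l : A⁺¹) := fun l => (IsSelfAdjoint.of_nonneg (hU0 l))
  have hUnorm : ∀ l, ‖(u l : A⁺¹)‖ ≤ 1 := fun l =>
    (CStarAlgebra.norm_le_one_iff_of_nonneg _ (hU0 l)).mpr (hle1 l)
  have hx0 : ∀ l, 0 ≤ (1 : A⁺¹) - δ • (u l : A⁺¹) := by
    intro l
    have h1 : (1 : A⁺¹) - δ • (u l : A⁺¹)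
        = (1 - δ) • (1 : A⁺¹) + δ • ((1 : A⁺¹) - (u l : A⁺¹)) := by
      rw [smul_sub, sub_smul, one_smul]; abel
    rw [h1]
    exact add_nonneg (smul_nonneg (by linarith) zero_le_one)
      (smul_nonneg hδ₀ (sub_nonneg.mpr (hle1 l)))
  have hx1 : ∀ l, (1 : A⁺¹) - δ • (u l : A⁺¹) ≤ 1 :=
    fun l => sub_le_self _ (smul_nonneg hδ₀ (hU0 l))
  have hV0 : ∀ l, 0 ≤ V l := fun l => CFC.sqrt_nonneg _
  have hVsa : ∀ l, star (V l) = V l := fun l => IsSelfAdjoint.of_nonneg (hV0 l)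
  have hVV : ∀ l, V l * V l = (1 : A⁺¹) - δ • (u l : A⁺¹) :=
    fun l => CFC.sqrt_mul_sqrt_self _ (hx0 l)
  have hVnorm : ∀ l, ‖V l‖ ≤ 1 := by
    intro l
    have h1 : ‖V l‖ * ‖V l‖ = ‖(1 : A⁺¹) - δ • (u l : A⁺¹)‖ := by
      rw [← CStarRing.norm_star_mul_self (x := V l), hVsa l, hVV l]
    have h2 : ‖(1 : A⁺¹) - δ • (u l : A⁺¹)‖ ≤ 1 :=
      (CStarAlgebra.norm_le_one_iff_of_nonneg _ (hx0 l)).mpr (hx1 l)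
    nlinarith [norm_nonneg (V l)]
  have hcommUV : ∀ l, Commute (u l : A⁺¹) (V l) := by
    intro l
    have hxV : Commute ((1 : A⁺¹) - δ • (u l : A⁺¹)) (V l) := by
      show ((1 : A⁺¹) - δ • (u l : A⁺¹)) * V l = V l * ((1 : A⁺¹) - δ • (u l : A⁺¹))
      conv_lhs => rw [← hVV l]
      conv_rhs => rw [← hVV l]
      rw [mul_assoc]
    have hU_eq : (u l : A⁺¹) = δ⁻¹ • ((1 : A⁺¹) - ((1 : A⁺¹) - δ • (u l : A⁺¹))) := by
      rw [sub_sub_cancel, smul_smul, inv_mul_cancel₀ hδpos.ne', one_smul]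
    rw [hU_eq]
    exact ((Commute.one_left (V l)).sub_left hxV).smul_left δ⁻¹
  -- the key facts about p and P
  set p : A := star a * a with hpdef
  have hpsa : IsSelfAdjoint p := IsSelfAdjoint.star_mul_self a
  set P : A⁺¹ := (p : A⁺¹) with hPdef
  have hPcoe : P = star (a : A⁺¹) * (a : A⁺¹) := by
    rw [hPdef, hpdef, Unitization.inr_mul, Unitization.inr_star]
  have hP0 : 0 ≤ P := hPcoe ▸ star_mul_self_nonneg _
  have hPsa : IsSelfAdjoint P := .of_nonneg hP0
  have hPnorm : ‖P‖ = ‖a‖^2 := by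
    rw [hPdef, Unitization.norm_inr, hpdef, CStarRing.norm_star_mul_self, sq]
  set s : ℝ := ‖φ a‖^2 with hsdef
  have hs0 : 0 ≤ s := sq_nonneg _
  have hsle : s ≤ ‖a‖^2 := by
    rw [hsdef]; exact pow_le_pow_left₀ (norm_nonneg _) hφa 2
  have hφpnorm : ‖φ p‖ = s := by
    rw [hpdef, map_mul, map_star, CStarRing.norm_star_mul_self, hsdef, sq]
  -- norm squared identity
  have hFsq : ∀ l, ‖(a : A⁺¹) * V l‖^2 = ‖V l * P * V l‖ := by
    intro l
    have h1 : star ((a : A⁺¹) * V l) * ((a : A⁺¹) * V l) = V l * P * V l := by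
      rw [star_mul, hVsa l, hPcoe, mul_assoc, ← mul_assoc (star (a:A⁺¹)), ← mul_assoc,
        ← mul_assoc]
    rw [sq, ← CStarRing.norm_star_mul_self (x := (a : A⁺¹) * V l), h1]
  -- squared max
  have hT2 : T^2 = max s ((1-δ) * ‖a‖^2) := by
    rcases le_total ‖φ a‖ (Real.sqrt (1 - δ) * ‖a‖) with h | h
    · have h2 : ‖φ a‖^2 ≤ (Real.sqrt (1-δ) * ‖a‖)^2 := pow_le_pow_left₀ (norm_nonneg _) h 2
      rw [mul_pow, Real.sq_sqrt (by linarith)] at h2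
      rw [hTdef, max_eq_right h, hsdef, mul_pow, Real.sq_sqrt (by linarith)]
      rw [max_eq_right h2]
    · have h2 : (Real.sqrt (1-δ) * ‖a‖)^2 ≤ ‖φ a‖^2 :=
        pow_le_pow_left₀ (by positivity) h 2
      rw [mul_pow, Real.sq_sqrt (by linarith)] at h2
      rw [hTdef, max_eq_left h, hsdef, max_eq_left h2]
  -- main eventual bound
  have key : ∀ η : ℝ, 0 < η → ∀ᶠ l in atTop, ‖(a : A⁺¹) * V l‖ ≤ T + η := by
    intro η hη
    have sqrt_step : ∀ l, ‖V l * P * V l‖ ≤ T^2 + η^2 → ‖(a : A⁺¹) * V l‖ ≤ T + η := by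
      intro l hl
      have h1 : ‖(a : A⁺¹) * V l‖ = Real.sqrt (‖(a : A⁺¹) * V l‖^2) :=
        (Real.sqrt_sq (norm_nonneg _)).symm
      rw [h1, hFsq l]
      calc Real.sqrt ‖V l * P * V l‖ ≤ Real.sqrt (T^2 + η^2) := Real.sqrt_le_sqrt hl
      _ ≤ Real.sqrt ((T + η)^2) := Real.sqrt_le_sqrt (by nlinarith)
      _ = T + η := Real.sqrt_sq (by positivity)
    set ε₁ : ℝ := η^2/3 with hε₁def
    have hε₁ : 0 < ε₁ := by positivity
    have hmax_le : max (s + ε₁) ((1-δ) * ‖a‖^2) ≤ T^2 + ε₁ := by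
      rw [hT2]
      rcases le_total (s + ε₁) ((1-δ) * ‖a‖^2) with h | h
      · rw [max_eq_right h]
        exact le_add_of_le_of_nonneg (le_max_right _ _) (le_of_lt hε₁)
      · rw [max_eq_left h]
        exact add_le_add_left (le_max_left _ _) _
    rcases le_or_gt (‖a‖^2) (s + ε₁) with hc | hc
    · -- easy case
      refine Eventually.of_forall fun l => sqrt_step l ?_
      have hb : ‖V l * P * V l‖ ≤ ‖P‖ := by
        calc ‖V l * P * V l‖ ≤ ‖V l * P‖ * ‖V l‖ := norm_mul_le _ _
        _ ≤ (‖V l‖ * ‖P‖) * ‖V l‖ :=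
            mul_le_mul_of_nonneg_right (norm_mul_le _ _) (norm_nonneg _)
        _ ≤ ‖P‖ := by
            have hv := hVnorm l
            have h0v := norm_nonneg (V l)
            have h0P := norm_nonneg P
            have hv2 : ‖V l‖ * ‖V l‖ ≤ 1 := mul_le_one₀ hv h0v hv
            nlinarith [mul_nonneg h0P (sub_nonneg.mpr hv2)]
      rw [hPnorm] at hb
      have hsT : s ≤ T^2 := hT2 ▸ le_max_left _ _
      have : ε₁ ≤ η^2 := by rw [hε₁def]; nlinarith
      linarith
    · -- main case
      set c₀ : ℝ := ‖a‖^2 - (s + ε₁) with hc₀def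
      have hc₀ : 0 < c₀ := by rw [hc₀def]; linarith
      -- the cutoff function
      set hfun : ℝ → ℝ := fun t => min 1 (max 0 ((t - s)/ε₁)) with hfundef
      have hfun_cont : Continuous hfun := by
        apply Continuous.min continuous_const
        exact Continuous.max continuous_const (by fun_prop)
      have hfun_mem : ∀ t, 0 ≤ hfun t ∧ hfun t ≤ 1 := fun t =>
        ⟨le_min zero_le_one (le_max_left 0 _), min_le_left _ _⟩
      have hfun_zero : ∀ t, t ≤ s → hfun t = 0 := by
        intro t ht
        rw [hfundef]
        simp only
        rw [max_eq_left (div_nonpos_of_nonpos_of_nonneg (by linarith) hε₁.le),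
          min_eq_right zero_le_one]
      have hfun0 : hfun 0 = 0 := hfun_zero 0 hs0
      have hfun_one : ∀ t, s + ε₁ ≤ t → hfun t = 1 := by
        intro t ht
        rw [hfundef]
        simp only
        rw [min_eq_left]
        refine le_trans ?_ (le_max_right 0 _)
        rw [le_div_iff₀ hε₁]; linarith
      -- the element e
      set e : A := cfcₙ hfun p with hedef
      have hesa : IsSelfAdjoint e := by rw [hedef]; exact cfcₙ_predicate hfun p
      have hφe : φ e = 0 := by
        rw [hedef, NonUnitalStarAlgHom.map_cfcₙ φ hfun p hfun_cont.continuousOn hfun0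
          (map_continuous φ) hpsa (hpsa.map φ)]
        rw [cfcₙ_congr (g := fun _ => (0:ℝ)) ?_]
        · simp
        · intro t ht
          apply hfun_zero
          rw [Unitization.quasispectrum_eq_spectrum_inr' ℝ ℂ (φ p)] at ht
          calc t ≤ ‖t‖ := Real.le_norm_self t
          _ ≤ ‖((φ p : B) : B⁺¹)‖ := spectrum.norm_le_norm_of_mem ht
          _ = ‖φ p‖ := Unitization.norm_inr _
          _ = s := hφpnorm
      have hEcfc : ((e : A⁺¹)) = cfc hfun P := by
        rw [hedef, hPdef]; exact Unitization.real_cfcₙ_eq_cfc_inr p hfun hfun0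
      have hE1 : (e : A⁺¹) ≤ 1 := by
        rw [hEcfc]
        calc cfc hfun P ≤ cfc (fun _ : ℝ => (1:ℝ)) P :=
            cfc_mono (fun t _ => (hfun_mem t).2) hfun_cont.continuousOn continuousOn_const
        _ = 1 := by rw [cfc_const _ P, map_one]
      have hPle : P ≤ (s + ε₁) • 1 + c₀ • (e : A⁺¹) := by
        have h1 : cfc (fun t : ℝ => (s+ε₁) + c₀ * hfun t) P = (s+ε₁) • (1:A⁺¹) + c₀ • cfc hfun P := by
          rw [cfc_add P (fun _ => s+ε₁) (fun t => c₀ * hfun t) continuousOn_const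
              (continuousOn_const.mul hfun_cont.continuousOn),
            cfc_const_mul _ _ P hfun_cont.continuousOn,
            cfc_const _ P, Algebra.algebraMap_eq_smul_one]
        rw [hEcfc, ← h1]
        conv_lhs => rw [← cfc_id' (R := ℝ) P]
        refine cfc_mono (fun t ht => ?_) (continuousOn_id' _)
          (continuousOn_const.add (continuousOn_const.mul hfun_cont.continuousOn))
        have ht0 : 0 ≤ t := spectrum_nonneg_of_nonneg hP0 ht
        have ht1 : t ≤ ‖a‖^2 := by
          rw [← hPnorm]
          exact le_trans (Real.le_norm_self t) (spectrum.norm_le_norm_of_mem ht)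
        rcases le_or_gt t (s+ε₁) with h | h
        · have := mul_nonneg hc₀.le (hfun_mem t).1
          linarith
        · rw [hfun_one t h.le]; rw [hc₀def]; linarith
      -- the error terms
      set t1 : Λ → ℝ := fun l => ‖e - u l * e * u l‖ with ht1def
      have ht1nn : ∀ l, 0 ≤ t1 l := fun l => norm_nonneg _
      have hue : Tendsto (fun l => ‖u l * e - e‖) atTop (nhds 0) := happrox e hφe
      have ht1le : ∀ l, t1 l ≤ 2 * ‖u l * e - e‖ := by
        intro l
        have husa : IsSelfAdjoint (u l) := .of_nonneg (hpos l)
        have h2 : ‖e - e * u l‖ = ‖u l * e - e‖ := by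
          calc ‖e - e * u l‖ = ‖-(e - e * u l)‖ := (norm_neg _).symm
          _ = ‖star (u l * e - e)‖ := by
              rw [star_sub, star_mul, husa.star_eq, hesa.star_eq, neg_sub]
          _ = ‖u l * e - e‖ := norm_star _
        have hul : ‖u l‖ ≤ 1 := by
          rw [← Unitization.norm_inr (𝕜 := ℂ)]; exact hUnorm l
        have hsplit : e - u l * e * u l = -(u l * e - e) + u l * (e - e * u l) := by
          rw [mul_sub, ← mul_assoc]; abel
        calc t1 l = ‖-(u l * e - e) + u l * (e - e * u l)‖ := by rw [ht1def]; simp only; rw [hsplit]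
        _ ≤ ‖-(u l * e - e)‖ + ‖u l * (e - e * u l)‖ := norm_add_le _ _
        _ ≤ ‖u l * e - e‖ + ‖u l‖ * ‖e - e * u l‖ := by
            rw [norm_neg]; exact add_le_add_right (norm_mul_le _ _) _
        _ ≤ ‖u l * e - e‖ + 1 * ‖u l * e - e‖ := by
            rw [h2]
            exact add_le_add_right (mul_le_mul_of_nonneg_right hul (norm_nonneg _)) _
        _ = 2 * ‖u l * e - e‖ := by ring
      have ht1tendsto : Tendsto t1 atTop (nhds 0) := by
        apply squeeze_zero ht1nn ht1le
        simpa using hue.const_mul 2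
      -- iterated localization of E
      have hstep : ∀ l, (e : A⁺¹) ≤ (u l : A⁺¹) * (e : A⁺¹) * (u l : A⁺¹) + t1 l • 1 := by
        intro l
        have husa : IsSelfAdjoint (u l) := .of_nonneg (hpos l)
        have hsaA : IsSelfAdjoint (e - u l * e * u l) := by
          rw [IsSelfAdjoint, star_sub, star_mul, star_mul, husa.star_eq, hesa.star_eq,
            mul_assoc]
        have hsa : IsSelfAdjoint ((e - u l * e * u l : A) : A⁺¹) := by
          rw [IsSelfAdjoint, ← Unitization.inr_star, hsaA.star_eq]
        have hle := IsSelfAdjoint.le_algebraMap_norm_self (a := ((e - u l * e * u l : A) : A⁺¹)) hsa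
        rw [Algebra.algebraMap_eq_smul_one, Unitization.norm_inr] at hle
        have hcoe : ((e - u l * e * u l : A) : A⁺¹)
            = (e : A⁺¹) - (u l : A⁺¹) * (e : A⁺¹) * (u l : A⁺¹) := by
          rw [Unitization.inr_sub, Unitization.inr_mul, Unitization.inr_mul]
        rw [hcoe] at hle
        calc (e : A⁺¹) = ((e : A⁺¹) - (u l : A⁺¹) * (e : A⁺¹) * (u l : A⁺¹))
              + (u l : A⁺¹) * (e : A⁺¹) * (u l : A⁺¹) := by rw [sub_add_cancel]
        _ ≤ t1 l • 1 + (u l : A⁺¹) * (e : A⁺¹) * (u l : A⁺¹) := add_le_add_left hle _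
        _ = (u l : A⁺¹) * (e : A⁺¹) * (u l : A⁺¹) + t1 l • 1 := add_comm _ _
      have hU2le1 : ∀ l, (u l : A⁺¹) * (u l : A⁺¹) ≤ 1 := by
        intro l
        have h0 : 0 ≤ (u l : A⁺¹) * (u l : A⁺¹) := by
          have := star_mul_self_nonneg (u l : A⁺¹)
          rwa [hUsa l] at this
        rw [← CStarAlgebra.norm_le_one_iff_of_nonneg _ h0]
        calc ‖(u l : A⁺¹) * (u l : A⁺¹)‖ ≤ ‖(u l : A⁺¹)‖ * ‖(u l : A⁺¹)‖ := norm_mul_le _ _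
        _ ≤ 1 := by nlinarith [hUnorm l, norm_nonneg (u l : A⁺¹)]
      have hEn : ∀ (n : ℕ) l, (e : A⁺¹) ≤ (u l : A⁺¹)^(2*n) + ((n : ℝ) * t1 l) • 1 := by
        intro n l
        induction n with
        | zero => simpa using hE1
        | succ n ih =>
          have conj := star_left_conjugate_le_conjugate ih (u l : A⁺¹)
          rw [hUsa l] at conj
          have hexp : (u l : A⁺¹) * ((u l : A⁺¹)^(2*n) + ((n : ℝ) * t1 l) • 1) * (u l : A⁺¹)
              = (u l : A⁺¹)^(2*(n+1)) + ((n:ℝ) * t1 l) • ((u l : A⁺¹) * (u l : A⁺¹)) := by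
            have hpow : (u l : A⁺¹) * (u l : A⁺¹)^(2*n) * (u l : A⁺¹)
                = (u l : A⁺¹)^(2*(n+1)) := by
              rw [← pow_succ', ← pow_succ, show 2*n+1+1 = 2*(n+1) by ring]
            rw [mul_add, add_mul, mul_smul_comm, smul_mul_assoc, mul_one, hpow]
          have hsm : ((n:ℝ) * t1 l) • ((u l : A⁺¹) * (u l : A⁺¹)) ≤ ((n:ℝ) * t1 l) • 1 :=
            smul_le_smul_of_nonneg_left (hU2le1 l)
              (mul_nonneg (Nat.cast_nonneg n) (ht1nn l))
          calc (e : A⁺¹) ≤ (u l : A⁺¹) * (e : A⁺¹) * (u l : A⁺¹) + t1 l • 1 := hstep l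
          _ ≤ (u l : A⁺¹) * ((u l : A⁺¹)^(2*n) + ((n : ℝ) * t1 l) • 1) * (u l : A⁺¹)
              + t1 l • 1 := add_le_add_left conj _
          _ = ((u l : A⁺¹)^(2*(n+1)) + ((n:ℝ) * t1 l) • ((u l : A⁺¹) * (u l : A⁺¹)))
              + t1 l • 1 := by rw [hexp]
          _ ≤ ((u l : A⁺¹)^(2*(n+1)) + ((n:ℝ) * t1 l) • (1:A⁺¹)) + t1 l • 1 :=
              add_le_add_left (add_le_add_right hsm _) _
          _ = (u l : A⁺¹)^(2*(n+1)) + (((n+1 : ℕ) : ℝ) * t1 l) • 1 := by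
              rw [add_assoc, ← add_smul,
                show (n:ℝ) * t1 l + t1 l = ((n+1:ℕ):ℝ) * t1 l by push_cast; ring]
        -- end induction
      have hVEV : ∀ (n : ℕ) l, V l * (e : A⁺¹) * V l ≤ (1-δ) • (u l : A⁺¹)
          + ((1:ℝ)/(2*n+1) + (n:ℝ) * t1 l) • 1 := by
        intro n l
        have conj := star_left_conjugate_le_conjugate (hEn n l) (V l)
        rw [hVsa l] at conj
        have hcommV : V l * (u l : A⁺¹)^(2*n) = (u l : A⁺¹)^(2*n) * V l :=
          (((hcommUV l).pow_left (2*n)).symm).eq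
        have hexp : V l * ((u l : A⁺¹)^(2*n) + ((n : ℝ) * t1 l) • 1) * V l
            = ((u l : A⁺¹)^(2*n) - δ • (u l : A⁺¹)^(2*n+1))
              + ((n:ℝ) * t1 l) • (V l * V l) := by
          rw [mul_add, add_mul, mul_smul_comm, smul_mul_assoc, mul_one]
          congr 1
          rw [hcommV, mul_assoc, hVV l, mul_sub, mul_one, mul_smul_comm, ← pow_succ]
        have h1 : ((u l : A⁺¹)^(2*n) - δ • (u l : A⁺¹)^(2*n+1))
            ≤ (1-δ) • (u l : A⁺¹) + ((1:ℝ)/(2*n+1)) • 1 := by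
          have := aux_op (u l : A⁺¹) (hU0 l) (hUnorm l) δ hδ₁ (2*n)
          convert this using 3 <;> push_cast <;> ring
        have h2 : ((n:ℝ) * t1 l) • (V l * V l) ≤ ((n:ℝ) * t1 l) • 1 := by
          rw [hVV l]
          exact smul_le_smul_of_nonneg_left (hx1 l)
            (mul_nonneg (Nat.cast_nonneg n) (ht1nn l))
        calc V l * (e : A⁺¹) * V l
            ≤ V l * ((u l : A⁺¹)^(2*n) + ((n : ℝ) * t1 l) • 1) * V l := conj
        _ = ((u l : A⁺¹)^(2*n) - δ • (u l : A⁺¹)^(2*n+1))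
              + ((n:ℝ) * t1 l) • (V l * V l) := hexp
        _ ≤ ((1-δ) • (u l : A⁺¹) + ((1:ℝ)/(2*n+1)) • 1) + ((n:ℝ) * t1 l) • 1 :=
            add_le_add h1 h2
        _ = (1-δ) • (u l : A⁺¹) + ((1:ℝ)/(2*n+1) + (n:ℝ) * t1 l) • 1 := by
            rw [add_assoc, ← add_smul]
      -- the main bound on ‖V P V‖
      have hVPV : ∀ (n : ℕ) l, ‖V l * P * V l‖
          ≤ max (s+ε₁) ((1-δ) * ‖a‖^2) + (c₀ * ((1:ℝ)/(2*n+1)) + c₀ * ((n:ℝ) * t1 l)) := by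
        intro n l
        set w : ℝ := (1:ℝ)/(2*n+1) + (n:ℝ) * t1 l with hwdef
        have hw0 : 0 ≤ w := by
          rw [hwdef]
          have : (0:ℝ) < 2*(n:ℝ)+1 := by positivity
          positivity
        have conj := star_left_conjugate_le_conjugate hPle (V l)
        rw [hVsa l] at conj
        have hexp : V l * ((s + ε₁) • 1 + c₀ • (e : A⁺¹)) * V l
            = (s+ε₁) • (V l * V l) + c₀ • (V l * (e : A⁺¹) * V l) := by
          rw [mul_add, add_mul, mul_smul_comm, smul_mul_assoc, mul_one,
            mul_smul_comm, smul_mul_assoc]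
        have h3 := smul_le_smul_of_nonneg_left (hVEV n l) hc₀.le
        have hchain : V l * P * V l ≤ ((s+ε₁) + c₀ * w) • 1
            + (c₀*(1-δ) - (s+ε₁)*δ) • (u l : A⁺¹) := by
          calc V l * P * V l ≤ V l * ((s + ε₁) • 1 + c₀ • (e : A⁺¹)) * V l := conj
          _ = (s+ε₁) • (V l * V l) + c₀ • (V l * (e : A⁺¹) * V l) := hexp
          _ ≤ (s+ε₁) • (V l * V l) + c₀ • ((1-δ) • (u l : A⁺¹) + w • 1) :=
              add_le_add_right h3 _
          _ = ((s+ε₁) + c₀ * w) • 1 + (c₀*(1-δ) - (s+ε₁)*δ) • (u l : A⁺¹) := by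
              rw [hVV l]
              module
        have hpos_VPV : 0 ≤ V l * P * V l := by
          have := star_left_conjugate_nonneg hP0 (V l)
          rwa [hVsa l] at this
        rcases le_or_gt (c₀*(1-δ) - (s+ε₁)*δ) 0 with hβ | hβ
        · have hfinal : V l * P * V l ≤ ((s+ε₁) + c₀ * w) • 1 := by
            refine le_trans hchain ?_
            have : (c₀*(1-δ) - (s+ε₁)*δ) • (u l : A⁺¹) ≤ 0 :=
              smul_nonpos_of_nonpos_of_nonneg hβ (hU0 l)
            calc ((s+ε₁) + c₀ * w) • (1:A⁺¹) + (c₀*(1-δ) - (s+ε₁)*δ) • (u l : A⁺¹)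
                ≤ ((s+ε₁) + c₀ * w) • 1 + 0 := add_le_add_right this _
            _ = ((s+ε₁) + c₀ * w) • 1 := add_zero _
          have hr0 : 0 ≤ (s+ε₁) + c₀ * w := by positivity
          have := (CStarAlgebra.norm_le_iff_le_algebraMap (V l * P * V l) hr0 hpos_VPV).mpr
            (by rwa [Algebra.algebraMap_eq_smul_one])
          refine le_trans this ?_
          have : s + ε₁ ≤ max (s+ε₁) ((1-δ) * ‖a‖^2) := le_max_left _ _
          rw [hwdef]; nlinarith [mul_nonneg hc₀.le hw0]
        · have hfinal : V l * P * V l ≤ (((s+ε₁) + c₀ * w) + (c₀*(1-δ) - (s+ε₁)*δ)) • 1 := by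
            refine le_trans hchain ?_
            have hU1' : (c₀*(1-δ) - (s+ε₁)*δ) • (u l : A⁺¹)
                ≤ (c₀*(1-δ) - (s+ε₁)*δ) • (1:A⁺¹) :=
              smul_le_smul_of_nonneg_left (hle1 l) hβ.le
            calc ((s+ε₁) + c₀ * w) • (1:A⁺¹) + (c₀*(1-δ) - (s+ε₁)*δ) • (u l : A⁺¹)
                ≤ ((s+ε₁) + c₀ * w) • 1 + (c₀*(1-δ) - (s+ε₁)*δ) • 1 := add_le_add_right hU1' _
            _ = (((s+ε₁) + c₀ * w) + (c₀*(1-δ) - (s+ε₁)*δ)) • 1 := by rw [← add_smul]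
          have hr0 : 0 ≤ ((s+ε₁) + c₀ * w) + (c₀*(1-δ) - (s+ε₁)*δ) := by
            have h1 : 0 ≤ c₀ * w := mul_nonneg hc₀.le hw0
            nlinarith
          have := (CStarAlgebra.norm_le_iff_le_algebraMap (V l * P * V l) hr0 hpos_VPV).mpr
            (by rwa [Algebra.algebraMap_eq_smul_one])
          refine le_trans this ?_
          have heq : (s+ε₁) + (c₀*(1-δ) - (s+ε₁)*δ) = (1-δ) * ‖a‖^2 := by
            rw [hc₀def]; ring
          have : (1-δ) * ‖a‖^2 ≤ max (s+ε₁) ((1-δ) * ‖a‖^2) := le_max_right _ _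
          nlinarith [mul_nonneg hc₀.le hw0]
      -- choose n and conclude
      obtain ⟨n, hn⟩ := exists_nat_gt (c₀ / ε₁)
      have hn1 : c₀ * ((1:ℝ)/(2*n+1)) ≤ ε₁ := by
        have hnpos : (0:ℝ) < 2*(n:ℝ)+1 := by positivity
        rw [mul_one_div, div_le_iff₀ hnpos]
        have : c₀ < (n:ℝ) * ε₁ + ε₁ := by
          have := (div_lt_iff₀ hε₁).mp hn
          nlinarith
        nlinarith [hε₁.le, Nat.cast_nonneg (α := ℝ) n]
      have hev : ∀ᶠ l in atTop, t1 l < ε₁ / (c₀ * n + 1) := by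
        apply ht1tendsto.eventually_lt_const
        positivity
      filter_upwards [hev] with l hl
      refine sqrt_step l ?_
      have h2 : c₀ * ((n:ℝ) * t1 l) ≤ ε₁ := by
        have hd : (0:ℝ) < c₀ * (n:ℝ) + 1 := by positivity
        have h5 : t1 l * (c₀ * (n:ℝ) + 1) < ε₁ := (lt_div_iff₀ hd).mp hl
        have h6 : c₀ * ((n:ℝ) * t1 l) ≤ (c₀ * (n:ℝ) + 1) * t1 l := by
          have h7 : c₀ * ((n:ℝ) * t1 l) = (c₀ * (n:ℝ)) * t1 l := by ring
          rw [h7]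
          exact mul_le_mul_of_nonneg_right (by linarith only []) (ht1nn l)
        linarith only [h5, h6]
      have := hVPV n l
      have hfin : max (s+ε₁) ((1-δ) * ‖a‖^2) + (c₀ * ((1:ℝ)/(2*n+1)) + c₀ * ((n:ℝ) * t1 l))
          ≤ T^2 + η^2 := by
        have h3 : ε₁ + ε₁ + ε₁ = η^2 := by rw [hε₁def]; ring
        calc max (s+ε₁) ((1-δ) * ‖a‖^2) + (c₀ * ((1:ℝ)/(2*n+1)) + c₀ * ((n:ℝ) * t1 l))
            ≤ (T^2 + ε₁) + (ε₁ + ε₁) := add_le_add hmax_le (add_le_add hn1 h2)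
        _ = T^2 + η^2 := by rw [← h3]; ring
      exact le_trans this hfin
  -- conclude
  refine le_of_forall_pos_le_add fun η hη => ?_
  exact limsup_le_of_le
    (isCoboundedUnder_le_of_eventually_le atTop
      (Eventually.of_forall (fun l => norm_nonneg ((a : A⁺¹) * V l))))
    (key η hη)
end

section
/- Let φ : A → B be a surjective *-homomorphism of C*-algebras and let C > 0. For all b, c ∈ B with 0 ≤ b ≤ 1, 0 ≤ c ≤ 1, and ‖b·(c² − c)‖ ≤ C, there exist h, p ∈ A with φ(h) = b, φ(p) = c, 0 ≤ h ≤ 1, 0 ≤ p ≤ 1, and ‖h·(p² − p)‖ ≤ C. -/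
open scoped CStarAlgebra

/-! ### Auxiliary real-valued functions for the functional calculus -/

/-- The damping auxiliary function `ũ`: it vanishes on `[0, C²]` and equals
`(1 - C/√t)/t` for `t > C²`. -/
private noncomputable def uTilde (C : ℝ) : ℝ → ℝ :=
  fun t => (1 - min 1 (C / Real.sqrt (max t (C ^ 2)))) / (max t (C ^ 2))

private lemma uTilde_max_pos {C : ℝ} (hC : 0 < C) (t : ℝ) : 0 < max t (C ^ 2) :=
  lt_max_of_lt_right (by positivity)

private lemma uTilde_sqrt_pos {C : ℝ} (hC : 0 < C) (t : ℝ) :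
    0 < Real.sqrt (max t (C ^ 2)) :=
  Real.sqrt_pos.mpr (uTilde_max_pos hC t)

private lemma uTilde_continuous {C : ℝ} (hC : 0 < C) : Continuous (uTilde C) := by
  apply Continuous.div
  · exact continuous_const.sub (continuous_const.min
      (continuous_const.div
        (Real.continuous_sqrt.comp (continuous_id.max continuous_const))
        (fun t => (uTilde_sqrt_pos hC t).ne')))
  · exact continuous_id.max continuous_const
  · exact fun t => (uTilde_max_pos hC t).ne'

private lemma uTilde_eq_zero {C : ℝ} (hC : 0 < C) {t : ℝ} (ht : t ≤ C ^ 2) :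
    uTilde C t = 0 := by
  unfold uTilde
  rw [max_eq_right ht, Real.sqrt_sq hC.le, div_self hC.ne', min_self]
  simp

private lemma uTilde_zero {C : ℝ} (hC : 0 < C) : uTilde C 0 = 0 :=
  uTilde_eq_zero hC (by positivity)

/-- The damping function `u t = ũ t * t`. -/
private noncomputable def uFun (C : ℝ) : ℝ → ℝ := fun t => uTilde C t * t

private lemma uFun_continuous {C : ℝ} (hC : 0 < C) : Continuous (uFun C) :=
  (uTilde_continuous hC).mul continuous_id

private lemma uFun_zero (C : ℝ) : uFun C 0 = 0 := by
  simp [uFun]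

private lemma uFun_eq_of_gt {C : ℝ} (hC : 0 < C) {t : ℝ} (ht : C ^ 2 < t) :
    uFun C t = 1 - C / Real.sqrt t := by
  have ht0 : (0 : ℝ) < t := lt_of_le_of_lt (by positivity) ht
  have hsqt : C < Real.sqrt t := by
    have h1 := Real.sqrt_lt_sqrt (by positivity) ht
    rwa [Real.sqrt_sq hC.le] at h1
  have hsq0 : (0 : ℝ) < Real.sqrt t := hC.trans hsqt
  unfold uFun uTilde
  rw [max_eq_left ht.le, min_eq_right ((div_lt_one hsq0).mpr hsqt).le,
    div_mul_cancel₀ _ ht0.ne']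

/-- The key pointwise identity: `t(1-u t)² = min t C²`, written additively. -/
private lemma uFun_key {C : ℝ} (hC : 0 < C) {t : ℝ} (ht : 0 ≤ t) :
    t - t * uFun C t - uFun C t * t + uFun C t * t * uFun C t = min t (C ^ 2) := by
  rcases le_or_gt t (C ^ 2) with h | h
  · have hu : uFun C t = 0 := by
      unfold uFun; rw [uTilde_eq_zero hC h, zero_mul]
    rw [hu, min_eq_left h]; ring
  · have hu := uFun_eq_of_gt hC h
    have ht0 : (0 : ℝ) < t := lt_of_le_of_lt (by positivity) h
    have key : t - t * uFun C t - uFun C t * t + uFun C t * t * uFun C t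
        = t * (C / Real.sqrt t) ^ 2 := by
      rw [hu]; ring
    rw [key, min_eq_right h.le, div_pow, Real.sq_sqrt ht, mul_comm,
      div_mul_cancel₀ _ ht0.ne']

section Aux

variable {A : Type} [NonUnitalCStarAlgebra A] [PartialOrder A] [StarOrderedRing A]

/-- Quasispectrum of a positive element with norm bound lies in `[0, r]`. -/
private lemma aux_qspec_subset (x : A) (r : ℝ) (h0 : 0 ≤ x) (hr : ‖x‖ ≤ r) :
    quasispectrum ℝ x ⊆ Set.Icc 0 r := by
  intro t ht
  refine ⟨quasispectrum_nonneg_of_nonneg x h0 t ht, ?_⟩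
  rw [Unitization.quasispectrum_eq_spectrum_inr' ℝ ℂ] at ht
  have h1 := spectrum.norm_le_norm_of_mem ht
  rw [Unitization.norm_inr] at h1
  calc t ≤ ‖t‖ := by rw [Real.norm_eq_abs]; exact le_abs_self t
    _ ≤ ‖x‖ := h1
    _ ≤ r := hr

/-- A positive contraction is `≤ 1` in the unitization. -/
private lemma aux_inr_le_one (x : A) (h0 : 0 ≤ x) (h1 : ‖x‖ ≤ 1) : (x : A⁺¹) ≤ 1 := by
  have h0' : (0 : A⁺¹) ≤ (x : A⁺¹) := Unitization.inr_nonneg_iff.mpr h0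
  rw [← CStarAlgebra.norm_le_one_iff_of_nonneg (x : A⁺¹) h0']
  rwa [Unitization.norm_inr]

/-- Conversely, `≤ 1` in the unitization gives the norm bound. -/
private lemma aux_norm_le_one (x : A) (h0 : 0 ≤ x) (h1 : (x : A⁺¹) ≤ 1) : ‖x‖ ≤ 1 := by
  have h0' : (0 : A⁺¹) ≤ (x : A⁺¹) := Unitization.inr_nonneg_iff.mpr h0
  rw [← Unitization.norm_inr (𝕜 := ℂ) x]
  exact (CStarAlgebra.norm_le_one_iff_of_nonneg (x : A⁺¹) h0').mpr h1

/-- Positive contractions lift to positive contractions along surjective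
star homomorphisms. -/
private lemma aux_lift {B : Type} [NonUnitalCStarAlgebra B] [PartialOrder B]
    [StarOrderedRing B] (φ : A →⋆ₙₐ[ℂ] B) (hφ : Function.Surjective φ)
    (c : B) (hc0 : 0 ≤ c) (hc1 : ‖c‖ ≤ 1) :
    ∃ p : A, φ p = c ∧ 0 ≤ p ∧ ‖p‖ ≤ 1 := by
  obtain ⟨a₀, ha₀⟩ := hφ c
  have hcsa : IsSelfAdjoint c := hc0.isSelfAdjoint
  obtain ⟨a, ha_def⟩ : ∃ a : A, a = (2 : ℂ)⁻¹ • (a₀ + star a₀) := ⟨_, rfl⟩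
  have hasa : IsSelfAdjoint a := by
    rw [ha_def, IsSelfAdjoint, star_smul, star_add, star_star,
      add_comm (star a₀) a₀]
    congr 1
    simp
  have hφa : φ a = c := by
    rw [ha_def, map_smul, map_add, map_star, ha₀, hcsa.star_eq, ← two_smul ℂ c,
      smul_smul]
    norm_num
  have hfc : Continuous (fun t : ℝ => min (max t 0) 1) :=
    (continuous_id.max continuous_const).min continuous_const
  have hf0 : (fun t : ℝ => min (max t 0) 1) 0 = 0 := by simp
  have hp0 : 0 ≤ cfcₙ (fun t : ℝ => min (max t 0) 1) a :=
    cfcₙ_nonneg fun t _ => le_min (le_max_right t 0) zero_le_one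
  have hp1 : ‖cfcₙ (fun t : ℝ => min (max t 0) 1) a‖ ≤ 1 := by
    refine norm_cfcₙ_le fun t _ => ?_
    rw [Real.norm_eq_abs, abs_of_nonneg (le_min (le_max_right t 0) zero_le_one)]
    exact min_le_right _ _
  refine ⟨cfcₙ (fun t : ℝ => min (max t 0) 1) a, ?_, hp0, hp1⟩
  have hφac : IsSelfAdjoint (φ a) := by rw [hφa]; exact hcsa
  rw [NonUnitalStarAlgHom.map_cfcₙ φ _ a hfc.continuousOn hf0 (map_continuous φ)
    hasa hφac, hφa]
  have hsub := aux_qspec_subset c 1 hc0 hc1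
  have hcongr : cfcₙ (fun t : ℝ => min (max t 0) 1) c = cfcₙ (id : ℝ → ℝ) c := by
    refine cfcₙ_congr fun t ht => ?_
    obtain ⟨h1, h2⟩ := hsub ht
    simp only [id_eq]
    rw [max_eq_left h1, min_eq_left h2]
  rw [hcongr, cfcₙ_id ℝ c hcsa]

end Aux

/-- Positive contractions `b, c` with `‖b (c² - c)‖ ≤ C` lift to positive
contractions with the same bound. -/
theorem lift_pos_almost_idempotent
    {A B : Type} [NonUnitalCStarAlgebra A] [PartialOrder A] [StarOrderedRing A]
    [NonUnitalCStarAlgebra B] [PartialOrder B] [StarOrderedRing B]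
    (φ : A →⋆ₙₐ[ℂ] B) (hφ : Function.Surjective φ)
    (C : ℝ) (hC : 0 < C)
    (b c : B)
    (hb1 : 0 ≤ b) (hb2 : (b : B⁺¹) ≤ 1)
    (hc1 : 0 ≤ c) (hc2 : (c : B⁺¹) ≤ 1)
    (hbc : ‖b * (c * c - c)‖ ≤ C) :
    ∃ h p : A, φ h = b ∧ φ p = c ∧
      0 ≤ h ∧ (h : A⁺¹) ≤ 1 ∧ 0 ≤ p ∧ (p : A⁺¹) ≤ 1 ∧
      ‖h * (p * p - p)‖ ≤ C := by
  have hbn : ‖b‖ ≤ 1 := aux_norm_le_one b hb1 hb2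
  have hcn : ‖c‖ ≤ 1 := aux_norm_le_one c hc1 hc2
  have hbsa : IsSelfAdjoint b := hb1.isSelfAdjoint
  have hcu : Continuous (uFun C) := uFun_continuous hC
  have hu0 : uFun C 0 = 0 := uFun_zero C
  -- lift `c` to a positive contraction `p` and `b` to a positive contraction `z`
  obtain ⟨p, hpφ, hp0, hp1⟩ := aux_lift φ hφ c hc1 hcn
  obtain ⟨z, hzφ, hz0, hz1⟩ := aux_lift φ hφ b hb1 hbn
  have hpsa : IsSelfAdjoint p := hp0.isSelfAdjoint
  have hzsa : IsSelfAdjoint z := hz0.isSelfAdjoint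
  -- the positive element `d = p - p²`
  obtain ⟨d, hd_def⟩ : ∃ d : A, d = p - p * p := ⟨_, rfl⟩
  have hpsub := aux_qspec_subset p 1 hp0 hp1
  have hdcfc : d = cfcₙ (fun t : ℝ => t - t * t) p := by
    have e2 : cfcₙ (fun t : ℝ => t * t) p
        = cfcₙ (fun t : ℝ => t) p * cfcₙ (fun t : ℝ => t) p :=
      cfcₙ_mul _ _ p continuousOn_id rfl continuousOn_id rfl
    have e : cfcₙ (fun t : ℝ => t - t * t) p
        = cfcₙ (fun t : ℝ => t) p - cfcₙ (fun t : ℝ => t * t) p :=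
      cfcₙ_sub _ _ p continuousOn_id rfl
        ((continuous_id.mul continuous_id).continuousOn) (by simp)
    rw [cfcₙ_id' ℝ p hpsa] at e e2
    rw [hd_def, e, ← e2]
  have hd0 : 0 ≤ d := by
    rw [hdcfc]
    refine cfcₙ_nonneg fun t ht => ?_
    obtain ⟨h1, h2⟩ := hpsub ht
    nlinarith
  have hdsa : IsSelfAdjoint d := hd0.isSelfAdjoint
  have hφd : φ d = c - c * c := by
    rw [hd_def, map_sub, map_mul, hpφ]
  -- the element `y = z * d`, with `φ y = b (c - c²)` of norm ≤ C
  obtain ⟨y, hy_def⟩ : ∃ y : A, y = z * d := ⟨_, rfl⟩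
  have hφy : φ y = b * (c - c * c) := by rw [hy_def, map_mul, hzφ, hφd]
  have hφy_norm : ‖φ y‖ ≤ C := by
    have e : φ y = -(b * (c * c - c)) := by rw [hφy, mul_sub, mul_sub, neg_sub]
    rw [e, norm_neg]
    exact hbc
  -- the positive element `K = y⋆ y`, with `‖φ K‖ ≤ C²`
  obtain ⟨K, hK_def⟩ : ∃ K : A, K = star y * y := ⟨_, rfl⟩
  have hK0 : 0 ≤ K := hK_def ▸ star_mul_self_nonneg y
  have hKsa : IsSelfAdjoint K := hK0.isSelfAdjoint
  have hφK0 : 0 ≤ φ K := by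
    rw [hK_def, map_mul, map_star]
    exact star_mul_self_nonneg (φ y)
  have hφKsa : IsSelfAdjoint (φ K) := hφK0.isSelfAdjoint
  have hφK_norm : ‖φ K‖ ≤ C ^ 2 := by
    rw [hK_def, map_mul, map_star, CStarRing.norm_star_mul_self]
    calc ‖φ y‖ * ‖φ y‖ ≤ C * C :=
          mul_le_mul hφy_norm hφy_norm (norm_nonneg _) hC.le
      _ = C ^ 2 := (sq C).symm
  have hφKsub := aux_qspec_subset (φ K) (C ^ 2) hφK0 hφK_norm
  -- the damping elements `G = ũ(K)` and `M = u(K) = G * K`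
  obtain ⟨G, hG_def⟩ : ∃ G : A, G = cfcₙ (uTilde C) K := ⟨_, rfl⟩
  obtain ⟨M, hM_def⟩ : ∃ M : A, M = cfcₙ (uFun C) K := ⟨_, rfl⟩
  have hMsa : IsSelfAdjoint M := by rw [hM_def]; exact cfcₙ_predicate _ K
  have hGK : G * K = M := by
    have e : cfcₙ (uFun C) K = cfcₙ (uTilde C) K * cfcₙ (fun t : ℝ => t) K :=
      cfcₙ_mul _ _ K (uTilde_continuous hC).continuousOn (uTilde_zero hC)
        continuousOn_id rfl
    rw [cfcₙ_id' ℝ K hKsa] at e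
    rw [hG_def, hM_def, e]
  have hφG : φ G = 0 := by
    rw [hG_def, NonUnitalStarAlgHom.map_cfcₙ φ (uTilde C) K
      (uTilde_continuous hC).continuousOn (uTilde_zero hC) (map_continuous φ)
      hKsa hφKsa]
    have e : cfcₙ (uTilde C) (φ K) = cfcₙ (fun _ : ℝ => (0 : ℝ)) (φ K) :=
      cfcₙ_congr fun t ht => uTilde_eq_zero hC (hφKsub ht).2
    rw [e, cfcₙ_const_zero]
  -- the element `S`, a lift of `b` with `S d = y - y M`
  obtain ⟨S, hS_def⟩ : ∃ S : A, S = z - z * d * G * d * z * z := ⟨_, rfl⟩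
  have hφS : φ S = b := by
    rw [hS_def, map_sub, map_mul, map_mul, map_mul, map_mul, hφG]
    simp [hzφ]
  have hSd : S * d = y - y * M := by
    rw [hS_def, sub_mul]
    congr 1
    · exact hy_def.symm
    · rw [← hGK, hK_def, hy_def, star_mul, hdsa.star_eq, hzsa.star_eq]
      simp only [mul_assoc]
  -- `H = S⋆ S` is a positive lift of `b²` with `d H d = min(·, C²)(K)`
  obtain ⟨H, hH_def⟩ : ∃ H : A, H = star S * S := ⟨_, rfl⟩
  have hH0 : 0 ≤ H := hH_def ▸ star_mul_self_nonneg S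
  have hHsa : IsSelfAdjoint H := hH0.isSelfAdjoint
  have hφH : φ H = b * b := by
    rw [hH_def, map_mul, map_star, hφS, hbsa.star_eq]
  have hQ2 : star (S * d) * (S * d) = K - K * M - M * K + M * K * M := by
    rw [hSd, star_sub, star_mul y M, hMsa.star_eq, hK_def]
    simp only [sub_mul, mul_sub, mul_assoc]
    abel
  have hKM : K * M = cfcₙ (fun t : ℝ => t * uFun C t) K := by
    have e : cfcₙ (fun t : ℝ => t * uFun C t) K
        = cfcₙ (fun t : ℝ => t) K * cfcₙ (uFun C) K :=
      cfcₙ_mul _ _ K continuousOn_id rfl hcu.continuousOn hu0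
    rw [cfcₙ_id' ℝ K hKsa] at e
    rw [hM_def, e]
  have hMK : M * K = cfcₙ (fun t : ℝ => uFun C t * t) K := by
    have e : cfcₙ (fun t : ℝ => uFun C t * t) K
        = cfcₙ (uFun C) K * cfcₙ (fun t : ℝ => t) K :=
      cfcₙ_mul _ _ K hcu.continuousOn hu0 continuousOn_id rfl
    rw [cfcₙ_id' ℝ K hKsa] at e
    rw [hM_def, e]
  have hMKM : M * K * M = cfcₙ (fun t : ℝ => uFun C t * t * uFun C t) K := by
    have e : cfcₙ (fun t : ℝ => uFun C t * t * uFun C t) K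
        = cfcₙ (fun t : ℝ => uFun C t * t) K * cfcₙ (uFun C) K :=
      cfcₙ_mul _ _ K ((hcu.mul continuous_id).continuousOn) (by simp [hu0])
        hcu.continuousOn hu0
    rw [← hMK, ← hM_def] at e
    exact e.symm
  have hQ3 : star (S * d) * (S * d)
      = cfcₙ (fun t : ℝ => t - t * uFun C t - uFun C t * t
          + uFun C t * t * uFun C t) K := by
    have e3 : cfcₙ (fun t : ℝ => t - t * uFun C t - uFun C t * t
          + uFun C t * t * uFun C t) K
        = cfcₙ (fun t : ℝ => t - t * uFun C t - uFun C t * t) K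
          + cfcₙ (fun t : ℝ => uFun C t * t * uFun C t) K :=
      cfcₙ_add _ _ K
        ((continuousOn_id.sub ((continuous_id.mul hcu).continuousOn)).sub
          ((hcu.mul continuous_id).continuousOn))
        (by simp [hu0])
        (((hcu.mul continuous_id).mul hcu).continuousOn)
        (by simp [hu0])
    have e1 : cfcₙ (fun t : ℝ => t - t * uFun C t - uFun C t * t) K
        = cfcₙ (fun t : ℝ => t - t * uFun C t) K
          - cfcₙ (fun t : ℝ => uFun C t * t) K :=
      cfcₙ_sub _ _ K
        (continuousOn_id.sub ((continuous_id.mul hcu).continuousOn))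
        (by simp [hu0])
        ((hcu.mul continuous_id).continuousOn)
        (by simp [hu0])
    have e2 : cfcₙ (fun t : ℝ => t - t * uFun C t) K
        = cfcₙ (fun t : ℝ => t) K - cfcₙ (fun t : ℝ => t * uFun C t) K :=
      cfcₙ_sub _ _ K continuousOn_id rfl
        ((continuous_id.mul hcu).continuousOn) (by simp [hu0])
    rw [cfcₙ_id' ℝ K hKsa] at e2
    rw [hQ2, e3, e1, e2, hMKM, hKM, hMK]
  have hQnorm : ‖star (S * d) * (S * d)‖ ≤ C ^ 2 := by
    rw [hQ3]
    refine norm_cfcₙ_le fun t ht => ?_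
    have ht0 : 0 ≤ t := quasispectrum_nonneg_of_nonneg K hK0 t ht
    rw [uFun_key hC ht0, Real.norm_eq_abs,
      abs_of_nonneg (le_min ht0 (by positivity))]
    exact min_le_right _ _
  have hQH : star (S * d) * (S * d) = star d * H * d := by
    rw [hH_def, star_mul S d]
    simp only [mul_assoc]
  -- clamp `H` to a positive contraction `H'` still lifting `b²`
  have hfmc : Continuous (fun t : ℝ => min t 1) := continuous_id.min continuous_const
  have hfm0 : (fun t : ℝ => min t 1) 0 = 0 := by simp
  obtain ⟨H', hH'_def⟩ : ∃ H' : A, H' = cfcₙ (fun t : ℝ => min t 1) H := ⟨_, rfl⟩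
  have hH'sa : IsSelfAdjoint H' := by rw [hH'_def]; exact cfcₙ_predicate _ H
  have hH'le : H' ≤ H := by
    have e : cfcₙ (fun t : ℝ => t - min t 1) H
        = cfcₙ (fun t : ℝ => t) H - cfcₙ (fun t : ℝ => min t 1) H :=
      cfcₙ_sub _ _ H continuousOn_id rfl hfmc.continuousOn hfm0
    rw [cfcₙ_id' ℝ H hHsa] at e
    have e2 : 0 ≤ cfcₙ (fun t : ℝ => t - min t 1) H :=
      cfcₙ_nonneg fun t _ => by simp [sub_nonneg, min_le_left]
    rw [e] at e2
    rw [hH'_def]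
    exact sub_nonneg.mp e2
  have hH'0 : 0 ≤ H' := by
    rw [hH'_def]
    exact cfcₙ_nonneg fun t ht =>
      le_min (quasispectrum_nonneg_of_nonneg H hH0 t ht) zero_le_one
  have hH'n : ‖H'‖ ≤ 1 := by
    rw [hH'_def]
    refine norm_cfcₙ_le fun t ht => ?_
    have ht0 : 0 ≤ t := quasispectrum_nonneg_of_nonneg H hH0 t ht
    rw [Real.norm_eq_abs, abs_of_nonneg (le_min ht0 zero_le_one)]
    exact min_le_right _ _
  have hbb0 : 0 ≤ b * b := by
    have e := star_mul_self_nonneg b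
    rwa [hbsa.star_eq] at e
  have hbbsa : IsSelfAdjoint (b * b) := hbb0.isSelfAdjoint
  have hbbn : ‖b * b‖ ≤ 1 := by
    calc ‖b * b‖ ≤ ‖b‖ * ‖b‖ := norm_mul_le b b
      _ ≤ 1 * 1 := mul_le_mul hbn hbn (norm_nonneg b) zero_le_one
      _ = 1 := one_mul 1
  have hφH' : φ H' = b * b := by
    have hφHsa : IsSelfAdjoint (φ H) := by rw [hφH]; exact hbbsa
    rw [hH'_def, NonUnitalStarAlgHom.map_cfcₙ φ _ H hfmc.continuousOn hfm0
      (map_continuous φ) hHsa hφHsa, hφH]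
    have hsub := aux_qspec_subset (b * b) 1 hbb0 hbbn
    have e : cfcₙ (fun t : ℝ => min t 1) (b * b) = cfcₙ (id : ℝ → ℝ) (b * b) := by
      refine cfcₙ_congr fun t ht => ?_
      obtain ⟨h1, h2⟩ := hsub ht
      simp only [id_eq]
      exact min_eq_left h2
    rw [e, cfcₙ_id ℝ (b * b) hbbsa]
  -- the final lift `h = √H'`
  obtain ⟨h, hh_def⟩ : ∃ h : A, h = cfcₙ Real.sqrt H' := ⟨_, rfl⟩
  have hh0 : 0 ≤ h := by
    rw [hh_def]
    exact cfcₙ_nonneg fun t _ => Real.sqrt_nonneg t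
  have hhsa : IsSelfAdjoint h := hh0.isSelfAdjoint
  have hH'sub := aux_qspec_subset H' 1 hH'0 hH'n
  have hhn : ‖h‖ ≤ 1 := by
    rw [hh_def]
    refine norm_cfcₙ_le fun t ht => ?_
    rw [Real.norm_eq_abs, abs_of_nonneg (Real.sqrt_nonneg t)]
    exact Real.sqrt_le_one.mpr (hH'sub ht).2
  have hhsq : h * h = H' := by
    have e : cfcₙ (fun t : ℝ => Real.sqrt t * Real.sqrt t) H'
        = cfcₙ Real.sqrt H' * cfcₙ Real.sqrt H' :=
      cfcₙ_mul _ _ H' Real.continuous_sqrt.continuousOn Real.sqrt_zero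
        Real.continuous_sqrt.continuousOn Real.sqrt_zero
    have e2 : cfcₙ (fun t : ℝ => Real.sqrt t * Real.sqrt t) H'
        = cfcₙ (id : ℝ → ℝ) H' := by
      refine cfcₙ_congr fun t ht => ?_
      have ht0 : 0 ≤ t := quasispectrum_nonneg_of_nonneg H' hH'0 t ht
      simp [Real.mul_self_sqrt ht0]
    rw [hh_def, ← e, e2, cfcₙ_id ℝ H' hH'sa]
  have hφh : φ h = b := by
    have hφH'sa : IsSelfAdjoint (φ H') := by rw [hφH']; exact hbbsa
    rw [hh_def, NonUnitalStarAlgHom.map_cfcₙ φ Real.sqrt H'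
      Real.continuous_sqrt.continuousOn Real.sqrt_zero (map_continuous φ)
      hH'sa hφH'sa, hφH']
    have hbb : b * b = cfcₙ (fun t : ℝ => t * t) b := by
      have e : cfcₙ (fun t : ℝ => t * t) b
          = cfcₙ (fun t : ℝ => t) b * cfcₙ (fun t : ℝ => t) b :=
        cfcₙ_mul _ _ b continuousOn_id rfl continuousOn_id rfl
      rw [cfcₙ_id' ℝ b hbsa] at e
      exact e.symm
    rw [hbb, ← cfcₙ_comp Real.sqrt (fun t : ℝ => t * t) b
      Real.continuous_sqrt.continuousOn Real.sqrt_zero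
      ((continuous_id.mul continuous_id).continuousOn) (by simp) hbsa]
    have e : cfcₙ (Real.sqrt ∘ fun t : ℝ => t * t) b = cfcₙ (id : ℝ → ℝ) b := by
      refine cfcₙ_congr fun t ht => ?_
      have ht0 : 0 ≤ t := quasispectrum_nonneg_of_nonneg b hb1 t ht
      simp [Function.comp, Real.sqrt_mul_self ht0]
    rw [e, cfcₙ_id ℝ b hbsa]
  -- the norm estimate `‖h d‖ ≤ C`
  have hconj : star d * H' * d ≤ star d * H * d := star_left_conjugate_le_conjugate hH'le d
  have hconj0 : 0 ≤ star d * H' * d := star_left_conjugate_nonneg hH'0 d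
  have hXnorm : ‖star d * H' * d‖ ≤ C ^ 2 := by
    calc ‖star d * H' * d‖ ≤ ‖star d * H * d‖ :=
          CStarAlgebra.norm_le_norm_of_nonneg_of_le hconj0 hconj
      _ = ‖star (S * d) * (S * d)‖ := by rw [hQH]
      _ ≤ C ^ 2 := hQnorm
  have hhd : star (h * d) * (h * d) = star d * H' * d := by
    rw [star_mul h d, hdsa.star_eq, hhsa.star_eq, ← hhsq]
    simp only [mul_assoc]
  have hhd_norm : ‖h * d‖ ≤ C := by
    have e : ‖h * d‖ * ‖h * d‖ ≤ C ^ 2 := by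
      rw [← CStarRing.norm_star_mul_self, hhd]
      exact hXnorm
    have e2 : ‖h * d‖ ^ 2 ≤ C ^ 2 := by rw [sq]; exact e
    exact (pow_le_pow_iff_left₀ (norm_nonneg _) hC.le two_ne_zero).mp e2
  refine ⟨h, p, hφh, hpφ, hh0, aux_inr_le_one h hh0 hhn, hp0,
    aux_inr_le_one p hp0 hp1, ?_⟩
  have e : h * (p * p - p) = -(h * d) := by
    rw [hd_def, mul_sub, mul_sub, neg_sub]
  rw [e, norm_neg]
  exact hhd_norm
end

section
/- Let ≼ be a tree order on {1, …, s} and let ε > 0. Let φ : A → B be a surjective *-homomorphism of C*-algebras, and let h_1, …, h_s ∈ A satisfy 0 ≤ h_i ≤ 1 for all i, ‖φ((h_i − 1) h_j (h_i − 1))‖ ≤ ε whenever j is a child of i, and ‖φ(h_i)·φ(h_j)‖ ≤ ε whenever i and j are siblings. Then there exist k_1, …, k_s ∈ A with 0 ≤ k_i ≤ h_i and φ(k_i) = φ(h_i) for all i, such that ‖(k_i − 1) k_j (k_i − 1)‖ ≤ ε whenever j is a child of i, and ‖k_i k_j‖ ≤ ε whenever i and j are siblings. -/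
open scoped CStarAlgebra NNReal

section sqlemma

set_option linter.unusedSectionVars false

variable {V : Type*} [CStarAlgebra V] [PartialOrder V] [StarOrderedRing V]

open scoped ENNReal in
lemma spectralRadius_le_of_diff (x y : V)
    (hd : spectrum ℂ x \ {0} ⊆ spectrum ℂ y \ {0}) :
    spectralRadius ℂ x ≤ spectralRadius ℂ y := by
  rw [spectralRadius, spectralRadius]
  refine iSup₂_le fun k hk => ?_
  by_cases hk0 : k = 0
  · simp [hk0]
  · exact le_iSup₂ (f := fun k (_ : k ∈ spectrum ℂ y) => (‖k‖₊ : ℝ≥0∞)) k (hd ⟨hk, hk0⟩).1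

lemma star_eq_of_nonneg {u : V} (hu : 0 ≤ u) : star u = u :=
  (IsSelfAdjoint.of_nonneg hu).star_eq

lemma mul_self_nonneg_of_nonneg {u : V} (hu : 0 ≤ u) : 0 ≤ u * u := by
  have := star_mul_self_nonneg u
  rwa [star_eq_of_nonneg hu] at this

lemma cstar_le_of_sq_le_sq {u c : V} (hu : 0 ≤ u) (hc : 0 ≤ c) (h : u * u ≤ c * c) : u ≤ c := by
  nontriviality V
  -- First prove `u ≤ c + δ • 1` for all `δ > 0`.
  have key : ∀ δ : ℝ, 0 < δ → u ≤ c + δ • 1 := by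
    intro δ hδ
    set e := c + δ • (1 : V) with he
    have h1pos : (0 : V) ≤ 1 := zero_le_one
    have hsm : (0:V) ≤ δ • (1 : V) := smul_nonneg hδ.le h1pos
    have he0 : 0 ≤ e := add_nonneg hc hsm
    have halgsm : algebraMap ℝ V δ = δ • (1 : V) := Algebra.algebraMap_eq_smul_one δ
    have heu : IsUnit e := by
      refine (fun (hu : IsUnit (algebraMap ℝ V δ)) (h0 : 0 ≤ algebraMap ℝ V δ) (hle : algebraMap ℝ V δ ≤ e) => CStarAlgebra.isUnit_of_le _ hle (hu.isStrictlyPositive h0)) ?_ ?_ ?_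
      · exact (IsUnit.mk0 δ hδ.ne').map (algebraMap ℝ V)
      · rw [halgsm]; exact hsm
      · rw [halgsm, he]; exact le_add_of_nonneg_left hc
    have hce : c ≤ e := le_add_of_nonneg_right hsm
    have hsq : u * u ≤ e * e := by
      refine h.trans ?_
      have expand : e * e = c * c + (δ • c + (δ • c + (δ*δ) • 1)) := by
        rw [he]
        simp only [mul_add, add_mul, smul_mul_assoc, mul_smul_comm, one_mul, mul_one, smul_smul]
        module
      rw [expand]
      refine le_add_of_nonneg_right ?_
      have h01 : (0:V) ≤ δ • c := smul_nonneg hδ.le hc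
      have h02 : (0:V) ≤ (δ*δ) • (1:V) := smul_nonneg (by positivity) h1pos
      exact add_nonneg h01 (add_nonneg h01 h02)
    obtain ⟨b, hb⟩ := id heu
    have hbe : (b : V) = e := hb
    have h0sp : (0 : ℝ≥0) ∉ spectrum ℝ≥0 e := by
      rw [← hbe]; exact b.zero_notMem_spectrum ℝ≥0
    set d := e ^ (-(1/2) : ℝ) with hd
    have hd0 : 0 ≤ d := CFC.rpow_nonneg
    have hdsa : star d = d := star_eq_of_nonneg hd0
    have hded : d * e * d = 1 := CFC.conjugate_rpow_neg_one_half e (heu.isStrictlyPositive he0)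
    have hdd : d * d = (↑b⁻¹ : V) := by
      rw [hd, ← CFC.rpow_add heu]
      norm_num
      rw [← hbe]
      exact CFC.rpow_neg_one_eq_inv b (hbe ▸ he0)
    have hddsa : star (d * d) = d * d := by rw [star_mul, hdsa]
    -- norm estimate on u * (d * d)
    have hnorm : ‖u * (d * d)‖ ≤ 1 := by
      have h1 : ‖u * (d*d)‖ * ‖u * (d*d)‖ = ‖star (u * (d*d)) * (u * (d*d))‖ :=
        (CStarRing.norm_star_mul_self).symm
      have h2 : star (u * (d*d)) * (u * (d*d)) = (d*d) * (u * u) * (d*d) := by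
        rw [star_mul, hddsa, star_eq_of_nonneg hu]
        simp only [mul_assoc]
      have h3 : (d*d) * (u * u) * (d*d) ≤ (d*d) * (e * e) * (d*d) := by
        have := star_left_conjugate_le_conjugate hsq (d * d)
        rwa [hddsa] at this
      have h4 : (d*d) * (e * e) * (d*d) = 1 := by
        rw [hdd, ← hbe]
        calc (↑b⁻¹ : V) * ((b:V) * (b:V)) * ↑b⁻¹
            = (↑b⁻¹ * (b:V)) * ((b:V) * ↑b⁻¹) := by simp only [mul_assoc]
          _ = 1 := by rw [Units.inv_mul, Units.mul_inv, one_mul]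
      have h5 : (0:V) ≤ (d*d) * (u * u) * (d*d) := by
        have := star_left_conjugate_nonneg (mul_self_nonneg_of_nonneg hu) (d*d)
        rwa [hddsa] at this
      have h6 : ‖(d*d) * (u * u) * (d*d)‖ ≤ 1 := by
        rw [CStarAlgebra.norm_le_one_iff_of_nonneg _ h5]
        exact h4 ▸ h3
      nlinarith [norm_nonneg (u * (d*d)), h1 ▸ h2 ▸ h6]
    -- spectral radius argument: v := d * u * d
    set v := d * u * d with hv
    have hv0 : (0:V) ≤ v := by
      have := star_left_conjugate_nonneg hu d
      rwa [hdsa] at this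
    have hvsa : IsSelfAdjoint v := .of_nonneg hv0
    have hrad : spectralRadius ℂ v ≤ spectralRadius ℂ (u * (d * d)) := by
      refine spectralRadius_le_of_diff _ _ ?_
      have e1 : v = d * (u * d) := by rw [hv, mul_assoc]
      have e2 : (u * d) * d = u * (d * d) := by rw [mul_assoc]
      rw [e1, ← e2]
      rw [spectrum.nonzero_mul_comm]
    have hvnorm : ‖v‖ ≤ 1 := by
      have hnn : (‖u * (d*d)‖₊ : ENNReal) ≤ 1 := by
        rw [show (1 : ENNReal) = ((1:ℝ≥0) : ENNReal) from rfl, ENNReal.coe_le_coe,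
          ← NNReal.coe_le_coe]
        simpa using hnorm
      have h7 : spectralRadius ℂ v ≤ 1 :=
        hrad.trans <| (spectrum.spectralRadius_le_nnnorm (𝕜 := ℂ) _).trans hnn
      have h8 : (‖v‖₊ : ENNReal) ≤ 1 := hvsa.spectralRadius_eq_nnnorm ▸ h7
      have h9 : ‖v‖₊ ≤ 1 := by exact_mod_cast h8
      exact_mod_cast h9
    have hvle1 : v ≤ 1 := (CStarAlgebra.norm_le_one_iff_of_nonneg v hv0).mp hvnorm
    -- conjugate back
    set w := e ^ ((1:ℝ)/2) with hw
    have hw0 : 0 ≤ w := CFC.rpow_nonneg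
    have hwsa : star w = w := star_eq_of_nonneg hw0
    have hwd : w * d = 1 := by
      rw [hw, hd, ← CFC.rpow_add heu]
      norm_num
      exact CFC.rpow_zero e he0
    have hdw : d * w = 1 := by
      rw [hd, hw, ← CFC.rpow_add heu]
      norm_num
      exact CFC.rpow_zero e he0
    have hww : w * w = e := by
      rw [hw, ← CFC.rpow_add heu]
      norm_num
      exact CFC.rpow_one e he0
    have hfinal : u ≤ e := by
      have hconj : w * v * w ≤ w * 1 * w := by
        have := star_left_conjugate_le_conjugate hvle1 w
        rwa [hwsa] at this
      have lhs : w * v * w = u := by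
        rw [hv]
        calc w * (d * u * d) * w = (w * d) * u * (d * w) := by simp only [mul_assoc]
          _ = u := by rw [hwd, hdw, one_mul, mul_one]
      have rhs : w * 1 * w = e := by rw [mul_one, hww]
      rwa [lhs, rhs] at hconj
    exact hfinal
  -- take the limit δ → 0⁺
  have hcl : IsClosed {z : V | u ≤ z} := isClosed_le continuous_const continuous_id
  have htend : Filter.Tendsto (fun δ : ℝ => c + δ • (1:V)) (nhdsWithin 0 (Set.Ioi 0)) (nhds c) := by
    have : Filter.Tendsto (fun δ : ℝ => c + δ • (1:V)) (nhds 0) (nhds (c + (0:ℝ) • (1:V))) :=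
      ((continuous_id.smul (continuous_const : Continuous fun _ : ℝ => (1:V))).tendsto 0).const_add c
    simpa using this.mono_left nhdsWithin_le_nhds
  have hmem : ∀ᶠ δ in nhdsWithin (0:ℝ) (Set.Ioi 0), u ≤ c + δ • (1:V) := by
    filter_upwards [self_mem_nhdsWithin] with δ hδ
    exact key δ hδ
  have : u ≤ c :=
    hcl.mem_of_tendsto htend hmem
  exact this

end sqlemma


open scoped CStarAlgebra NNReal

noncomputable def softCut (r : ℝ) : ℝ → ℝ := fun t => r / max t r

namespace softCut
variable {r : ℝ}
lemma continuous (hr : 0 < r) : Continuous (softCut r) :=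
  continuous_const.div (continuous_id.max continuous_const)
    (fun t => (lt_of_lt_of_le hr (le_max_right t r)).ne')
lemma nonneg (hr : 0 < r) (t : ℝ) : 0 ≤ softCut r t :=
  div_nonneg hr.le (le_of_lt (lt_of_lt_of_le hr (le_max_right t r)))
lemma le_one (hr : 0 < r) (t : ℝ) : softCut r t ≤ 1 :=
  div_le_one (lt_of_lt_of_le hr (le_max_right t r)) |>.mpr (le_max_right t r)
lemma eq_one (hr : 0 < r) {t : ℝ} (ht : t ≤ r) : softCut r t = 1 := by
  unfold softCut
  rw [max_eq_right ht, div_self hr.ne']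
lemma mul_id_le (hr : 0 < r) (t : ℝ) : t * softCut r t ≤ r := by
  have hmax : 0 < max t r := lt_of_lt_of_le hr (le_max_right t r)
  unfold softCut
  rw [mul_div_assoc', div_le_iff₀ hmax]
  calc t * r ≤ (max t r) * r := mul_le_mul_of_nonneg_right (le_max_left t r) hr.le
    _ = r * max t r := mul_comm _ _
lemma sqrt_continuous (hr : 0 < r) : Continuous (fun t => Real.sqrt (softCut r t)) := by
  have := softCut.continuous hr
  fun_prop
end softCut

section shrink

set_option linter.unusedSectionVars false
set_option maxHeartbeats 1000000

variable {V W : Type*} [CStarAlgebra V] [PartialOrder V] [StarOrderedRing V] [Nontrivial V]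
  [CStarAlgebra W] [PartialOrder W] [StarOrderedRing W] [Nontrivial W]

lemma star_eq_of_nonneg' {u : V} (hu : 0 ≤ u) : star u = u :=
  (IsSelfAdjoint.of_nonneg hu).star_eq

/-- Core computation: `‖b * cut(b* b) * b*‖ ≤ r`. -/
lemma norm_conj_cut_le {r : ℝ} (hr : 0 < r) (b : V) :
    ‖b * cfc (softCut r) (star b * b) * star b‖ ≤ r := by
  have hcont := softCut.continuous hr
  have hcont2 := softCut.sqrt_continuous hr
  have hy0 : 0 ≤ star b * b := star_mul_self_nonneg b
  have hysa : IsSelfAdjoint (star b * b) := .of_nonneg hy0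
  have hG20 : 0 ≤ cfc (fun t => Real.sqrt (softCut r t)) (star b * b) :=
    cfc_nonneg (fun t _ => Real.sqrt_nonneg _)
  have hG2sa : star (cfc (fun t => Real.sqrt (softCut r t)) (star b * b))
      = cfc (fun t => Real.sqrt (softCut r t)) (star b * b) := star_eq_of_nonneg' hG20
  have hG2sq : cfc (fun t => Real.sqrt (softCut r t)) (star b * b)
        * cfc (fun t => Real.sqrt (softCut r t)) (star b * b)
      = cfc (softCut r) (star b * b) := by
    rw [← cfc_mul _ _ (star b * b)]
    exact cfc_congr fun t _ => Real.mul_self_sqrt (softCut.nonneg hr t)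
  have e8 : cfc (fun t => Real.sqrt (softCut r t) * t * Real.sqrt (softCut r t)) (star b * b)
      = cfc (fun t => Real.sqrt (softCut r t)) (star b * b) * (star b * b)
        * cfc (fun t => Real.sqrt (softCut r t)) (star b * b) := by
    rw [cfc_mul _ _ (star b * b) (by fun_prop) (by fun_prop),
      cfc_mul _ _ (star b * b) (by fun_prop) (by fun_prop), cfc_id' ℝ (star b * b) hysa]
  have e9 : ‖cfc (fun t => Real.sqrt (softCut r t) * t * Real.sqrt (softCut r t))
      (star b * b)‖ ≤ r := by
    refine norm_cfc_le hr.le fun t ht => ?_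
    have ht0 : 0 ≤ t := spectrum_nonneg_of_nonneg hy0 ht
    have heq : Real.sqrt (softCut r t) * t * Real.sqrt (softCut r t) = t * softCut r t := by
      rw [mul_comm, ← mul_assoc, Real.mul_self_sqrt (softCut.nonneg hr t)]
      ring
    rw [heq, Real.norm_eq_abs,
      abs_of_nonneg (mul_nonneg ht0 (softCut.nonneg hr t))]
    exact softCut.mul_id_le hr t
  -- now assemble
  set G2 := cfc (fun t => Real.sqrt (softCut r t)) (star b * b) with hG2def
  calc ‖b * cfc (softCut r) (star b * b) * star b‖
      = ‖(b * G2) * star (b * G2)‖ := by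
        rw [star_mul, hG2sa, ← hG2sq]
        simp only [mul_assoc]
    _ = ‖b * G2‖ * ‖b * G2‖ := CStarRing.norm_self_mul_star
    _ = ‖star (b * G2) * (b * G2)‖ := (CStarRing.norm_star_mul_self).symm
    _ = ‖G2 * (star b * b) * G2‖ := by
        rw [star_mul, hG2sa]
        simp only [mul_assoc]
    _ ≤ r := by rw [← e8]; exact e9

/-- Variant: `‖(c * G2)‖ ≤ ‖c‖` control for survival estimates:
`‖c * cut(star b * b) * star c‖ ≤ ‖c‖^2`. -/
lemma norm_conj_cut_le' {r : ℝ} (hr : 0 < r) (b c : V) :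
    ‖c * cfc (softCut r) (star b * b) * star c‖ ≤ ‖c‖ * ‖c‖ := by
  have hcont := softCut.continuous hr
  have hcont2 := softCut.sqrt_continuous hr
  have hy0 : 0 ≤ star b * b := star_mul_self_nonneg b
  have hG20 : 0 ≤ cfc (fun t => Real.sqrt (softCut r t)) (star b * b) :=
    cfc_nonneg (fun t _ => Real.sqrt_nonneg _)
  have hG2sa : star (cfc (fun t => Real.sqrt (softCut r t)) (star b * b))
      = cfc (fun t => Real.sqrt (softCut r t)) (star b * b) := star_eq_of_nonneg' hG20
  have hG2sq : cfc (fun t => Real.sqrt (softCut r t)) (star b * b)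
        * cfc (fun t => Real.sqrt (softCut r t)) (star b * b)
      = cfc (softCut r) (star b * b) := by
    rw [← cfc_mul _ _ (star b * b)]
    exact cfc_congr fun t _ => Real.mul_self_sqrt (softCut.nonneg hr t)
  have hG2le : cfc (fun t => Real.sqrt (softCut r t)) (star b * b) ≤ 1 :=
    cfc_le_one _ _ fun t _ => Real.sqrt_le_one.mpr (softCut.le_one hr t)
  have hG2norm : ‖cfc (fun t => Real.sqrt (softCut r t)) (star b * b)‖ ≤ 1 :=
    (CStarAlgebra.norm_le_one_iff_of_nonneg _ hG20).mpr hG2le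
  set G2 := cfc (fun t => Real.sqrt (softCut r t)) (star b * b) with hG2def
  calc ‖c * cfc (softCut r) (star b * b) * star c‖
      = ‖(c * G2) * star (c * G2)‖ := by
        rw [star_mul, hG2sa, ← hG2sq]
        simp only [mul_assoc]
    _ = ‖c * G2‖ * ‖c * G2‖ := CStarRing.norm_self_mul_star
    _ ≤ (‖c‖ * ‖G2‖) * (‖c‖ * ‖G2‖) := by
        have := norm_mul_le c G2
        have h0 : (0:ℝ) ≤ ‖c * G2‖ := norm_nonneg _
        nlinarith [norm_nonneg c, norm_nonneg G2]
    _ ≤ ‖c‖ * ‖c‖ := by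
        have h1 : ‖c‖ * ‖G2‖ ≤ ‖c‖ * 1 := by
          exact mul_le_mul_of_nonneg_left hG2norm (norm_nonneg c)
        rw [mul_one] at h1
        nlinarith [norm_nonneg c, norm_nonneg G2, mul_nonneg (norm_nonneg c) (norm_nonneg G2)]

end shrink

section shrink2

set_option linter.unusedSectionVars false
set_option maxHeartbeats 1000000

variable {V W : Type*} [CStarAlgebra V] [PartialOrder V] [StarOrderedRing V] [Nontrivial V]
  [CStarAlgebra W] [PartialOrder W] [StarOrderedRing W] [Nontrivial W]

lemma starAlgHom_map_nonneg (ψ : V →⋆ₐ[ℂ] W) {x : V} (hx : 0 ≤ x) : 0 ≤ ψ x := by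
  have h1 : ψ x = ψ (CFC.sqrt x) * ψ (CFC.sqrt x) := by
    rw [← map_mul, CFC.sqrt_mul_sqrt_self x hx]
  have h2 : star (ψ (CFC.sqrt x)) = ψ (CFC.sqrt x) := by
    rw [← map_star, star_eq_of_nonneg' (CFC.sqrt_nonneg _)]
  calc (0:W) ≤ star (ψ (CFC.sqrt x)) * ψ (CFC.sqrt x) := star_mul_self_nonneg _
    _ = ψ x := by rw [h2, ← h1]

lemma cut_map_one (ψ : V →⋆ₐ[ℂ] W) {r : ℝ} (hr : 0 < r) (y : V) (hy : 0 ≤ y)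
    (hψy : ‖ψ y‖ ≤ r) : ψ (cfc (softCut r) y) = 1 := by
  have hcont := softCut.continuous hr
  have hysa : IsSelfAdjoint y := .of_nonneg hy
  have hψysa : IsSelfAdjoint (ψ y) := hysa.map ψ
  have hψy0 : 0 ≤ ψ y := starAlgHom_map_nonneg ψ hy
  have hmap : ψ (cfc (softCut r) y) = cfc (softCut r) (ψ y) :=
    StarAlgHomClass.map_cfc ψ _ y
  have hone : ∀ t ∈ spectrum ℝ (ψ y), softCut r t = (fun _ => (1:ℝ)) t := by
    intro t ht
    refine softCut.eq_one hr ?_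
    have h1 : t ≤ ‖t‖ := Real.le_norm_self t
    have h2 : ‖t‖ ≤ ‖ψ y‖ := spectrum.norm_le_norm_of_mem ht
    linarith
  rw [hmap, cfc_congr hone, cfc_const_one ℝ (ψ y)]

lemma norm_conj_mono {a x₁ x₂ : V} (ha : IsSelfAdjoint a) (h0 : 0 ≤ x₂) (h12 : x₂ ≤ x₁) :
    ‖a * x₂ * a‖ ≤ ‖a * x₁ * a‖ := by
  have hle : a * x₂ * a ≤ a * x₁ * a := by
    have := star_left_conjugate_le_conjugate h12 a
    rwa [ha.star_eq] at this
  have h02 : 0 ≤ a * x₂ * a := by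
    have := star_left_conjugate_nonneg h0 a
    rwa [ha.star_eq] at this
  exact CStarAlgebra.norm_le_norm_of_nonneg_of_le h02 hle


lemma sq_norm_mul_sqrt (u m : V) (hm : 0 ≤ m) :
    ‖u * CFC.sqrt m‖ * ‖u * CFC.sqrt m‖ = ‖u * m * star u‖ := by
  rw [← CStarRing.norm_self_mul_star]
  congr 1
  have hstar : star (u * CFC.sqrt m) = CFC.sqrt m * star u := by
    rw [star_mul, star_eq_of_nonneg' (CFC.sqrt_nonneg _)]
  rw [hstar]
  calc u * CFC.sqrt m * (CFC.sqrt m * star u)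
      = u * (CFC.sqrt m * CFC.sqrt m) * star u := by simp only [mul_assoc]
    _ = u * m * star u := by rw [CFC.sqrt_mul_sqrt_self m hm]

lemma conj_formula (t x G : V) (hxsa : star x = x) :
    t * (x * G * x) * star t = (t * x) * G * star (t * x) := by
  rw [star_mul, hxsa]
  simp only [mul_assoc]

variable (ψ : V →⋆ₐ[ℂ] W)

lemma shrinkC {ε : ℝ} (hε : 0 < ε) (x a : V) (hx : 0 ≤ x) (ha : IsSelfAdjoint a)
    (hn : ‖ψ (a * x * a)‖ ≤ ε) :
    ∃ x', 0 ≤ x' ∧ x' ≤ x ∧ ψ x' = ψ x ∧ ‖a * x' * a‖ ≤ ε := by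
  have hcont := softCut.continuous hε
  have hq0 : 0 ≤ CFC.sqrt x := CFC.sqrt_nonneg _
  have hqsa : star (CFC.sqrt x) = CFC.sqrt x := star_eq_of_nonneg' hq0
  have hqq : CFC.sqrt x * CFC.sqrt x = x := CFC.sqrt_mul_sqrt_self x hx
  have hbstar : star (a * CFC.sqrt x) = CFC.sqrt x * a := by rw [star_mul, hqsa, ha.star_eq]
  have hy0 : 0 ≤ star (a * CFC.sqrt x) * (a * CFC.sqrt x) := star_mul_self_nonneg _
  have hG0 : 0 ≤ cfc (softCut ε) (star (a * CFC.sqrt x) * (a * CFC.sqrt x)) :=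
    cfc_nonneg (fun t _ => softCut.nonneg hε t)
  have hG1 : cfc (softCut ε) (star (a * CFC.sqrt x) * (a * CFC.sqrt x)) ≤ 1 :=
    cfc_le_one _ _ (fun t _ => softCut.le_one hε t)
  -- the image of y is small
  have hψy : ‖ψ (star (a * CFC.sqrt x) * (a * CFC.sqrt x))‖ ≤ ε := by
    have e1 : ‖ψ (star (a * CFC.sqrt x) * (a * CFC.sqrt x))‖
        = ‖ψ (a * CFC.sqrt x)‖ * ‖ψ (a * CFC.sqrt x)‖ := by
      rw [map_mul, map_star, CStarRing.norm_star_mul_self]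
    have e2 : ‖ψ (a * CFC.sqrt x) * star (ψ (a * CFC.sqrt x))‖
        = ‖ψ (a * CFC.sqrt x)‖ * ‖ψ (a * CFC.sqrt x)‖ := CStarRing.norm_self_mul_star
    have e3 : ψ (a * CFC.sqrt x) * star (ψ (a * CFC.sqrt x)) = ψ (a * x * a) := by
      rw [← map_star, ← map_mul, hbstar]
      congr 1
      calc (a * CFC.sqrt x) * (CFC.sqrt x * a) = a * (CFC.sqrt x * CFC.sqrt x) * a := by
            simp only [mul_assoc]
        _ = a * x * a := by rw [hqq]
    rw [e1, ← e2, e3]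
    exact hn
  have hψG : ψ (cfc (softCut ε) (star (a * CFC.sqrt x) * (a * CFC.sqrt x))) = 1 :=
    cut_map_one ψ hε _ hy0 hψy
  refine ⟨CFC.sqrt x * cfc (softCut ε) (star (a * CFC.sqrt x) * (a * CFC.sqrt x)) * CFC.sqrt x,
    ?_, ?_, ?_, ?_⟩
  · have := star_left_conjugate_nonneg hG0 (CFC.sqrt x)
    rwa [hqsa] at this
  · have := star_left_conjugate_le_conjugate hG1 (CFC.sqrt x)
    rw [hqsa, mul_one, hqq] at this
    exact this
  · rw [map_mul, map_mul, hψG, mul_one, ← map_mul, hqq]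
  · have key : a * (CFC.sqrt x * cfc (softCut ε) (star (a * CFC.sqrt x) * (a * CFC.sqrt x))
        * CFC.sqrt x) * a
        = (a * CFC.sqrt x) * cfc (softCut ε) (star (a * CFC.sqrt x) * (a * CFC.sqrt x))
          * star (a * CFC.sqrt x) := by
      rw [hbstar]
      simp only [mul_assoc]
    rw [key]
    exact norm_conj_cut_le hε _

lemma shrinkS {ε : ℝ} (hε : 0 < ε) (x t : V) (hx : 0 ≤ x)
    (hn : ‖ψ (t * x)‖ ≤ ε) :
    ∃ x', 0 ≤ x' ∧ x' ≤ x ∧ ψ x' = ψ x ∧ ‖t * x'‖ ≤ ε ∧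
      ∀ u : V, ‖u * x‖ ≤ ε → ‖u * x'‖ ≤ ε := by
  have hε2 : 0 < ε ^ 2 := by positivity
  have hcont := softCut.continuous hε2
  have hxsa : star x = x := star_eq_of_nonneg' hx
  have hy0 : 0 ≤ star (t * x) * (t * x) := star_mul_self_nonneg _
  have hG0 : 0 ≤ cfc (softCut (ε^2)) (star (t * x) * (t * x)) :=
    cfc_nonneg (fun s _ => softCut.nonneg hε2 s)
  have hG1 : cfc (softCut (ε^2)) (star (t * x) * (t * x)) ≤ 1 :=
    cfc_le_one _ _ (fun s _ => softCut.le_one hε2 s)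
  have hψy : ‖ψ (star (t * x) * (t * x))‖ ≤ ε ^ 2 := by
    rw [map_mul, map_star, CStarRing.norm_star_mul_self]
    calc ‖ψ (t * x)‖ * ‖ψ (t * x)‖ ≤ ε * ε :=
          mul_le_mul hn hn (norm_nonneg _) hε.le
      _ = ε ^ 2 := by ring
  have hψG : ψ (cfc (softCut (ε^2)) (star (t * x) * (t * x))) = 1 :=
    cut_map_one ψ hε2 _ hy0 hψy
  -- m := x * G * x
  have hm0 : 0 ≤ x * cfc (softCut (ε^2)) (star (t * x) * (t * x)) * x := by
    have := star_left_conjugate_nonneg hG0 x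
    rwa [hxsa] at this
  have hmlesq : x * cfc (softCut (ε^2)) (star (t * x) * (t * x)) * x ≤ x * x := by
    have := star_left_conjugate_le_conjugate hG1 x
    rwa [hxsa, mul_one] at this
  have hx'0 : 0 ≤ CFC.sqrt (x * cfc (softCut (ε^2)) (star (t * x) * (t * x)) * x) :=
    CFC.sqrt_nonneg _
  have hx'sq : CFC.sqrt (x * cfc (softCut (ε^2)) (star (t * x) * (t * x)) * x)
      * CFC.sqrt (x * cfc (softCut (ε^2)) (star (t * x) * (t * x)) * x)
      = x * cfc (softCut (ε^2)) (star (t * x) * (t * x)) * x :=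
    CFC.sqrt_mul_sqrt_self _ hm0
  have hx'le : CFC.sqrt (x * cfc (softCut (ε^2)) (star (t * x) * (t * x)) * x) ≤ x := by
    refine cstar_le_of_sq_le_sq hx'0 hx ?_
    rw [hx'sq]
    exact hmlesq
  have hψx' : ψ (CFC.sqrt (x * cfc (softCut (ε^2)) (star (t * x) * (t * x)) * x)) = ψ x := by
    have hsq : ψ (CFC.sqrt (x * cfc (softCut (ε^2)) (star (t * x) * (t * x)) * x))
        * ψ (CFC.sqrt (x * cfc (softCut (ε^2)) (star (t * x) * (t * x)) * x)) = ψ x * ψ x := by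
      rw [← map_mul, hx'sq, map_mul, map_mul, hψG, mul_one, ← map_mul]
    have h0' : 0 ≤ ψ (CFC.sqrt (x * cfc (softCut (ε^2)) (star (t * x) * (t * x)) * x)) :=
      starAlgHom_map_nonneg ψ hx'0
    have h0x : 0 ≤ ψ x := starAlgHom_map_nonneg ψ hx
    have u1 : CFC.sqrt (ψ x * ψ x)
        = ψ (CFC.sqrt (x * cfc (softCut (ε^2)) (star (t * x) * (t * x)) * x)) :=
      CFC.sqrt_unique hsq h0'
    have u2 : CFC.sqrt (ψ x * ψ x) = ψ x := CFC.sqrt_mul_self (ψ x) h0x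
    rw [← u1, u2]
  refine ⟨CFC.sqrt (x * cfc (softCut (ε^2)) (star (t * x) * (t * x)) * x),
    hx'0, hx'le, hψx', ?_, ?_⟩
  · -- ‖t * x'‖ ≤ ε
    have e0 := sq_norm_mul_sqrt t (x * cfc (softCut (ε^2)) (star (t * x) * (t * x)) * x) hm0
    rw [conj_formula t x (cfc (softCut (ε^2)) (star (t * x) * (t * x))) hxsa] at e0
    have e2 : ‖(t * x) * cfc (softCut (ε^2)) (star (t * x) * (t * x)) * star (t * x)‖ ≤ ε^2 :=
      norm_conj_cut_le hε2 _
    rw [← e0] at e2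
    nlinarith [norm_nonneg (t * CFC.sqrt (x * cfc (softCut (ε^2)) (star (t * x) * (t * x)) * x))]
  · -- survival
    intro u hu
    have e0 := sq_norm_mul_sqrt u (x * cfc (softCut (ε^2)) (star (t * x) * (t * x)) * x) hm0
    rw [conj_formula u x (cfc (softCut (ε^2)) (star (t * x) * (t * x))) hxsa] at e0
    have e2 : ‖(u * x) * cfc (softCut (ε^2)) (star (t * x) * (t * x)) * star (u * x)‖
        ≤ ‖u * x‖ * ‖u * x‖ := norm_conj_cut_le' hε2 _ _
    rw [← e0] at e2
    nlinarith [norm_nonneg (u * CFC.sqrt (x * cfc (softCut (ε^2)) (star (t * x) * (t * x)) * x)),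
      norm_nonneg (u * x)]

end shrink2
section iter

set_option linter.unusedSectionVars false
set_option maxHeartbeats 1000000

variable {V W : Type*} [CStarAlgebra V] [PartialOrder V] [StarOrderedRing V] [Nontrivial V]
  [CStarAlgebra W] [PartialOrder W] [StarOrderedRing W] [Nontrivial W]
  (ψ : V →⋆ₐ[ℂ] W)

lemma iterC {ι : Type*} {ε : ℝ} (hε : 0 < ε) (F : Finset ι) (a : ι → V) (x : V) (hx : 0 ≤ x)
    (ha : ∀ i ∈ F, IsSelfAdjoint (a i)) (hn : ∀ i ∈ F, ‖ψ (a i * x * a i)‖ ≤ ε) :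
    ∃ x', 0 ≤ x' ∧ x' ≤ x ∧ ψ x' = ψ x ∧ ∀ i ∈ F, ‖a i * x' * a i‖ ≤ ε := by
  classical
  revert ha hn
  refine Finset.induction_on F ?_ ?_
  · intro _ _
    exact ⟨x, hx, le_rfl, rfl, by simp⟩
  · intro i₀ F' hni IH ha hn
    obtain ⟨x₁, h10, h1le, h1ψ, h1n⟩ := IH (fun i hi => ha i (Finset.mem_insert_of_mem hi))
      (fun i hi => hn i (Finset.mem_insert_of_mem hi))
    have hai₀ : IsSelfAdjoint (a i₀) := ha i₀ (Finset.mem_insert_self _ _)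
    have hn' : ‖ψ (a i₀ * x₁ * a i₀)‖ ≤ ε := by
      have : ψ (a i₀ * x₁ * a i₀) = ψ (a i₀ * x * a i₀) := by
        rw [map_mul, map_mul, h1ψ, ← map_mul, ← map_mul]
      rw [this]
      exact hn i₀ (Finset.mem_insert_self _ _)
    obtain ⟨x₂, h20, h2le, h2ψ, h2n⟩ := shrinkC ψ hε x₁ (a i₀) h10 hai₀ hn'
    refine ⟨x₂, h20, h2le.trans h1le, h2ψ.trans h1ψ, ?_⟩
    intro i hi
    rcases Finset.mem_insert.mp hi with rfl | hi'
    · exact h2n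
    · exact (norm_conj_mono (ha i hi) h20 h2le).trans (h1n i hi')

lemma iterS {ι : Type*} {ε : ℝ} (hε : 0 < ε) (F : Finset ι) (t : ι → V) (x : V) (hx : 0 ≤ x)
    (hn : ∀ i ∈ F, ‖ψ (t i * x)‖ ≤ ε) :
    ∃ x', 0 ≤ x' ∧ x' ≤ x ∧ ψ x' = ψ x ∧ (∀ u : V, ‖u * x‖ ≤ ε → ‖u * x'‖ ≤ ε) ∧
      ∀ i ∈ F, ‖t i * x'‖ ≤ ε := by
  classical
  revert hn
  refine Finset.induction_on F ?_ ?_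
  · intro _
    exact ⟨x, hx, le_rfl, rfl, fun u hu => hu, by simp⟩
  · intro i₀ F' hni IH hn
    obtain ⟨x₁, h10, h1le, h1ψ, h1surv, h1n⟩ := IH (fun i hi => hn i (Finset.mem_insert_of_mem hi))
    have hn' : ‖ψ (t i₀ * x₁)‖ ≤ ε := by
      have : ψ (t i₀ * x₁) = ψ (t i₀ * x) := by rw [map_mul, h1ψ, ← map_mul]
      rw [this]
      exact hn i₀ (Finset.mem_insert_self _ _)
    obtain ⟨x₂, h20, h2le, h2ψ, h2new, h2surv⟩ := shrinkS ψ hε x₁ (t i₀) h10 hn'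
    refine ⟨x₂, h20, h2le.trans h1le, h2ψ.trans h1ψ, ?_, ?_⟩
    · intro u hu
      exact h2surv u (h1surv u hu)
    · intro i hi
      rcases Finset.mem_insert.mp hi with rfl | hi'
      · exact h2new
      · exact h2surv (t i) (h1n i hi')

end iter
section unitizationHelpers

open scoped CStarAlgebra ComplexOrder

variable {A : Type} [NonUnitalCStarAlgebra A] [PartialOrder A] [StarOrderedRing A]

lemma unitization_fst_nonneg {x : A⁺¹} (hx : 0 ≤ x) : 0 ≤ x.fst := by
  have hmem : x.fst ∈ spectrum ℂ x := AlgHom.apply_mem_spectrum (Unitization.fstHom ℂ A) x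
  exact spectrum_nonneg_of_nonneg hx hmem

lemma unitization_fst_eq_zero_of_le {x y : A⁺¹} (hx : 0 ≤ x) (hxy : x ≤ y)
    (hy : y.fst = 0) : x.fst = 0 := by
  have h1 : 0 ≤ x.fst := unitization_fst_nonneg hx
  have h2 : (0:ℂ) ≤ (y - x).fst := unitization_fst_nonneg (sub_nonneg.mpr hxy)
  have h3 : (y - x).fst = y.fst - x.fst := by
    simp [sub_eq_add_neg, Unitization.fst_add, Unitization.fst_neg]
  rw [h3, hy, zero_sub] at h2
  exact le_antisymm (neg_nonneg.mp h2) h1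

lemma unitization_inr_snd_of_fst_eq_zero {x : A⁺¹} (hx : x.fst = 0) :
    ((x.snd : A) : A⁺¹) = x := by
  have h := Unitization.inl_fst_add_inr_snd_eq x
  rw [hx] at h
  simpa using h

end unitizationHelpers


open scoped CStarAlgebra

/-- The strict order associated to a reflexive relation `le`. -/
def TreeOrder.lt {s : ℕ} (le : Fin s → Fin s → Prop) (i j : Fin s) : Prop :=
  le i j ∧ i ≠ j

/-- `le` is a tree order: a partial order in which the strict predecessors of any element
are linearly ordered. -/
structure IsTreeOrder {s : ℕ} (le : Fin s → Fin s → Prop) : Prop where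
  refl : ∀ i, le i i
  antisymm : ∀ i j, le i j → le j i → i = j
  trans : ∀ i j k, le i j → le j k → le i k
  pred_linear : ∀ i i' j, TreeOrder.lt le i j → TreeOrder.lt le i' j → (le i i' ∨ le i' i)

/-- `j` is a child of `i`: `i ≺ j` and there is no `k` with `i ≺ k ≺ j`. -/
def TreeOrder.IsChildOf {s : ℕ} (le : Fin s → Fin s → Prop) (j i : Fin s) : Prop :=
  TreeOrder.lt le i j ∧ ∀ k, TreeOrder.lt le i k → TreeOrder.lt le k j → False

/-- `i` and `j` are siblings: they are distinct and have the same strict predecessors. -/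
def TreeOrder.AreSiblings {s : ℕ} (le : Fin s → Fin s → Prop) (i j : Fin s) : Prop :=
  i ≠ j ∧ ∀ k, TreeOrder.lt le k i ↔ TreeOrder.lt le k j


lemma TreeOrder.AreSiblings.symm {s : ℕ} {le : Fin s → Fin s → Prop} {i j : Fin s}
    (h : TreeOrder.AreSiblings le i j) : TreeOrder.AreSiblings le j i :=
  ⟨h.1.symm, fun k => (h.2 k).symm⟩

/-- Soft tree relations lift: given positive contractions `h i` whose
images satisfy the softened tree relations, there are `k i` with `0 ≤ k i ≤ h i`,
`φ (k i) = φ (h i)`, satisfying the same softened tree relations. -/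
theorem lift_soft_tree_relations
    {s : ℕ} (le : Fin s → Fin s → Prop) (htree : IsTreeOrder le)
    (ε : ℝ) (hε : 0 < ε)
    {A B : Type} [NonUnitalCStarAlgebra A] [PartialOrder A] [StarOrderedRing A]
    [NonUnitalCStarAlgebra B] [PartialOrder B] [StarOrderedRing B]
    (φ : A →⋆ₙₐ[ℂ] B) (hφ : Function.Surjective φ)
    (h : Fin s → A)
    (hpos : ∀ i, 0 ≤ h i) (hle1 : ∀ i, (h i : A⁺¹) ≤ 1)
    (hchild : ∀ i j, TreeOrder.IsChildOf le j i →
      ‖Unitization.starMap φ (((h i : A⁺¹) - 1) * (h j : A⁺¹) * ((h i : A⁺¹) - 1))‖ ≤ ε)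
    (hsib : ∀ i j, TreeOrder.AreSiblings le i j → ‖φ (h i) * φ (h j)‖ ≤ ε) :
    ∃ k : Fin s → A,
      (∀ i, 0 ≤ k i) ∧ (∀ i, k i ≤ h i) ∧ (∀ i, φ (k i) = φ (h i)) ∧
      (∀ i j, TreeOrder.IsChildOf le j i →
        ‖((k i : A⁺¹) - 1) * (k j : A⁺¹) * ((k i : A⁺¹) - 1)‖ ≤ ε) ∧
      (∀ i j, TreeOrder.AreSiblings le i j → ‖k i * k j‖ ≤ ε) := by
  
  classical
  set ψ : A⁺¹ →⋆ₐ[ℂ] B⁺¹ := Unitization.starMap φ with hψdef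
  -- the priority function κ
  set d : Fin s → ℕ := fun j => (Finset.univ.filter (fun i => TreeOrder.lt le i j)).card with hddef
  set κ : Fin s → ℕ := fun j => (s+1) * d j + j.val with hκdef
  have hd : ∀ i j, TreeOrder.lt le i j → d i < d j := by
    intro i j hij
    refine Finset.card_lt_card ?_
    rw [Finset.ssubset_def]
    constructor
    · intro k hk
      rw [Finset.mem_filter] at hk ⊢
      refine ⟨Finset.mem_univ _, htree.trans k i j hk.2.1 hij.1, ?_⟩
      rintro rfl
      exact hij.2 (htree.antisymm i k hij.1 hk.2.1)
    · intro hsub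
      have : i ∈ Finset.univ.filter (fun k => TreeOrder.lt le k i) :=
        hsub (by rw [Finset.mem_filter]; exact ⟨Finset.mem_univ _, hij⟩)
      rw [Finset.mem_filter] at this
      exact this.2.2 rfl
  have hκ : ∀ i j, TreeOrder.lt le i j → κ i < κ j := by
    intro i j hij
    have h1 : d i < d j := hd i j hij
    have h2 : i.val < s + 1 := Nat.lt_succ_of_lt i.isLt
    calc κ i = (s+1) * d i + i.val := rfl
      _ < (s+1) * d i + (s+1) := by omega
      _ = (s+1) * (d i + 1) := by ring
      _ ≤ (s+1) * d j := Nat.mul_le_mul_left _ h1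
      _ ≤ (s+1) * d j + j.val := Nat.le_add_right _ _
  -- the induction
  have main : ∀ n, n ≤ s → ∃ (S : Finset (Fin s)) (K : Fin s → A⁺¹),
      S.card = n ∧
      (∀ j ∈ S, ∀ i, κ i < κ j → i ∈ S) ∧
      (∀ i, 0 ≤ K i) ∧ (∀ i, K i ≤ (h i : A⁺¹)) ∧
      (∀ i, ψ (K i) = ψ ((h i : A⁺¹))) ∧
      (∀ i, (K i).fst = 0) ∧
      (∀ i j, j ∈ S → TreeOrder.IsChildOf le j i →
        ‖(K i - 1) * K j * (K i - 1)‖ ≤ ε) ∧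
      (∀ i j, i ∈ S → j ∈ S → TreeOrder.AreSiblings le i j → ‖K i * K j‖ ≤ ε) := by
    intro n
    induction n with
    | zero =>
      intro _
      refine ⟨∅, fun i => ((h i : A⁺¹)), Finset.card_empty, ?_, ?_, ?_, ?_, ?_, ?_, ?_⟩
      · intro j hj; exact absurd hj (Finset.notMem_empty j)
      · intro i; exact Unitization.inr_nonneg_iff.mpr (hpos i)
      · intro i; exact le_rfl
      · intro i; rfl
      · intro i; exact Unitization.fst_inr ℂ (h i)
      · intro i j hj; exact absurd hj (Finset.notMem_empty j)
      · intro i j hi; exact absurd hi (Finset.notMem_empty i)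
    | succ n IH =>
      intro hns
      obtain ⟨S, K, hcard, hlow, hK0, hKh, hKψ, hKfst, hCrel, hSrel⟩ := IH (Nat.le_of_succ_le hns)
      -- pick the minimal unprocessed node
      have hSne : (Finset.univ \ S).Nonempty := by
        rw [← Finset.card_pos, Finset.card_sdiff_of_subset (Finset.subset_univ S), hcard,
          Finset.card_univ, Fintype.card_fin]
        omega
      obtain ⟨j, hjmem, hjmin⟩ := Finset.exists_min_image (Finset.univ \ S) κ hSne
      have hjS : j ∉ S := (Finset.mem_sdiff.mp hjmem).2
      have hjminS : ∀ i, κ i < κ j → i ∈ S := by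
        intro i hi
        by_contra hiS
        have : j ∈ Finset.univ \ S := hjmem
        have h2 : κ j ≤ κ i := hjmin i (Finset.mem_sdiff.mpr ⟨Finset.mem_univ _, hiS⟩)
        omega
      -- C stage
      set Fc : Finset (Fin s) := Finset.univ.filter (fun i => TreeOrder.IsChildOf le j i)
        with hFcdef
      have hFcS : ∀ i ∈ Fc, i ∈ S := by
        intro i hi
        rw [hFcdef, Finset.mem_filter] at hi
        exact hjminS i (hκ i j hi.2.1)
      have hsaKm1 : ∀ i : Fin s, IsSelfAdjoint (K i - 1) :=
        fun i => (IsSelfAdjoint.of_nonneg (hK0 i)).sub (IsSelfAdjoint.one _)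
      have hψKm1 : ∀ i : Fin s, ψ (K i - 1) = ψ ((h i : A⁺¹) - 1) := by
        intro i
        rw [map_sub, map_sub, hKψ i]
      obtain ⟨x₁, hx₁0, hx₁le, hx₁ψ, hx₁n⟩ := iterC ψ hε Fc (fun i => K i - 1) (K j) (hK0 j)
        (fun i _ => hsaKm1 i)
        (by
          intro i hi
          rw [hFcdef, Finset.mem_filter] at hi
          have := hchild i j hi.2
          calc ‖ψ ((K i - 1) * K j * (K i - 1))‖
              = ‖ψ (((h i : A⁺¹) - 1) * (h j : A⁺¹) * ((h i : A⁺¹) - 1))‖ := by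
                rw [map_mul, map_mul, hψKm1 i, hKψ j, ← map_mul, ← map_mul]
            _ ≤ ε := this)
      -- S stage
      set Fs : Finset (Fin s) := S.filter (fun i => TreeOrder.AreSiblings le i j) with hFsdef
      obtain ⟨x₂, hx₂0, hx₂le, hx₂ψ, hx₂surv, hx₂n⟩ := iterS ψ hε Fs (fun i => K i) x₁ hx₁0
        (by
          intro i hi
          rw [hFsdef, Finset.mem_filter] at hi
          have hψx₁ : ψ x₁ = ψ ((h j : A⁺¹)) := hx₁ψ.trans (hKψ j)
          calc ‖ψ (K i * x₁)‖ = ‖ψ ((h i : A⁺¹)) * ψ ((h j : A⁺¹))‖ := by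
                rw [map_mul, hKψ i, hψx₁]
            _ = ‖((φ (h i) * φ (h j) : B) : B⁺¹)‖ := by
                rw [hψdef, Unitization.starMap_inr, Unitization.starMap_inr,
                  ← Unitization.inr_mul]
            _ = ‖φ (h i) * φ (h j)‖ := Unitization.norm_inr _
            _ ≤ ε := hsib i j hi.2)
      -- update
      set K' : Fin s → A⁺¹ := Function.update K j x₂ with hK'def
      have hK'j : K' j = x₂ := Function.update_self j x₂ K
      have hK'ne : ∀ i, i ≠ j → K' i = K i := fun i hij => Function.update_of_ne hij x₂ K
      have hx₂leKj : x₂ ≤ K j := hx₂le.trans hx₁le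
      refine ⟨insert j S, K', ?_, ?_, ?_, ?_, ?_, ?_, ?_, ?_⟩
      · rw [Finset.card_insert_of_notMem hjS, hcard]
      · intro j' hj' i hi
        rcases Finset.mem_insert.mp hj' with rfl | hj'S
        · exact Finset.mem_insert_of_mem (hjminS i hi)
        · exact Finset.mem_insert_of_mem (hlow j' hj'S i hi)
      · intro i
        by_cases hij : i = j
        · subst hij; rw [hK'j]; exact hx₂0
        · rw [hK'ne i hij]; exact hK0 i
      · intro i
        by_cases hij : i = j
        · subst hij; rw [hK'j]; exact hx₂leKj.trans (hKh i)
        · rw [hK'ne i hij]; exact hKh i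
      · intro i
        by_cases hij : i = j
        · subst hij; rw [hK'j]; exact hx₂ψ.trans (hx₁ψ.trans (hKψ i))
        · rw [hK'ne i hij]; exact hKψ i
      · intro i
        by_cases hij : i = j
        · subst hij; rw [hK'j]
          exact unitization_fst_eq_zero_of_le hx₂0 hx₂leKj (hKfst i)
        · rw [hK'ne i hij]; exact hKfst i
      · -- child relations
        intro i j' hj' hcij
        have hine : i ≠ j' := hcij.1.2
        rcases Finset.mem_insert.mp hj' with rfl | hj'S
        · -- j' = j : the new node
          have hiS : i ∈ S := hjminS i (hκ i j' hcij.1)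
          have hiFc : i ∈ Fc := by
            rw [hFcdef, Finset.mem_filter]; exact ⟨Finset.mem_univ _, hcij⟩
          have h1 := hx₁n i hiFc
          rw [hK'j, hK'ne i hine]
          exact (norm_conj_mono (hsaKm1 i) hx₂0 hx₂le).trans h1
        · -- j' ∈ S : old pair
          have hij' : j' ≠ j := fun hjj => hjS (hjj ▸ hj'S)
          have hinej : i ≠ j := by
            rintro rfl
            exact hjS (hlow j' hj'S i (hκ i j' hcij.1))
          rw [hK'ne i hinej, hK'ne j' hij']
          exact hCrel i j' hj'S hcij
      · -- sibling relations
        intro i j₂ hi' hj₂' hsij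
        have hneq : i ≠ j₂ := hsij.1
        rcases Finset.mem_insert.mp hi' with rfl | hiS
        · rcases Finset.mem_insert.mp hj₂' with rfl | hj₂S
          · exact absurd rfl hneq
          · -- i = j (new), j₂ ∈ S : use star symmetry
            have hj₂Fs : j₂ ∈ Fs := by
              rw [hFsdef, Finset.mem_filter]; exact ⟨hj₂S, hsij.symm⟩
            have h1 := hx₂n j₂ hj₂Fs
            have hj₂ne : j₂ ≠ i := hneq.symm
            rw [hK'j, hK'ne j₂ hj₂ne]
            have hstar : star (K j₂ * x₂) = x₂ * K j₂ := by
              rw [star_mul, star_eq_of_nonneg' hx₂0, star_eq_of_nonneg' (hK0 j₂)]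
            calc ‖x₂ * K j₂‖ = ‖star (K j₂ * x₂)‖ := by rw [hstar]
              _ = ‖K j₂ * x₂‖ := norm_star _
              _ ≤ ε := h1
        · rcases Finset.mem_insert.mp hj₂' with rfl | hj₂S
          · -- j₂ = j (new), i ∈ S
            have hiFs : i ∈ Fs := by
              rw [hFsdef, Finset.mem_filter]; exact ⟨hiS, hsij⟩
            have hine : i ≠ j₂ := hneq
            rw [hK'j, hK'ne i hine]
            exact hx₂n i hiFs
          · -- both old
            have hineqj : i ≠ j := fun hh => hjS (hh ▸ hiS)
            have hj₂neqj : j₂ ≠ j := fun hh => hjS (hh ▸ hj₂S)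
            rw [hK'ne i hineqj, hK'ne j₂ hj₂neqj]
            exact hSrel i j₂ hiS hj₂S hsij
  -- conclude
  obtain ⟨S, K, hcard, _, hK0, hKh, hKψ, hKfst, hCrel, hSrel⟩ := main s le_rfl
  have hSuniv : S = Finset.univ := by
    apply Finset.eq_univ_of_card
    rw [hcard, Fintype.card_fin]
  refine ⟨fun i => (K i).snd, ?_, ?_, ?_, ?_, ?_⟩
  all_goals have hcoe : ∀ i, (((K i).snd : A) : A⁺¹) = K i :=
    fun i => unitization_inr_snd_of_fst_eq_zero (hKfst i)
  · intro i
    rw [← Unitization.inr_nonneg_iff (a := (K i).snd), hcoe i]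
    exact hK0 i
  · intro i
    have h1 : (((K i).snd : A) : A⁺¹) ≤ ((h i : A) : A⁺¹) := by rw [hcoe i]; exact hKh i
    have hksa : IsSelfAdjoint ((K i).snd) := by
      have : 0 ≤ ((K i).snd : A) := by
        rw [← Unitization.inr_nonneg_iff (a := (K i).snd), hcoe i]; exact hK0 i
      exact .of_nonneg this
    exact (Unitization.inr_le_iff _ _ hksa (.of_nonneg (hpos i))).mp h1
  · intro i
    have h1 := hKψ i
    rw [← hcoe i, hψdef, Unitization.starMap_inr, Unitization.starMap_inr] at h1
    exact Unitization.inr_injective h1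
  · intro i j hcij
    have := hCrel i j (hSuniv ▸ Finset.mem_univ j) hcij
    rw [← hcoe i, ← hcoe j] at this
    exact this
  · intro i j hsij
    have := hSrel i j (hSuniv ▸ Finset.mem_univ i) (hSuniv ▸ Finset.mem_univ j) hsij
    rw [← hcoe i, ← hcoe j] at this
    calc ‖(K i).snd * (K j).snd‖
        = ‖(((K i).snd * (K j).snd : A) : A⁺¹)‖ := (Unitization.norm_inr _).symm
      _ = ‖(((K i).snd : A) : A⁺¹) * (((K j).snd : A) : A⁺¹)‖ := by
          rw [Unitization.inr_mul]
      _ ≤ ε := this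
end

section
/- For every real α > 0 and every ε > 0 there exists δ > 0 with the following property: for every C*-algebra A and all h, k ∈ A with 0 ≤ h ≤ 1 and 0 ≤ k ≤ 1, if ‖hk − kh‖ ≤ δ then ‖(h k h)^α − k^α h^{2α}‖ ≤ ε. -/
open scoped CStarAlgebra NNReal
open Polynomial Set

set_option linter.unusedSectionVars false

namespace AC

lemma continuous_rpow_const {γ : ℝ} (hγ : 0 < γ) : Continuous (fun t : ℝ => t ^ γ) :=
  continuous_iff_continuousAt.2 fun x => Real.continuousAt_rpow_const x γ (Or.inr hγ.le)

variable {A : Type*} [NonUnitalCStarAlgebra A] [PartialOrder A] [StarOrderedRing A]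

noncomputable def rp (γ : ℝ) (a : A) : A := CFC.nnrpow a γ.toNNReal

lemma quasi_abs_le {a : A} (x : ℝ) (hx : x ∈ quasispectrum ℝ a) : |x| ≤ ‖a‖ := by
  rw [Unitization.quasispectrum_eq_spectrum_inr' ℝ ℂ] at hx
  simpa [Unitization.norm_inr] using spectrum.norm_le_norm_of_mem hx

lemma quasi_subset_Icc {a : A} (ha : 0 ≤ a) (ha1 : ‖a‖ ≤ 1) :
    ∀ x ∈ quasispectrum ℝ a, x ∈ Icc (0:ℝ) 1 := by
  intro x hx
  have h0 : 0 ≤ x := quasispectrum_nonneg_of_nonneg a ha x hx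
  have h1 := (quasi_abs_le x hx).trans ha1
  exact ⟨h0, (abs_le.mp h1).2⟩

lemma norm_cfcₙ_sub_cfcₙ_le {a : A} {f g : ℝ → ℝ} {η : ℝ}
    (ha : 0 ≤ a) (ha1 : ‖a‖ ≤ 1) (hf : Continuous f) (hg : Continuous g)
    (hf0 : f 0 = 0) (hg0 : g 0 = 0)
    (hfg : ∀ t ∈ Icc (0:ℝ) 1, |f t - g t| ≤ η) :
    ‖cfcₙ f a - cfcₙ g a‖ ≤ η := by
  have hsa : IsSelfAdjoint a := .of_nonneg ha
  rw [← cfcₙ_sub f g a hf.continuousOn hf0 hg.continuousOn hg0]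
  exact norm_cfcₙ_le fun x hx => by
    simpa [Real.norm_eq_abs] using hfg x (quasi_subset_Icc ha ha1 x hx)

/-- `pow₁ a n = a ^ (n + 1)` in a non-unital ring. -/
def pow₁ (a : A) : ℕ → A
  | 0 => a
  | n+1 => a * pow₁ a n

lemma norm_pow₁_le {a : A} (ha : ‖a‖ ≤ 1) (n : ℕ) : ‖pow₁ a n‖ ≤ 1 := by
  induction n with
  | zero => exact ha
  | succ n ih =>
    calc ‖a * pow₁ a n‖ ≤ ‖a‖ * ‖pow₁ a n‖ := norm_mul_le _ _
    _ ≤ 1 * 1 := mul_le_mul ha ih (norm_nonneg _) zero_le_one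
    _ = 1 := one_mul 1

lemma pow₁_lip {u v : A} (hu : ‖u‖ ≤ 1) (hv : ‖v‖ ≤ 1) (n : ℕ) :
    ‖pow₁ u n - pow₁ v n‖ ≤ (n + 1 : ℝ) * ‖u - v‖ := by
  induction n with
  | zero => show ‖u - v‖ ≤ _; simp
  | succ n ih =>
    have key : pow₁ u (n+1) - pow₁ v (n+1)
        = u * (pow₁ u n - pow₁ v n) + (u - v) * pow₁ v n := by
      show u * pow₁ u n - v * pow₁ v n = _
      noncomm_ring
    rw [key]
    calc ‖u * (pow₁ u n - pow₁ v n) + (u - v) * pow₁ v n‖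
        ≤ ‖u * (pow₁ u n - pow₁ v n)‖ + ‖(u - v) * pow₁ v n‖ := norm_add_le _ _
      _ ≤ ‖u‖ * ‖pow₁ u n - pow₁ v n‖ + ‖u - v‖ * ‖pow₁ v n‖ :=
          add_le_add (norm_mul_le _ _) (norm_mul_le _ _)
      _ ≤ 1 * ((n + 1 : ℝ) * ‖u - v‖) + ‖u - v‖ * 1 := by
          refine add_le_add (mul_le_mul hu ih (norm_nonneg _) zero_le_one) ?_
          exact mul_le_mul_of_nonneg_left (norm_pow₁_le hv n) (norm_nonneg _)
      _ = ((n:ℝ) + 1 + 1) * ‖u - v‖ := by ring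
      _ = ((n + 1 : ℕ) + 1 : ℝ) * ‖u - v‖ := by push_cast; ring

lemma pow₁_comm {u b : A} (hu : ‖u‖ ≤ 1) (n : ℕ) :
    ‖pow₁ u n * b - b * pow₁ u n‖ ≤ (n + 1 : ℝ) * ‖u * b - b * u‖ := by
  induction n with
  | zero => show ‖u * b - b * u‖ ≤ _; simp
  | succ n ih =>
    have key : pow₁ u (n+1) * b - b * pow₁ u (n+1)
        = u * (pow₁ u n * b - b * pow₁ u n) + (u * b - b * u) * pow₁ u n := by
      show (u * pow₁ u n) * b - b * (u * pow₁ u n) = _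
      noncomm_ring
    rw [key]
    calc ‖u * (pow₁ u n * b - b * pow₁ u n) + (u * b - b * u) * pow₁ u n‖
        ≤ ‖u‖ * ‖pow₁ u n * b - b * pow₁ u n‖ + ‖u * b - b * u‖ * ‖pow₁ u n‖ :=
          (norm_add_le _ _).trans (add_le_add (norm_mul_le _ _) (norm_mul_le _ _))
      _ ≤ 1 * ((n + 1 : ℝ) * ‖u * b - b * u‖) + ‖u * b - b * u‖ * 1 := by
          refine add_le_add (mul_le_mul hu ih (norm_nonneg _) zero_le_one) ?_
          exact mul_le_mul_of_nonneg_left (norm_pow₁_le hu n) (norm_nonneg _)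
      _ = ((n:ℝ) + 1 + 1) * ‖u * b - b * u‖ := by ring
      _ = ((n + 1 : ℕ) + 1 : ℝ) * ‖u * b - b * u‖ := by push_cast; ring

lemma cfcₙ_pow₁ {a : A} (hsa : IsSelfAdjoint a) (n : ℕ) :
    cfcₙ (fun t : ℝ => t ^ (n + 1)) a = pow₁ a n := by
  induction n with
  | zero =>
    show cfcₙ (fun t : ℝ => t ^ (0 + 1)) a = a
    simp only [zero_add, pow_one]
    exact cfcₙ_id' ℝ a
  | succ n ih =>
    have : (fun t : ℝ => t ^ (n + 2)) = fun t : ℝ => t * t ^ (n + 1) := by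
      ext t; ring
    rw [show n + 1 + 1 = n + 2 from rfl, this,
      cfcₙ_mul (fun t : ℝ => t) (fun t => t ^ (n+1)) a]
    rw [show (fun t : ℝ => t) = id from rfl, cfcₙ_id ℝ a, ih]
    rfl

noncomputable def polyEval (r : ℝ[X]) (a : A) : A :=
  ∑ i ∈ Finset.range (r.natDegree + 1), r.coeff i • pow₁ a i

noncomputable def polyBound (r : ℝ[X]) : ℝ :=
  ∑ i ∈ Finset.range (r.natDegree + 1), |r.coeff i| * (i + 1)

lemma polyBound_nonneg (r : ℝ[X]) : 0 ≤ polyBound r :=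
  Finset.sum_nonneg fun i _ => mul_nonneg (abs_nonneg _) (by positivity)

lemma cfcₙ_polyEval (r : ℝ[X]) {a : A} (hsa : IsSelfAdjoint a) :
    cfcₙ (fun t : ℝ => t * r.eval t) a = polyEval r a := by
  have hfun : (fun t : ℝ => t * r.eval t)
      = ∑ i ∈ Finset.range (r.natDegree + 1), (fun t : ℝ => r.coeff i • t ^ (i + 1)) := by
    ext t
    rw [Finset.sum_apply, eval_eq_sum_range, Finset.mul_sum]
    refine Finset.sum_congr rfl fun i _ => ?_
    simp [smul_eq_mul]; ring
  rw [hfun, cfcₙ_sum _ a _ (fun i _ => (by fun_prop : Continuous fun t : ℝ => r.coeff i • t ^ (i+1)).continuousOn) (fun i _ => by simp)]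
  refine Finset.sum_congr rfl fun i _ => ?_
  rw [cfcₙ_smul (r.coeff i) (fun t : ℝ => t ^ (i+1)) a, cfcₙ_pow₁ hsa]

lemma polyEval_lip (r : ℝ[X]) {u v : A} (hu : ‖u‖ ≤ 1) (hv : ‖v‖ ≤ 1) :
    ‖polyEval r u - polyEval r v‖ ≤ polyBound r * ‖u - v‖ := by
  rw [polyEval, polyEval, ← Finset.sum_sub_distrib, polyBound, Finset.sum_mul]
  refine (norm_sum_le _ _).trans (Finset.sum_le_sum fun i _ => ?_)
  rw [← smul_sub, norm_smul, Real.norm_eq_abs, mul_assoc]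
  exact mul_le_mul_of_nonneg_left (pow₁_lip hu hv i) (abs_nonneg _)

lemma polyEval_comm (r : ℝ[X]) {u b : A} (hu : ‖u‖ ≤ 1) :
    ‖polyEval r u * b - b * polyEval r u‖ ≤ polyBound r * ‖u * b - b * u‖ := by
  have key : polyEval r u * b - b * polyEval r u
      = ∑ i ∈ Finset.range (r.natDegree + 1), r.coeff i • (pow₁ u i * b - b * pow₁ u i) := by
    rw [polyEval, Finset.sum_mul, Finset.mul_sum, ← Finset.sum_sub_distrib]
    refine Finset.sum_congr rfl fun i _ => ?_
    rw [smul_mul_assoc, mul_smul_comm, smul_sub]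
  rw [key, polyBound, Finset.sum_mul]
  refine (norm_sum_le _ _).trans (Finset.sum_le_sum fun i _ => ?_)
  rw [norm_smul, Real.norm_eq_abs, mul_assoc]
  exact mul_le_mul_of_nonneg_left (pow₁_comm hu i) (abs_nonneg _)

lemma exists_poly_approx {γ : ℝ} (hγ : 0 < γ) {η : ℝ} (hη : 0 < η) :
    ∃ r : ℝ[X], ∀ t ∈ Icc (0:ℝ) 1, |t ^ γ - t * r.eval t| ≤ η := by
  obtain ⟨q, hq⟩ := exists_polynomial_near_of_continuousOn 0 1 (fun t => t ^ γ)
    ((continuous_rpow_const hγ).continuousOn) (η/2) (by linarith)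
  refine ⟨q.divX, fun t ht => ?_⟩
  have h0 : |q.eval 0| < η / 2 := by
    have := hq 0 ⟨le_refl 0, zero_le_one⟩
    simpa [Real.zero_rpow hγ.ne'] using this
  have ht' := hq t ht
  have hdiv : t * q.divX.eval t = q.eval t - q.eval 0 := by
    conv_rhs => rw [← q.X_mul_divX_add]
    simp [coeff_zero_eq_eval_zero]
  have hrw : t ^ γ - (q.eval t - q.eval 0) = (t ^ γ - q.eval t) + q.eval 0 := by ring
  rw [hdiv, hrw]
  rw [abs_sub_comm] at ht'
  have h3 := abs_add_le (t ^ γ - q.eval t) (q.eval 0)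
  linarith

lemma rp_nonneg {γ : ℝ} {a : A} : 0 ≤ rp γ a := CFC.nnrpow_nonneg

lemma rp_isSelfAdjoint {γ : ℝ} {a : A} : IsSelfAdjoint (rp γ a) :=
  IsSelfAdjoint.of_nonneg rp_nonneg

lemma rp_eq_cfcₙ {γ : ℝ} (hγ : 0 < γ) {a : A} (ha : 0 ≤ a) :
    rp γ a = cfcₙ (fun t : ℝ => t ^ γ) a := by
  rw [rp, CFC.nnrpow, cfcₙ_nnreal_eq_real (ha := ha)]
  apply cfcₙ_congr
  intro x hx
  have hx0 : 0 ≤ x := quasispectrum_nonneg_of_nonneg a ha x hx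
  show ((x.toNNReal ^ ((γ.toNNReal : ℝ)) : ℝ≥0) : ℝ) = x ^ γ
  rw [NNReal.coe_rpow, Real.coe_toNNReal x hx0, Real.coe_toNNReal γ hγ.le]

lemma norm_rp_le_one {γ : ℝ} (hγ : 0 < γ) {a : A} (ha : 0 ≤ a) (ha1 : ‖a‖ ≤ 1) :
    ‖rp γ a‖ ≤ 1 := by
  rw [rp_eq_cfcₙ hγ ha]
  refine norm_cfcₙ_le fun x hx => ?_
  obtain ⟨h0, h1⟩ := quasi_subset_Icc ha ha1 x hx
  rw [Real.norm_eq_abs, abs_of_nonneg (Real.rpow_nonneg h0 γ)]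
  exact Real.rpow_le_one h0 h1 hγ.le

lemma rp_mul_rp {β γ : ℝ} (hβ : 0 < β) (hγ : 0 < γ) {a : A} (ha : 0 ≤ a) :
    rp β a * rp γ a = rp (β + γ) a := by
  rw [rp, rp, rp, Real.toNNReal_add hβ.le hγ.le]
  simp only [CFC.nnrpow_eq_pow]
  exact (CFC.nnrpow_add (by simpa using hβ) (by simpa using hγ)).symm

lemma rp_rp {β γ : ℝ} (hβ : 0 < β) (hγ : 0 < γ) {a : A} (ha : 0 ≤ a) :
    rp γ (rp β a) = rp (β * γ) a := by
  rw [rp, rp, rp, Real.toNNReal_mul hβ.le]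
  exact CFC.nnrpow_nnrpow

lemma rp_one {a : A} (ha : 0 ≤ a) : rp 1 a = a := by
  rw [rp, Real.toNNReal_one]
  simp only [CFC.nnrpow_eq_pow]
  exact CFC.nnrpow_one a ha

lemma rp_two {a : A} (ha : 0 ≤ a) : rp 2 a = a * a := by
  rw [rp, Real.toNNReal_ofNat]
  simp only [CFC.nnrpow_eq_pow]
  exact CFC.nnrpow_two a ha

lemma rp_sq {γ : ℝ} (hγ : 0 < γ) {a : A} (ha : 0 ≤ a) : rp γ (a * a) = rp (2 * γ) a := by
  rw [← rp_two ha, rp_rp two_pos hγ ha]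

lemma norm_negPart_le_dist {s p : A} (hs : IsSelfAdjoint s) (hp : 0 ≤ p) :
    ‖s⁻‖ ≤ ‖s - p‖ := by
  set c : ℝ := ‖s - p‖ with hc
  have hc0 : 0 ≤ c := norm_nonneg _
  have hspec : ∀ x ∈ quasispectrum ℝ s, -c ≤ x := by
    intro x hx
    rw [Unitization.quasispectrum_eq_spectrum_inr' ℝ ℂ s] at hx
    have hpos : 0 ≤ algebraMap ℝ (Unitization ℂ A) c + (s : Unitization ℂ A) := by
      have h1 : IsSelfAdjoint ((s - p : A) : Unitization ℂ A) := by
        have : IsSelfAdjoint (s - p) := hs.sub (IsSelfAdjoint.of_nonneg hp)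
        simpa [IsSelfAdjoint, ← Unitization.inr_star] using congrArg (Unitization.inr (R := ℂ)) this
      have h2 : -(algebraMap ℝ (Unitization ℂ A) ‖((s - p : A) : Unitization ℂ A)‖)
          ≤ ((s - p : A) : Unitization ℂ A) := h1.neg_algebraMap_norm_le_self
      rw [Unitization.norm_inr] at h2
      have h3 : (0 : Unitization ℂ A) ≤ algebraMap ℝ (Unitization ℂ A) c + ((s - p : A) : Unitization ℂ A) := by
        rw [← neg_le_iff_add_nonneg']
        exact h2
      have h4 : (0 : Unitization ℂ A) ≤ ((p : A) : Unitization ℂ A) :=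
        Unitization.inr_nonneg_iff.mpr hp
      calc (0 : Unitization ℂ A)
          ≤ (algebraMap ℝ (Unitization ℂ A) c + ((s - p : A) : Unitization ℂ A)) + ((p : A) : Unitization ℂ A) := add_nonneg h3 h4
        _ = algebraMap ℝ (Unitization ℂ A) c + (s : Unitization ℂ A) := by
            rw [add_assoc, ← Unitization.inr_add, sub_add_cancel]
    have hmem : c + x ∈ spectrum ℝ (algebraMap ℝ (Unitization ℂ A) c + (s : Unitization ℂ A)) := by
      rw [← spectrum.singleton_add_eq]
      exact Set.add_mem_add rfl hx
    have := spectrum_nonneg_of_nonneg hpos hmem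
    linarith
  rw [CFC.negPart_def]
  refine norm_cfcₙ_le fun x hx => ?_
  rw [Real.norm_eq_abs, _root_.negPart_def, abs_of_nonneg le_sup_right]
  exact sup_le (by linarith [hspec x hx]) hc0

lemma norm_posPart_le {s : A} (hs : IsSelfAdjoint s) : ‖s⁺‖ ≤ ‖s‖ := by
  rw [CFC.posPart_def]
  refine norm_cfcₙ_le fun x hx => ?_
  rw [Real.norm_eq_abs, _root_.posPart_def, abs_of_nonneg le_sup_right]
  exact sup_le ((le_abs_self x).trans (quasi_abs_le x hx)) (norm_nonneg s)

lemma rp_polyEval_close {γ η : ℝ} (hγ : 0 < γ) {r : ℝ[X]}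
    (hr : ∀ t ∈ Icc (0:ℝ) 1, |t ^ γ - t * r.eval t| ≤ η)
    {a : A} (ha : 0 ≤ a) (ha1 : ‖a‖ ≤ 1) :
    ‖rp γ a - polyEval r a‖ ≤ η := by
  rw [rp_eq_cfcₙ hγ ha, ← cfcₙ_polyEval r (IsSelfAdjoint.of_nonneg ha)]
  exact norm_cfcₙ_sub_cfcₙ_le ha ha1 (continuous_rpow_const hγ)
    (by fun_prop) (Real.zero_rpow hγ.ne') (by simp) hr

lemma polyBound_mul_le {M ε : ℝ} (hM : 0 ≤ M) (hε : 0 < ε) {d : ℝ}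
    (hd : d ≤ ε / (3 * (M + 1))) (hd0 : 0 ≤ d) : M * d ≤ ε / 3 := by
  have h1 : M * d ≤ M * (ε / (3 * (M + 1))) := mul_le_mul_of_nonneg_left hd hM
  have h2 : M * (ε / (3 * (M + 1))) = (M / (M + 1)) * (ε / 3) := by
    rw [div_mul_div_comm]
    rw [mul_div_assoc']
    congr 1
    ring
  have h3 : M / (M + 1) ≤ 1 := by
    rw [div_le_one (by positivity)]
    linarith
  calc M * d ≤ (M / (M + 1)) * (ε / 3) := by rw [← h2]; exact h1
    _ ≤ 1 * (ε / 3) := mul_le_mul_of_nonneg_right h3 (by positivity)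
    _ = ε / 3 := one_mul _

end AC

namespace AC

lemma uc {γ ε : ℝ} (hγ : 0 < γ) (hε : 0 < ε) :
    ∃ δ : ℝ, 0 < δ ∧
      ∀ (A : Type) [NonUnitalCStarAlgebra A] [PartialOrder A] [StarOrderedRing A],
        ∀ u v : A, 0 ≤ u → ‖u‖ ≤ 1 → 0 ≤ v → ‖v‖ ≤ 1 → ‖u - v‖ ≤ δ →
          ‖rp γ u - rp γ v‖ ≤ ε := by
  obtain ⟨r, hr⟩ := exists_poly_approx hγ (show (0:ℝ) < ε/3 by linarith)
  refine ⟨ε / (3 * (polyBound r + 1)), by have := polyBound_nonneg r; positivity, ?_⟩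
  intro A _ _ _ u v hu hu1 hv hv1 huv
  have hM := polyBound_nonneg r
  have hppu : ‖rp γ u - polyEval r u‖ ≤ ε/3 := rp_polyEval_close hγ hr hu hu1
  have hppv : ‖rp γ v - polyEval r v‖ ≤ ε/3 := rp_polyEval_close hγ hr hv hv1
  have hmid : ‖polyEval r u - polyEval r v‖ ≤ ε/3 :=
    (polyEval_lip r hu1 hv1).trans (polyBound_mul_le hM hε huv (norm_nonneg _))
  have hsplit : rp γ u - rp γ v
      = (rp γ u - polyEval r u) + (polyEval r u - polyEval r v) + (polyEval r v - rp γ v) := by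
    abel
  calc ‖rp γ u - rp γ v‖ ≤ ‖rp γ u - polyEval r u‖ + ‖polyEval r u - polyEval r v‖
        + ‖polyEval r v - rp γ v‖ := by rw [hsplit]; exact norm_add₃_le
    _ ≤ ε/3 + ε/3 + ε/3 := by
        rw [← norm_neg (polyEval r v - rp γ v), neg_sub] at *
        exact add_le_add (add_le_add hppu hmid) hppv
    _ = ε := by ring

lemma commEst {γ ε : ℝ} (hγ : 0 < γ) (hε : 0 < ε) :
    ∃ δ : ℝ, 0 < δ ∧
      ∀ (A : Type) [NonUnitalCStarAlgebra A] [PartialOrder A] [StarOrderedRing A],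
        ∀ u b : A, 0 ≤ u → ‖u‖ ≤ 1 → ‖b‖ ≤ 1 → ‖u * b - b * u‖ ≤ δ →
          ‖rp γ u * b - b * rp γ u‖ ≤ ε := by
  obtain ⟨r, hr⟩ := exists_poly_approx hγ (show (0:ℝ) < ε/3 by linarith)
  refine ⟨ε / (3 * (polyBound r + 1)), by have := polyBound_nonneg r; positivity, ?_⟩
  intro A _ _ _ u b hu hu1 hb1 hub
  have hM := polyBound_nonneg r
  have hpp : ‖rp γ u - polyEval r u‖ ≤ ε/3 := rp_polyEval_close hγ hr hu hu1
  have hmid : ‖polyEval r u * b - b * polyEval r u‖ ≤ ε/3 :=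
    (polyEval_comm r hu1).trans (polyBound_mul_le hM hε hub (norm_nonneg _))
  have hsplit : rp γ u * b - b * rp γ u
      = (rp γ u - polyEval r u) * b + (polyEval r u * b - b * polyEval r u)
        + b * (polyEval r u - rp γ u) := by noncomm_ring
  calc ‖rp γ u * b - b * rp γ u‖
      ≤ ‖(rp γ u - polyEval r u) * b‖ + ‖polyEval r u * b - b * polyEval r u‖
        + ‖b * (polyEval r u - rp γ u)‖ := by rw [hsplit]; exact norm_add₃_le
    _ ≤ ε/3 * 1 + ε/3 + 1 * (ε/3) := by
        refine add_le_add (add_le_add ?_ hmid) ?_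
        · exact (norm_mul_le _ _).trans (mul_le_mul hpp hb1 (norm_nonneg _) (by positivity))
        · refine (norm_mul_le _ _).trans (mul_le_mul hb1 ?_ (norm_nonneg _) zero_le_one)
          rw [← norm_neg, neg_sub]
          exact hpp
    _ = ε := by ring

end AC

namespace AC

/-- The main uniform statement at exponent `β`. -/
def Stmt (β : ℝ) : Prop :=
  ∀ ε : ℝ, 0 < ε → ∃ δ : ℝ, 0 < δ ∧
    ∀ (A : Type) [NonUnitalCStarAlgebra A] [PartialOrder A] [StarOrderedRing A],
      ∀ h k : A, 0 ≤ h → ‖h‖ ≤ 1 → 0 ≤ k → ‖k‖ ≤ 1 → ‖h * k - k * h‖ ≤ δ →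
        ‖rp β (h * k * h) - rp β k * rp (2 * β) h‖ ≤ ε

section Facts

variable {A : Type*} [NonUnitalCStarAlgebra A] [PartialOrder A] [StarOrderedRing A]

lemma hkh_nonneg {h k : A} (hh : 0 ≤ h) (hk : 0 ≤ k) : 0 ≤ h * k * h := by
  have := star_left_conjugate_nonneg hk h
  rwa [(IsSelfAdjoint.of_nonneg hh).star_eq] at this

lemma norm_hkh_le {h k : A} (hh1 : ‖h‖ ≤ 1) (hk1 : ‖k‖ ≤ 1) : ‖h * k * h‖ ≤ 1 := by
  calc ‖h * k * h‖ ≤ ‖h * k‖ * ‖h‖ := norm_mul_le _ _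
    _ ≤ ‖h‖ * ‖k‖ * ‖h‖ := by
        refine mul_le_mul_of_nonneg_right (norm_mul_le _ _) (norm_nonneg _)
    _ ≤ 1 * 1 * 1 := by
        refine mul_le_mul (mul_le_mul hh1 hk1 (norm_nonneg _) zero_le_one) hh1 (norm_nonneg _) ?_
        norm_num
    _ = 1 := by norm_num

end Facts

lemma stmt_one : Stmt 1 := by
  intro ε hε
  refine ⟨ε, hε, ?_⟩
  intro A _ _ _ h k hh hh1 hk hk1 hcomm
  rw [rp_one (hkh_nonneg hh hk), mul_one, rp_one hk, rp_two hh]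
  have key : h * k * h - k * (h * h) = (h * k - k * h) * h := by noncomm_ring
  rw [key]
  calc ‖(h * k - k * h) * h‖ ≤ ‖h * k - k * h‖ * ‖h‖ := norm_mul_le _ _
    _ ≤ ε * 1 := mul_le_mul hcomm hh1 (norm_nonneg _) hε.le
    _ = ε := mul_one ε

lemma stmt_add {β γ : ℝ} (hβ : 0 < β) (hγ : 0 < γ) (Sβ : Stmt β) (Sγ : Stmt γ) :
    Stmt (β + γ) := by
  intro ε hε
  have hε3 : 0 < ε / 3 := by linarith
  obtain ⟨δ₁, hδ₁, H₁⟩ := Sβ (ε/3) hε3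
  obtain ⟨δ₂, hδ₂, H₂⟩ := Sγ (ε/3) hε3
  obtain ⟨δc, hδc, Hc⟩ := commEst hγ hε3
  obtain ⟨δd, hδd, Hd⟩ := commEst (by linarith : (0:ℝ) < 2 * β) hδc
  refine ⟨min δ₁ (min δ₂ δd), by positivity, ?_⟩
  intro A _ _ _ h k hh hh1 hk hk1 hcomm
  set x := h * k * h with hx
  have hx0 : 0 ≤ x := hkh_nonneg hh hk
  have hx1 : ‖x‖ ≤ 1 := norm_hkh_le hh1 hk1
  have hT1 := H₁ A h k hh hh1 hk hk1 (hcomm.trans (min_le_left _ _))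
  have hT2 := H₂ A h k hh hh1 hk hk1 (hcomm.trans ((min_le_right _ _).trans (min_le_left _ _)))
  -- commutator of rp (2β) h with k
  have hhk : ‖h * k - k * h‖ ≤ δd := hcomm.trans ((min_le_right _ _).trans (min_le_right _ _))
  have hcomm1 : ‖rp (2*β) h * k - k * rp (2*β) h‖ ≤ δc :=
    Hd A h k hh hh1 hk1 hhk
  have hcomm2 : ‖rp γ k * rp (2*β) h - rp (2*β) h * rp γ k‖ ≤ ε/3 := by
    have := Hc A k (rp (2*β) h) hk hk1 (norm_rp_le_one (by linarith) hh hh1) ?_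
    · exact this
    · rw [← norm_neg, neg_sub]
      exact hcomm1
  -- now assemble
  have e1 : rp (β + γ) x = rp β x * rp γ x := (rp_mul_rp hβ hγ hx0).symm
  have e2 : rp β k * rp γ k = rp (β + γ) k := rp_mul_rp hβ hγ hk
  have e3 : rp (2*β) h * rp (2*γ) h = rp (2*(β+γ)) h := by
    rw [rp_mul_rp (by linarith) (by linarith) hh]
    congr 1
    ring
  have hsplit : rp β x * rp γ x - rp (β+γ) k * rp (2*(β+γ)) h
      = (rp β x - rp β k * rp (2*β) h) * rp γ x
        + (rp β k * rp (2*β) h) * (rp γ x - rp γ k * rp (2*γ) h)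
        + rp β k * ((rp (2*β) h * rp γ k - rp γ k * rp (2*β) h) * rp (2*γ) h)
        + rp β k * (rp γ k * (rp (2*β) h * rp (2*γ) h)) - rp (β+γ) k * rp (2*(β+γ)) h := by
    noncomm_ring
  have e4 : rp β k * (rp γ k * (rp (2*β) h * rp (2*γ) h)) = rp (β+γ) k * rp (2*(β+γ)) h := by
    rw [e3, ← mul_assoc, e2]
  rw [e1, hsplit, e4, add_sub_cancel_right]
  have n1 : ‖(rp β x - rp β k * rp (2*β) h) * rp γ x‖ ≤ ε/3 := by
    refine (norm_mul_le _ _).trans ?_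
    calc _ ≤ (ε/3) * 1 := mul_le_mul hT1 (norm_rp_le_one hγ hx0 hx1) (norm_nonneg _) hε3.le
      _ = ε/3 := mul_one _
  have n2 : ‖(rp β k * rp (2*β) h) * (rp γ x - rp γ k * rp (2*γ) h)‖ ≤ ε/3 := by
    refine (norm_mul_le _ _).trans ?_
    have hb : ‖rp β k * rp (2*β) h‖ ≤ 1 := by
      refine (norm_mul_le _ _).trans ?_
      calc _ ≤ 1*1 := mul_le_mul (norm_rp_le_one hβ hk hk1)
            (norm_rp_le_one (by linarith) hh hh1) (norm_nonneg _) zero_le_one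
        _ = 1 := one_mul 1
    calc _ ≤ 1 * (ε/3) := mul_le_mul hb hT2 (norm_nonneg _) zero_le_one
      _ = ε/3 := one_mul _
  have n3 : ‖rp β k * ((rp (2*β) h * rp γ k - rp γ k * rp (2*β) h) * rp (2*γ) h)‖ ≤ ε/3 := by
    refine (norm_mul_le _ _).trans ?_
    have hin : ‖(rp (2*β) h * rp γ k - rp γ k * rp (2*β) h) * rp (2*γ) h‖ ≤ ε/3 := by
      refine (norm_mul_le _ _).trans ?_
      have h5 : ‖rp (2*β) h * rp γ k - rp γ k * rp (2*β) h‖ ≤ ε/3 := by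
        rw [← norm_neg, neg_sub]
        exact hcomm2
      calc _ ≤ (ε/3) * 1 := mul_le_mul h5 (norm_rp_le_one (by linarith) hh hh1)
            (norm_nonneg _) hε3.le
        _ = ε/3 := mul_one _
    calc _ ≤ 1 * (ε/3) := mul_le_mul (norm_rp_le_one hβ hk hk1) hin (norm_nonneg _) zero_le_one
      _ = ε/3 := one_mul _
  calc ‖_ + _ + _‖ ≤ _ := norm_add₃_le
    _ ≤ ε/3 + ε/3 + ε/3 := add_le_add (add_le_add n1 n2) n3
    _ = ε := by ring

lemma stmt_half {β : ℝ} (hβ : 0 < β) (S : Stmt (2 * β)) : Stmt β := by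
  intro ε hε
  have hε5 : 0 < ε / 5 := by linarith
  have h2β : (0:ℝ) < 2 * β := by linarith
  obtain ⟨δ₁, hδ₁, U₁⟩ := uc hβ hε5
  obtain ⟨δ₃, hδ₃, U₃⟩ := uc h2β hε5
  obtain ⟨δ₄, hδ₄, S₄⟩ := S (ε/5) hε5
  obtain ⟨δc, hδc, Hc⟩ := commEst hβ hε5
  obtain ⟨δ₆, hδ₆, H₆⟩ := commEst h2β hδc
  set μ : ℝ := min (δ₁/4) (min (1/3) (min (δ₃/3) δ₄)) with hμdef
  have hμ : 0 < μ := by positivity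
  have hμ1 : μ ≤ δ₁/4 := min_le_left _ _
  have hμ2 : μ ≤ 1/3 := (min_le_right _ _).trans (min_le_left _ _)
  have hμ3 : μ ≤ δ₃/3 := (min_le_right _ _).trans ((min_le_right _ _).trans (min_le_left _ _))
  have hμ4 : μ ≤ δ₄ := (min_le_right _ _).trans ((min_le_right _ _).trans (min_le_right _ _))
  obtain ⟨δ₇, hδ₇, H₇⟩ := commEst (by norm_num : (0:ℝ) < 1/2) hμ
  obtain ⟨δ₈, hδ₈, H₈⟩ := commEst (by norm_num : (0:ℝ) < 1/4) hμ
  obtain ⟨δ₉, hδ₉, H₉⟩ := commEst (by norm_num : (0:ℝ) < 1/2) (half_pos hδ₁)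
  refine ⟨min (δ₁/4) (min δ₆ (min δ₇ (min δ₈ (δ₉/2)))), by positivity, ?_⟩
  intro A _ _ _ h k hh hh1 hk hk1 hcomm
  have hδa : ‖h * k - k * h‖ ≤ δ₁/4 := hcomm.trans (min_le_left _ _)
  have hδb : ‖h * k - k * h‖ ≤ δ₆ := hcomm.trans ((min_le_right _ _).trans (min_le_left _ _))
  have hδc' : ‖h * k - k * h‖ ≤ δ₇ := hcomm.trans ((min_le_right _ _).trans
    ((min_le_right _ _).trans (min_le_left _ _)))
  have hδd : ‖h * k - k * h‖ ≤ δ₈ := hcomm.trans ((min_le_right _ _).trans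
    ((min_le_right _ _).trans ((min_le_right _ _).trans (min_le_left _ _))))
  have hδe : ‖h * k - k * h‖ ≤ δ₉/2 := hcomm.trans ((min_le_right _ _).trans
    ((min_le_right _ _).trans ((min_le_right _ _).trans (min_le_right _ _))))
  have khcomm : ‖k * h - h * k‖ = ‖h * k - k * h‖ := by rw [← norm_neg, neg_sub]
  have hhsa : IsSelfAdjoint h := .of_nonneg hh
  have hhh0 : 0 ≤ h * h := by
    have := star_mul_self_nonneg h
    rwa [hhsa.star_eq] at this
  have hhh1 : ‖h * h‖ ≤ 1 := (norm_mul_le _ _).trans (by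
    calc ‖h‖ * ‖h‖ ≤ 1 * 1 := mul_le_mul hh1 hh1 (norm_nonneg _) zero_le_one
      _ = 1 := one_mul 1)
  -- notation
  set x := h * k * h with hxdef
  set k2 := rp (1/2 : ℝ) k with hk2def
  set k4 := rp (1/4 : ℝ) k with hk4def
  have hk2_0 : 0 ≤ k2 := rp_nonneg
  have hk4_0 : 0 ≤ k4 := rp_nonneg
  have hk2_1 : ‖k2‖ ≤ 1 := norm_rp_le_one (by norm_num) hk hk1
  have hk4_1 : ‖k4‖ ≤ 1 := norm_rp_le_one (by norm_num) hk hk1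
  have hk2sa : IsSelfAdjoint k2 := rp_isSelfAdjoint
  have hk4sa : IsSelfAdjoint k4 := rp_isSelfAdjoint
  have hk2k2 : k2 * k2 = k := by
    rw [hk2def, rp_mul_rp (by norm_num) (by norm_num) hk]
    norm_num
    exact rp_one hk
  have hk4k4 : k4 * k4 = k2 := by
    rw [hk4def, hk2def, rp_mul_rp (by norm_num) (by norm_num) hk]
    norm_num
  set y := k2 * (h * h) * k2 with hydef
  set a := k2 * h with hadef
  have hstar_a : star a = h * k2 := by rw [hadef, star_mul, hhsa.star_eq, hk2sa.star_eq]
  set s := (2⁻¹ : ℝ) • (a + star a) with hsdef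
  set p := k4 * h * k4 with hpdef
  -- basic facts
  have hx0 : 0 ≤ x := hkh_nonneg hh hk
  have hx1 : ‖x‖ ≤ 1 := norm_hkh_le hh1 hk1
  have hy0 : 0 ≤ y := by
    have := star_left_conjugate_nonneg hhh0 k2
    rwa [hk2sa.star_eq] at this
  have hy1 : ‖y‖ ≤ 1 := norm_hkh_le hk2_1 hhh1
  have hp0 : 0 ≤ p := by
    have := star_left_conjugate_nonneg hh k4
    rwa [hk4sa.star_eq] at this
  have hp1 : ‖p‖ ≤ 1 := norm_hkh_le hk4_1 hh1
  have ha1 : ‖a‖ ≤ 1 := (norm_mul_le _ _).trans (by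
    calc ‖k2‖ * ‖h‖ ≤ 1 * 1 := mul_le_mul hk2_1 hh1 (norm_nonneg _) zero_le_one
      _ = 1 := one_mul 1)
  have hssa : IsSelfAdjoint s := by
    rw [hsdef, IsSelfAdjoint, star_smul, star_add, star_star, star_trivial, add_comm]
  have hs1 : ‖s‖ ≤ 1 := by
    rw [hsdef, norm_smul]
    calc ‖(2⁻¹:ℝ)‖ * ‖a + star a‖ ≤ 2⁻¹ * (‖a‖ + ‖star a‖) := by
          rw [Real.norm_eq_abs, abs_of_pos (by norm_num : (0:ℝ) < 2⁻¹)]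
          exact mul_le_mul_of_nonneg_left (norm_add_le _ _) (by norm_num)
      _ ≤ 2⁻¹ * (1 + 1) := by
          rw [norm_star]
          exact mul_le_mul_of_nonneg_left (by linarith) (by norm_num)
      _ = 1 := by norm_num
  -- small commutator estimates
  have e₁ : ‖k2 * h - h * k2‖ ≤ μ := H₇ A k h hk hk1 hh1 (khcomm ▸ hδc')
  have e₂ : ‖k4 * h - h * k4‖ ≤ μ := H₈ A k h hk hk1 hh1 (khcomm ▸ hδd)
  have hk2h2comm : ‖k * (h*h) - (h*h) * k‖ ≤ δ₉ := by
    have key : k * (h*h) - (h*h) * k = (k * h - h * k) * h + h * (k * h - h * k) := by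
      noncomm_ring
    rw [key]
    calc ‖(k * h - h * k) * h + h * (k * h - h * k)‖
        ≤ ‖(k * h - h * k) * h‖ + ‖h * (k * h - h * k)‖ := norm_add_le _ _
      _ ≤ ‖k * h - h * k‖ * ‖h‖ + ‖h‖ * ‖k * h - h * k‖ :=
          add_le_add (norm_mul_le _ _) (norm_mul_le _ _)
      _ ≤ (δ₉/2) * 1 + 1 * (δ₉/2) := by
          rw [khcomm]
          exact add_le_add (mul_le_mul hδe hh1 (norm_nonneg _) (by linarith))
            (mul_le_mul hh1 hδe (norm_nonneg _) zero_le_one)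
      _ = δ₉ := by ring
  have e₃ : ‖k2 * (h*h) - (h*h) * k2‖ ≤ δ₁/2 := H₉ A k (h*h) hk hk1 hhh1 hk2h2comm
  -- Step 1 : ‖x - y‖ ≤ δ₁
  have hxy : ‖x - y‖ ≤ δ₁ := by
    have key1 : x - k * (h*h) = (h * k - k * h) * h := by rw [hxdef]; noncomm_ring
    have key2 : k * (h*h) - y = k2 * (k2 * (h*h) - (h*h) * k2) := by
      rw [hydef, ← hk2k2]; noncomm_ring
    have n1 : ‖x - k * (h*h)‖ ≤ δ₁/4 := by
      rw [key1]
      calc ‖(h * k - k * h) * h‖ ≤ ‖h * k - k * h‖ * ‖h‖ := norm_mul_le _ _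
        _ ≤ (δ₁/4) * 1 := mul_le_mul hδa hh1 (norm_nonneg _) (by linarith)
        _ = δ₁/4 := mul_one _
    have n2 : ‖k * (h*h) - y‖ ≤ δ₁/2 := by
      rw [key2]
      calc ‖k2 * (k2 * (h*h) - (h*h) * k2)‖ ≤ ‖k2‖ * ‖k2 * (h*h) - (h*h) * k2‖ :=
            norm_mul_le _ _
        _ ≤ 1 * (δ₁/2) := mul_le_mul hk2_1 e₃ (norm_nonneg _) zero_le_one
        _ = δ₁/2 := one_mul _
    calc ‖x - y‖ = ‖(x - k * (h*h)) + (k * (h*h) - y)‖ := by rw [sub_add_sub_cancel]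
      _ ≤ ‖x - k * (h*h)‖ + ‖k * (h*h) - y‖ := norm_add_le _ _
      _ ≤ δ₁/4 + δ₁/2 := add_le_add n1 n2
      _ ≤ δ₁ := by linarith
  have T1 : ‖rp β x - rp β y‖ ≤ ε/5 := U₁ A x y hx0 hx1 hy0 hy1 hxy
  -- Step 2 : y ≈ s⁺ * s⁺
  have hyaa : y = a * star a := by rw [hydef, hadef, hstar_a]; noncomm_ring
  have hd_small : ‖a - star a‖ ≤ μ := by
    rw [hstar_a, hadef]
    exact e₁
  have hsa_close : ‖s - a‖ ≤ μ/2 := by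
    have key : s - a = (2⁻¹:ℝ) • (star a - a) := by rw [hsdef]; module
    rw [key, norm_smul, Real.norm_eq_abs, abs_of_pos (by norm_num : (0:ℝ) < 2⁻¹),
      norm_sub_rev]
    linarith [hd_small]
  have hss_aa : ‖s * s - a * star a‖ ≤ μ := by
    have expand1 : s * s = (4⁻¹:ℝ) • ((a + star a) * (a + star a)) := by
      rw [hsdef, smul_mul_smul_comm]
      norm_num
    have key : s * s - a * star a
        = (4⁻¹:ℝ) • (a * (a - star a)) + (4⁻¹:ℝ) • ((star a - a) * a)
          + (4⁻¹:ℝ) • (a * (a - star a)) + (4⁻¹:ℝ) • ((star a - a) * star a) := by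
      rw [expand1]
      simp only [add_mul, mul_add, mul_sub, sub_mul]
      module
    rw [key]
    have hb : ∀ u v : A, ‖u‖ ≤ 1 → ‖v‖ ≤ μ → ‖(4⁻¹:ℝ) • (u * v)‖ ≤ 4⁻¹ * μ := by
      intro u v hu hv
      rw [norm_smul, Real.norm_eq_abs, abs_of_pos (by norm_num : (0:ℝ) < 4⁻¹)]
      refine mul_le_mul_of_nonneg_left ((norm_mul_le _ _).trans ?_) (by norm_num)
      calc ‖u‖ * ‖v‖ ≤ 1 * μ := mul_le_mul hu hv (norm_nonneg _) zero_le_one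
        _ = μ := one_mul _
    have hb' : ∀ u v : A, ‖u‖ ≤ μ → ‖v‖ ≤ 1 → ‖(4⁻¹:ℝ) • (u * v)‖ ≤ 4⁻¹ * μ := by
      intro u v hu hv
      rw [norm_smul, Real.norm_eq_abs, abs_of_pos (by norm_num : (0:ℝ) < 4⁻¹)]
      refine mul_le_mul_of_nonneg_left ((norm_mul_le _ _).trans ?_) (by norm_num)
      calc ‖u‖ * ‖v‖ ≤ μ * 1 := mul_le_mul hu hv (norm_nonneg _) hμ.le
        _ = μ := mul_one _
    have hd' : ‖star a - a‖ ≤ μ := by rw [norm_sub_rev]; exact hd_small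
    have hsta : ‖star a‖ ≤ 1 := by rw [norm_star]; exact ha1
    calc ‖_ + _ + _ + _‖
        ≤ ‖_ + _ + _‖ + ‖(4⁻¹:ℝ) • ((star a - a) * star a)‖ := norm_add_le _ _
      _ ≤ (‖(4⁻¹:ℝ) • (a * (a - star a))‖ + ‖(4⁻¹:ℝ) • ((star a - a) * a)‖
            + ‖(4⁻¹:ℝ) • (a * (a - star a))‖) + ‖(4⁻¹:ℝ) • ((star a - a) * star a)‖ := by
          gcongr
          exact norm_add₃_le
      _ ≤ (4⁻¹*μ + 4⁻¹*μ + 4⁻¹*μ) + 4⁻¹*μ := by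
          refine add_le_add (add_le_add (add_le_add ?_ ?_) ?_) ?_
          · exact hb a (a - star a) ha1 hd_small
          · exact hb' (star a - a) a hd' ha1
          · exact hb a (a - star a) ha1 hd_small
          · exact hb' (star a - a) (star a) hd' hsta
      _ = μ := by ring
  -- negative part bound
  have hap_close : ‖a - p‖ ≤ μ := by
    have key : a - p = k4 * (k4 * h - h * k4) := by
      rw [hadef, hpdef, ← hk4k4]; noncomm_ring
    rw [key]
    calc ‖k4 * (k4 * h - h * k4)‖ ≤ ‖k4‖ * ‖k4 * h - h * k4‖ := norm_mul_le _ _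
      _ ≤ 1 * μ := mul_le_mul hk4_1 e₂ (norm_nonneg _) zero_le_one
      _ = μ := one_mul _
  have hsp_close : ‖s - p‖ ≤ 3*μ/2 := by
    calc ‖s - p‖ = ‖(s - a) + (a - p)‖ := by rw [sub_add_sub_cancel]
      _ ≤ ‖s - a‖ + ‖a - p‖ := norm_add_le _ _
      _ ≤ μ/2 + μ := add_le_add hsa_close hap_close
      _ = 3*μ/2 := by ring
  have hneg : ‖s⁻‖ ≤ 3*μ/2 := (norm_negPart_le_dist hssa hp0).trans hsp_close
  have hpos_p : ‖s⁺ - p‖ ≤ 3*μ := by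
    have hps := CFC.posPart_sub_negPart s hssa
    have key : s⁺ - p = (s - p) + s⁻ := by
      refine eq_of_sub_eq_zero ?_
      have habel : s⁺ - p - ((s - p) + s⁻) = (s⁺ - s⁻) - s := by abel
      rw [habel, hps, sub_self]
    rw [key]
    calc ‖(s - p) + s⁻‖ ≤ ‖s - p‖ + ‖s⁻‖ := norm_add_le _ _
      _ ≤ 3*μ/2 + 3*μ/2 := add_le_add hsp_close hneg
      _ = 3*μ := by ring
  have hss_split : s * s = s⁺ * s⁺ + s⁻ * s⁻ := by
    have huv : s⁺ * s⁻ = 0 := CFC.posPart_mul_negPart s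
    have hvu : s⁻ * s⁺ = 0 := CFC.negPart_mul_posPart s
    have hps := CFC.posPart_sub_negPart s hssa
    calc s * s = (s⁺ - s⁻) * (s⁺ - s⁻) := by rw [hps]
      _ = s⁺ * s⁺ - s⁺ * s⁻ - (s⁻ * s⁺ - s⁻ * s⁻) := by noncomm_ring
      _ = s⁺ * s⁺ + s⁻ * s⁻ := by rw [huv, hvu]; abel
  have hy_ps : ‖y - s⁺ * s⁺‖ ≤ 2*μ := by
    have hnegsq : ‖s⁻ * s⁻‖ ≤ μ := by
      have h32 : 3*μ/2 ≤ 1/2 := by linarith [hμ2]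
      calc ‖s⁻ * s⁻‖ ≤ ‖s⁻‖ * ‖s⁻‖ := norm_mul_le _ _
        _ ≤ (1/2) * (3*μ/2) := mul_le_mul (hneg.trans h32) hneg (norm_nonneg _) (by norm_num)
        _ ≤ μ := by linarith [hμ.le]
    have key : y - s⁺ * s⁺ = (a * star a - s * s) + s⁻ * s⁻ := by
      rw [hss_split, hyaa]; abel
    rw [key]
    calc ‖(a * star a - s * s) + s⁻ * s⁻‖ ≤ ‖a * star a - s * s‖ + ‖s⁻ * s⁻‖ :=
          norm_add_le _ _
      _ ≤ μ + μ := add_le_add (by rw [norm_sub_rev]; exact hss_aa) hnegsq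
      _ = 2*μ := by ring
  have hsp0 : 0 ≤ s⁺ := CFC.posPart_nonneg s
  have hsp1 : ‖s⁺‖ ≤ 1 := (norm_posPart_le hssa).trans hs1
  have hspsp0 : 0 ≤ s⁺ * s⁺ := by
    have := star_mul_self_nonneg (s⁺)
    rwa [(IsSelfAdjoint.of_nonneg hsp0).star_eq] at this
  have hspsp1 : ‖s⁺ * s⁺‖ ≤ 1 := (norm_mul_le _ _).trans (by
    calc ‖s⁺‖ * ‖s⁺‖ ≤ 1 * 1 := mul_le_mul hsp1 hsp1 (norm_nonneg _) zero_le_one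
      _ = 1 := one_mul 1)
  have T2 : ‖rp β y - rp β (s⁺ * s⁺)‖ ≤ ε/5 :=
    U₁ A y (s⁺ * s⁺) hy0 hy1 hspsp0 hspsp1 (hy_ps.trans (by linarith [hμ1]))
  have T3 : rp β (s⁺ * s⁺) = rp (2*β) s⁺ := rp_sq hβ hsp0
  have T4 : ‖rp (2*β) s⁺ - rp (2*β) p‖ ≤ ε/5 :=
    U₃ A s⁺ p hsp0 hsp1 hp0 hp1 (hpos_p.trans (by linarith [hμ3]))
  have T5 : ‖rp (2*β) p - rp (2*β) h * rp β k‖ ≤ ε/5 := by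
    have := S₄ A k4 h hk4_0 hk4_1 hh hh1 (e₂.trans hμ4)
    have hk4β : rp (2*(2*β)) k4 = rp β k := by
      rw [hk4def, rp_rp (by norm_num) (by linarith) hk]
      congr 1
      ring
    rwa [hk4β] at this
  have T6 : ‖rp (2*β) h * rp β k - rp β k * rp (2*β) h‖ ≤ ε/5 := by
    have hcm : ‖rp (2*β) h * k - k * rp (2*β) h‖ ≤ δc := H₆ A h k hh hh1 hk1 hδb
    have hcm' : ‖k * rp (2*β) h - rp (2*β) h * k‖ ≤ δc := by
      rw [← norm_neg, neg_sub]; exact hcm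
    have := Hc A k (rp (2*β) h) hk hk1 (norm_rp_le_one h2β hh hh1) hcm'
    rw [← norm_neg, neg_sub]; exact this
  -- assemble
  have tele : rp β x - rp β k * rp (2*β) h
      = (rp β x - rp β y) + (rp β y - rp β (s⁺ * s⁺)) + (rp (2*β) s⁺ - rp (2*β) p)
        + (rp (2*β) p - rp (2*β) h * rp β k)
        + (rp (2*β) h * rp β k - rp β k * rp (2*β) h) := by
    rw [T3]; abel
  rw [tele]
  calc ‖_ + _ + _ + _ + _‖
      ≤ ‖(rp β x - rp β y) + (rp β y - rp β (s⁺ * s⁺)) + (rp (2*β) s⁺ - rp (2*β) p)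
          + (rp (2*β) p - rp (2*β) h * rp β k)‖
        + ‖rp (2*β) h * rp β k - rp β k * rp (2*β) h‖ := norm_add_le _ _
    _ ≤ (‖(rp β x - rp β y) + (rp β y - rp β (s⁺ * s⁺)) + (rp (2*β) s⁺ - rp (2*β) p)‖
          + ‖rp (2*β) p - rp (2*β) h * rp β k‖)
        + ‖rp (2*β) h * rp β k - rp β k * rp (2*β) h‖ := by
        gcongr
        exact norm_add_le _ _
    _ ≤ ((‖rp β x - rp β y‖ + ‖rp β y - rp β (s⁺ * s⁺)‖ + ‖rp (2*β) s⁺ - rp (2*β) p‖)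
          + ‖rp (2*β) p - rp (2*β) h * rp β k‖)
        + ‖rp (2*β) h * rp β k - rp β k * rp (2*β) h‖ := by
        gcongr
        exact norm_add₃_le
    _ ≤ ((ε/5 + ε/5 + ε/5) + ε/5) + ε/5 :=
        add_le_add (add_le_add (add_le_add (add_le_add T1 T2) T4) T5) T6
    _ = ε := by ring

lemma stmt_nat : ∀ n : ℕ, Stmt ((n : ℝ) + 1) := by
  intro n
  induction n with
  | zero => simpa using stmt_one
  | succ n ih =>
    have := stmt_add (by positivity) one_pos ih stmt_one
    have harith : ((n : ℝ) + 1) + 1 = ((n + 1 : ℕ) : ℝ) + 1 := by push_cast; ring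
    rwa [harith] at this

lemma stmt_dyadic (j m : ℕ) : Stmt (((m : ℝ) + 1) / 2 ^ j) := by
  induction j with
  | zero => simpa using stmt_nat m
  | succ j ih =>
    have harith : ((m : ℝ) + 1) / 2 ^ j = 2 * (((m : ℝ) + 1) / 2 ^ (j + 1)) := by
      rw [pow_succ]
      field_simp
    rw [harith] at ih
    exact stmt_half (by positivity) ih

lemma exists_dyadic {α ρ : ℝ} (hα : 0 < α) (hρ : 0 < ρ) :
    ∃ j m : ℕ, α ≤ ((m : ℝ) + 1) / 2 ^ j ∧ ((m : ℝ) + 1) / 2 ^ j ≤ α + ρ := by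
  obtain ⟨j, hj⟩ := exists_pow_lt_of_lt_one hρ (by norm_num : (1:ℝ)/2 < 1)
  have hj' : (1:ℝ) / 2 ^ j ≤ ρ := by
    rw [div_pow, one_pow] at hj
    exact hj.le
  have h2j : (0:ℝ) < 2 ^ j := by positivity
  set n : ℕ := ⌈α * 2 ^ j⌉₊ with hndef
  have hn1 : 1 ≤ n := by
    rw [hndef, Nat.one_le_ceil_iff]
    positivity
  refine ⟨j, n - 1, ?_, ?_⟩
  · have hcast : ((n - 1 : ℕ) : ℝ) + 1 = (n : ℝ) := by
      rw [Nat.cast_sub hn1]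
      push_cast
      ring
    rw [hcast, le_div_iff₀ h2j]
    exact Nat.le_ceil _
  · have hcast : ((n - 1 : ℕ) : ℝ) + 1 = (n : ℝ) := by
      rw [Nat.cast_sub hn1]
      push_cast
      ring
    rw [hcast, div_le_iff₀ h2j]
    have := (Nat.ceil_lt_add_one (by positivity : (0:ℝ) ≤ α * 2 ^ j)).le
    calc (n : ℝ) ≤ α * 2 ^ j + 1 := this
      _ ≤ (α + ρ) * 2 ^ j := by
          rw [add_mul]
          have h1ρ : (1:ℝ) ≤ ρ * 2 ^ j := (div_le_iff₀ h2j).mp hj'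
          linarith

lemma rpow_exponent_approx {α η : ℝ} (hα : 0 < α) (hη : 0 < η) :
    ∃ ρ : ℝ, 0 < ρ ∧ ∀ e : ℝ, 0 ≤ e → e ≤ ρ →
      ∀ t ∈ Icc (0:ℝ) 1, |t ^ α - t ^ (α + e)| ≤ η := by
  set η' := min η (1/2) with hη'def
  have hη'0 : 0 < η' := lt_min hη (by norm_num)
  have hη'le : η' ≤ η := min_le_left _ _
  have hη'half : η' ≤ 1/2 := min_le_right _ _
  set t₀ : ℝ := min (1/2) (η' ^ α⁻¹) with ht₀def
  have ht₀0 : 0 < t₀ := lt_min (by norm_num) (Real.rpow_pos_of_pos hη'0 _)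
  have ht₀half : t₀ ≤ 1/2 := min_le_left _ _
  have ht₀1 : t₀ ≤ 1 := ht₀half.trans (by norm_num)
  have ht₀α : t₀ ^ α ≤ η' := by
    have h1 : t₀ ≤ η' ^ α⁻¹ := min_le_right _ _
    have h2 : t₀ ^ α ≤ (η' ^ α⁻¹) ^ α := Real.rpow_le_rpow ht₀0.le h1 hα.le
    have h3 : (η' ^ α⁻¹) ^ α = η' := by
      rw [← Real.rpow_mul hη'0.le, inv_mul_cancel₀ hα.ne', Real.rpow_one]
    rwa [h3] at h2
  have h1η : 1 - η' < 1 := by linarith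
  have h1η0 : 0 < 1 - η' := by linarith
  set ρ := Real.log (1 - η') / Real.log t₀ with hρdef
  have hlogt₀ : Real.log t₀ < 0 := Real.log_neg ht₀0 (lt_of_le_of_lt ht₀half (by norm_num))
  have hlog1η : Real.log (1 - η') < 0 := Real.log_neg h1η0 h1η
  have hρ0 : 0 < ρ := div_pos_of_neg_of_neg hlog1η hlogt₀
  have ht₀ρ : t₀ ^ ρ = 1 - η' := by
    rw [Real.rpow_def_of_pos ht₀0, hρdef, mul_comm,
      div_mul_cancel₀ _ (ne_of_lt hlogt₀), Real.exp_log h1η0]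
  refine ⟨ρ, hρ0, ?_⟩
  intro e he0 heρ t ht
  obtain ⟨ht0, ht1⟩ := ht
  rcases eq_or_lt_of_le ht0 with h0 | htpos
  · rw [← h0, Real.zero_rpow hα.ne', Real.zero_rpow (by linarith : α + e ≠ 0)]
    simpa using hη.le
  · have hte1 : t ^ e ≤ 1 := Real.rpow_le_one ht0 ht1 he0
    have htα1 : t ^ α ≤ 1 := Real.rpow_le_one ht0 ht1 hα.le
    have hsplit : t ^ (α + e) = t ^ α * t ^ e := Real.rpow_add htpos α e
    have htαnn : (0:ℝ) ≤ t ^ α := Real.rpow_nonneg ht0 α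
    have hnn : 0 ≤ t ^ α - t ^ (α + e) := by
      rw [hsplit]
      nlinarith
    rw [abs_of_nonneg hnn, hsplit]
    have key : t ^ α * (1 - t ^ e) ≤ η' := by
      rcases le_total t t₀ with hlt | hge
      · have h2 : t ^ α ≤ η' := (Real.rpow_le_rpow ht0 hlt hα.le).trans ht₀α
        have htenn : (0:ℝ) ≤ t ^ e := Real.rpow_nonneg ht0 e
        nlinarith
      · have h3 : t₀ ^ e ≤ t ^ e := Real.rpow_le_rpow ht₀0.le hge he0
        have h4 : t₀ ^ ρ ≤ t₀ ^ e := Real.rpow_le_rpow_of_exponent_ge ht₀0 ht₀1 heρ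
        have h5 : 1 - η' ≤ t ^ e := by rw [← ht₀ρ]; exact h4.trans h3
        nlinarith
    calc t ^ α - t ^ α * t ^ e = t ^ α * (1 - t ^ e) := by ring
      _ ≤ η' := key
      _ ≤ η := hη'le

lemma rp_exponent_close {A : Type*} [NonUnitalCStarAlgebra A] [PartialOrder A]
    [StarOrderedRing A] {a : A} (ha : 0 ≤ a) (h1 : ‖a‖ ≤ 1) {γ γ' η : ℝ}
    (hγ : 0 < γ) (hγ' : 0 < γ')
    (hp : ∀ t ∈ Icc (0:ℝ) 1, |t ^ γ - t ^ γ'| ≤ η) : ‖rp γ a - rp γ' a‖ ≤ η := by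
  rw [rp_eq_cfcₙ hγ ha, rp_eq_cfcₙ hγ' ha]
  exact norm_cfcₙ_sub_cfcₙ_le ha h1 (continuous_rpow_const hγ) (continuous_rpow_const hγ')
    (Real.zero_rpow hγ.ne') (Real.zero_rpow hγ'.ne') hp

end AC

open AC in
/-- For every `α > 0` and `ε > 0` there is `δ > 0` such that in every
C*-algebra, positive contractions `h, k` with `‖hk - kh‖ ≤ δ` satisfy
`‖(h k h)^α - k^α h^{2α}‖ ≤ ε`. -/
theorem approx_commuting_rpow
    (α : ℝ) (hα : 0 < α) (ε : ℝ) (hε : 0 < ε) :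
    ∃ δ : ℝ, 0 < δ ∧
      ∀ (A : Type) [NonUnitalCStarAlgebra A] [PartialOrder A] [StarOrderedRing A],
        ∀ h k : A, 0 ≤ h → (h : A⁺¹) ≤ 1 → 0 ≤ k → (k : A⁺¹) ≤ 1 →
          ‖h * k - k * h‖ ≤ δ →
          ‖CFC.nnrpow (h * k * h) α.toNNReal -
              CFC.nnrpow k α.toNNReal * CFC.nnrpow h (2 * α).toNNReal‖ ≤ ε := by
  have hε4 : 0 < ε / 4 := by linarith
  obtain ⟨ρ₁, hρ₁, P₁⟩ := rpow_exponent_approx hα hε4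
  obtain ⟨ρ₂, hρ₂, P₂⟩ := rpow_exponent_approx (by linarith : (0:ℝ) < 2 * α) hε4
  set ρ := min ρ₁ (ρ₂ / 2) with hρdef
  have hρ0 : 0 < ρ := lt_min hρ₁ (by linarith)
  obtain ⟨j, m, hd1, hd2⟩ := exists_dyadic hα hρ0
  set d : ℝ := ((m : ℝ) + 1) / 2 ^ j with hddef
  have hd0 : 0 < d := lt_of_lt_of_le hα hd1
  have he0 : 0 ≤ d - α := by linarith
  have heρ : d - α ≤ ρ := by linarith
  have hpt1 : ∀ t ∈ Icc (0:ℝ) 1, |t ^ α - t ^ d| ≤ ε / 4 := by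
    intro t ht
    have := P₁ (d - α) he0 (heρ.trans (min_le_left _ _)) t ht
    rwa [show α + (d - α) = d by ring] at this
  have hpt2 : ∀ t ∈ Icc (0:ℝ) 1, |t ^ (2*α) - t ^ (2*d)| ≤ ε / 4 := by
    intro t ht
    have h2e : 2 * d - 2 * α ≤ ρ₂ := by
      have := heρ.trans (min_le_right _ _)
      linarith
    have := P₂ (2 * d - 2 * α) (by linarith) h2e t ht
    rwa [show 2 * α + (2 * d - 2 * α) = 2 * d by ring] at this
  obtain ⟨δ, hδ, HS⟩ := stmt_dyadic j m (ε/4) hε4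
  refine ⟨δ, hδ, ?_⟩
  intro A _ _ _ h k hh hhu hk hku hcomm
  have hh1 : ‖h‖ ≤ 1 :=
    (CStarAlgebra.inr_mem_Icc_iff_norm_le.mp ⟨Unitization.inr_nonneg_iff.mpr hh, hhu⟩).2
  have hk1 : ‖k‖ ≤ 1 :=
    (CStarAlgebra.inr_mem_Icc_iff_norm_le.mp ⟨Unitization.inr_nonneg_iff.mpr hk, hku⟩).2
  have hx0 : 0 ≤ h * k * h := hkh_nonneg hh hk
  have hx1 : ‖h * k * h‖ ≤ 1 := norm_hkh_le hh1 hk1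
  have main : ‖rp d (h * k * h) - rp d k * rp (2 * d) h‖ ≤ ε/4 :=
    HS A h k hh hh1 hk hk1 hcomm
  have E1 : ‖rp α (h * k * h) - rp d (h * k * h)‖ ≤ ε/4 :=
    rp_exponent_close hx0 hx1 hα hd0 hpt1
  have E2 : ‖rp α k - rp d k‖ ≤ ε/4 := rp_exponent_close hk hk1 hα hd0 hpt1
  have E3 : ‖rp (2*α) h - rp (2*d) h‖ ≤ ε/4 :=
    rp_exponent_close hh hh1 (by linarith) (by linarith) hpt2
  show ‖rp α (h * k * h) - rp α k * rp (2 * α) h‖ ≤ ε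
  have tele : rp α (h * k * h) - rp α k * rp (2 * α) h
      = (rp α (h * k * h) - rp d (h * k * h))
        + (rp d (h * k * h) - rp d k * rp (2 * d) h)
        + ((rp d k - rp α k) * rp (2 * d) h)
        + (rp α k * (rp (2 * d) h - rp (2 * α) h)) := by
    noncomm_ring
  rw [tele]
  have n3 : ‖(rp d k - rp α k) * rp (2 * d) h‖ ≤ ε/4 := by
    refine (norm_mul_le _ _).trans ?_
    have h1 : ‖rp d k - rp α k‖ ≤ ε/4 := by rw [norm_sub_rev]; exact E2
    calc ‖rp d k - rp α k‖ * ‖rp (2*d) h‖ ≤ (ε/4) * 1 :=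
          mul_le_mul h1 (norm_rp_le_one (by linarith) hh hh1) (norm_nonneg _) hε4.le
      _ = ε/4 := mul_one _
  have n4 : ‖rp α k * (rp (2 * d) h - rp (2 * α) h)‖ ≤ ε/4 := by
    refine (norm_mul_le _ _).trans ?_
    have h1 : ‖rp (2*d) h - rp (2*α) h‖ ≤ ε/4 := by rw [norm_sub_rev]; exact E3
    calc ‖rp α k‖ * ‖rp (2*d) h - rp (2*α) h‖ ≤ 1 * (ε/4) :=
          mul_le_mul (norm_rp_le_one hα hk hk1) h1 (norm_nonneg _) zero_le_one
      _ = ε/4 := one_mul _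
  calc ‖_ + _ + _ + _‖
      ≤ ‖_ + _ + _‖ + ‖rp α k * (rp (2 * d) h - rp (2 * α) h)‖ := norm_add_le _ _
    _ ≤ (‖rp α (h * k * h) - rp d (h * k * h)‖ + ‖rp d (h * k * h) - rp d k * rp (2 * d) h‖
          + ‖(rp d k - rp α k) * rp (2 * d) h‖)
        + ‖rp α k * (rp (2 * d) h - rp (2 * α) h)‖ := by
        gcongr
        exact norm_add₃_le
    _ ≤ (ε/4 + ε/4 + ε/4) + ε/4 := add_le_add (add_le_add (add_le_add E1 main) n3) n4
    _ = ε := by ring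
end
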